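/- arXiv:2106.15819 — 4 statements merged into one kernel-verified Lean document; each statement's English description precedes it below -/
import Mathlib

section
/- For any positive definite matrices A, B of the same dimension and any complex number z, the operator norm of A^z - B^z is at most |z| · M^{1+|Re(z)|} · ‖A - B‖, where M is the maximum of the operator norms of A, A^{-1}, B, B^{-1}. -/
open scoped Matrix.Norms.L2Operator ComplexOrder

/-- Complex power of a matrix via the functional calculus (junk value `0` for
non-Hermitian matrices). -/
noncomputable def Matrix.cpow {n : Type*} [Fintype n] [DecidableEq n]
    (A : Matrix n n ℂ) (z : ℂ) : Matrix n n ℂ :=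
  if hA : A.IsHermitian then
    (hA.eigenvectorUnitary : Matrix n n ℂ) *
      Matrix.diagonal (fun i => (hA.eigenvalues i : ℂ) ^ z) *
      (star (hA.eigenvectorUnitary : Matrix n n ℂ))
  else 0

set_option linter.unusedSectionVars false
set_option linter.unusedVariables false
set_option maxHeartbeats 1000000

namespace CpowProofAux

open MeasureTheory Matrix


lemma sc_exp (c : ℂ) : c * ∫ s in (0:ℝ)..1, Complex.exp ((s:ℂ) * c) = Complex.exp c - 1 := by
  have hd : ∀ s : ℝ, HasDerivAt (fun t : ℝ => Complex.exp ((t:ℂ) * c))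
      (Complex.exp ((s:ℂ) * c) * c) s := by
    intro s
    have h1 : HasDerivAt (fun t : ℝ => ((t:ℂ) * c)) c s := by
      simpa using (Complex.ofRealCLM.hasDerivAt (x := s)).mul_const c
    simpa using h1.cexp
  have hcont : Continuous fun s : ℝ => Complex.exp ((s:ℂ) * c) * c :=
    ((Complex.continuous_ofReal.mul continuous_const).cexp).mul continuous_const
  have h := intervalIntegral.integral_eq_sub_of_hasDerivAt
    (f := fun t : ℝ => Complex.exp ((t:ℂ) * c)) (fun s _ => hd s)
    (hcont.intervalIntegrable 0 1)
  rw [intervalIntegral.integral_mul_const] at h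
  simp only [Complex.ofReal_one, one_mul, Complex.ofReal_zero, zero_mul, Complex.exp_zero] at h
  rw [mul_comm]; exact h

lemma sc_pos_denom {t : ℝ} (ht : 0 < t) {r : ℝ} (hr0 : 0 ≤ r) (hr1 : r ≤ 1) :
    0 < 1 + r * (t - 1) := by
  rcases le_or_gt t 1 with h | h
  · nlinarith
  · nlinarith [mul_nonneg hr0 (by linarith : (0:ℝ) ≤ t - 1)]

lemma sc1 {lam mu : ℝ} (hl : 0 < lam) (hm : 0 < mu) :
    (lam - mu) * ∫ r in (0:ℝ)..1, ((1 + r * (lam - 1))⁻¹ * (1 + r * (mu - 1))⁻¹)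
      = Real.log lam - Real.log mu := by
  have huI : Set.uIcc (0:ℝ) 1 = Set.Icc 0 1 := Set.uIcc_of_le zero_le_one
  have hdl : ∀ r ∈ Set.uIcc (0:ℝ) 1, 0 < 1 + r * (lam - 1) := by
    intro r hr; rw [huI] at hr; exact sc_pos_denom hl hr.1 hr.2
  have hdm : ∀ r ∈ Set.uIcc (0:ℝ) 1, 0 < 1 + r * (mu - 1) := by
    intro r hr; rw [huI] at hr; exact sc_pos_denom hm hr.1 hr.2
  have hder : ∀ r ∈ Set.uIcc (0:ℝ) 1, HasDerivAt
      (fun t : ℝ => Real.log (1 + t * (lam - 1)) - Real.log (1 + t * (mu - 1)))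
      ((lam - mu) * ((1 + r * (lam - 1))⁻¹ * (1 + r * (mu - 1))⁻¹)) r := by
    intro r hr
    have h1 : HasDerivAt (fun t : ℝ => 1 + t * (lam - 1)) (lam - 1) r := by
      simpa using ((hasDerivAt_id r).mul_const (lam - 1)).const_add 1
    have h2 : HasDerivAt (fun t : ℝ => 1 + t * (mu - 1)) (mu - 1) r := by
      simpa using ((hasDerivAt_id r).mul_const (mu - 1)).const_add 1
    have h := (h1.log (hdl r hr).ne').sub (h2.log (hdm r hr).ne')
    have e1 : (lam - 1) / (1 + r * (lam - 1)) - (mu - 1) / (1 + r * (mu - 1))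
        = (lam - mu) * ((1 + r * (lam - 1))⁻¹ * (1 + r * (mu - 1))⁻¹) := by
      rw [div_sub_div _ _ (hdl r hr).ne' (hdm r hr).ne', div_eq_mul_inv, mul_inv]
      congr 1
      ring
    rw [← e1]
    exact h
  have hcont : ContinuousOn
      (fun r : ℝ => (lam - mu) * ((1 + r * (lam - 1))⁻¹ * (1 + r * (mu - 1))⁻¹))
      (Set.uIcc (0:ℝ) 1) := by
    apply continuousOn_const.mul
    exact (((continuousOn_const.add (continuousOn_id.mul continuousOn_const)).inv₀
        fun r hr => (hdl r hr).ne').mul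
      ((continuousOn_const.add (continuousOn_id.mul continuousOn_const)).inv₀
        fun r hr => (hdm r hr).ne'))
  have h := intervalIntegral.integral_eq_sub_of_hasDerivAt hder hcont.intervalIntegrable
  rw [intervalIntegral.integral_const_mul] at h
  rw [h]
  norm_num

lemma sc3 {M : ℝ} (hM : 1 ≤ M) :
    ∫ r in (0:ℝ)..1, ((1 - r * (1 - M⁻¹))⁻¹) ^ 2 = M := by
  have hM0 : 0 < M := lt_of_lt_of_le one_pos hM
  have huI : Set.uIcc (0:ℝ) 1 = Set.Icc 0 1 := Set.uIcc_of_le zero_le_one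
  have hc0 : 0 ≤ 1 - M⁻¹ := by
    have : M⁻¹ ≤ 1 := by rw [inv_le_one_iff₀]; right; exact hM
    linarith
  have hpos : ∀ r ∈ Set.uIcc (0:ℝ) 1, 0 < 1 - r * (1 - M⁻¹) := by
    intro r hr; rw [huI] at hr
    have : 0 < M⁻¹ := inv_pos.2 hM0
    nlinarith [hr.1, hr.2]
  by_cases h0 : (1:ℝ) - M⁻¹ = 0
  · have hM1 : M = 1 := by
      have : M⁻¹ = 1 := by linarith
      have := congrArg (·⁻¹) this
      simpa using this
    simp [h0, hM1]
  · have hder : ∀ r ∈ Set.uIcc (0:ℝ) 1, HasDerivAt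
        (fun t : ℝ => (1 - t * (1 - M⁻¹))⁻¹ * (1 - M⁻¹)⁻¹)
        (((1 - r * (1 - M⁻¹))⁻¹) ^ 2) r := by
      intro r hr
      have h1 : HasDerivAt (fun t : ℝ => 1 - t * (1 - M⁻¹)) (-(1 - M⁻¹)) r := by
        simpa using ((hasDerivAt_id r).mul_const (1 - M⁻¹)).const_sub 1
      have h := (h1.inv (hpos r hr).ne').mul_const (1 - M⁻¹)⁻¹
      refine h.congr_deriv ?_; symm
      rw [neg_neg, mul_comm ((1 - M⁻¹) / (1 - r * (1 - M⁻¹)) ^ 2) (1 - M⁻¹)⁻¹,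
        ← mul_div_assoc, inv_mul_cancel₀ h0, one_div, inv_pow]
    have hcont : ContinuousOn (fun r : ℝ => ((1 - r * (1 - M⁻¹))⁻¹) ^ 2)
        (Set.uIcc (0:ℝ) 1) :=
      ((continuousOn_const.sub (continuousOn_id.mul continuousOn_const)).inv₀
        fun r hr => (hpos r hr).ne').pow 2
    have h := intervalIntegral.integral_eq_sub_of_hasDerivAt hder hcont.intervalIntegrable
    rw [h]
    have h1c : 1 - (1 - M⁻¹) = M⁻¹ := by ring
    rw [one_mul, zero_mul, sub_zero, h1c, inv_inv]
    have hne : M - 1 ≠ 0 := by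
      intro hcon
      apply h0
      have : M = 1 := by linarith
      rw [this]; norm_num
    have hc' : 1 - M⁻¹ = (M - 1) / M := by field_simp
    rw [hc', inv_div]
    field_simp



lemma cpow_exp_log {x : ℝ} (hx : 0 < x) (w : ℂ) :
    (x:ℂ) ^ w = Complex.exp (w * (Real.log x : ℂ)) := by
  rw [Complex.cpow_def_of_ne_zero (by exact_mod_cast hx.ne'), Complex.ofReal_log hx.le,
    mul_comm]

lemma sc2 {lam mu : ℝ} (hl : 0 < lam) (hm : 0 < mu) (z : ℂ) :
    z * ((Real.log lam : ℂ) - (Real.log mu : ℂ)) *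
        ∫ s in (0:ℝ)..1, (lam:ℂ) ^ ((s:ℂ) * z) * (mu:ℂ) ^ (((1 - s : ℝ):ℂ) * z)
      = (lam:ℂ) ^ z - (mu:ℂ) ^ z := by
  have htrans : (fun s : ℝ => (lam:ℂ) ^ ((s:ℂ) * z) * (mu:ℂ) ^ (((1 - s : ℝ):ℂ) * z))
      = fun s : ℝ => Complex.exp (z * (Real.log mu : ℂ)) *
          Complex.exp ((s:ℂ) * (z * ((Real.log lam : ℂ) - (Real.log mu : ℂ)))) := by
    funext s
    rw [cpow_exp_log hl, cpow_exp_log hm, ← Complex.exp_add, ← Complex.exp_add]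
    congr 1
    push_cast
    ring
  rw [htrans, intervalIntegral.integral_const_mul, cpow_exp_log hl, cpow_exp_log hm]
  have h := sc_exp (z * ((Real.log lam : ℂ) - (Real.log mu : ℂ)))
  have hsplit : Complex.exp (z * (Real.log lam : ℂ))
      = Complex.exp (z * (Real.log mu : ℂ)) *
        Complex.exp (z * ((Real.log lam : ℂ) - (Real.log mu : ℂ))) := by
    rw [← Complex.exp_add]
    congr 1
    ring
  linear_combination Complex.exp (z * (Real.log mu : ℂ)) * h - hsplit

lemma sc4 {M t : ℝ} (hM : 1 ≤ M) (h1 : M⁻¹ ≤ t) (h2 : t ≤ M) (w : ℂ) :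
    ‖(t:ℂ) ^ w‖ ≤ M ^ |w.re| := by
  have hM0 : 0 < M := lt_of_lt_of_le one_pos hM
  have ht0 : 0 < t := lt_of_lt_of_le (inv_pos.2 hM0) h1
  rw [Complex.norm_cpow_eq_rpow_re_of_pos ht0]
  rcases le_or_gt 0 w.re with hre | hre
  · rw [abs_of_nonneg hre]
    exact Real.rpow_le_rpow ht0.le h2 hre
  · rw [abs_of_neg hre]
    calc t ^ w.re ≤ (M⁻¹) ^ w.re := Real.rpow_le_rpow_of_nonpos (inv_pos.2 hM0) h1 hre.le
      _ = M ^ (-w.re) := by rw [Real.inv_rpow hM0.le, ← Real.rpow_neg hM0.le]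

section NormLemmas
variable {n : Type*} [Fintype n] [DecidableEq n]

lemma norm_unitary (U : Matrix.unitaryGroup n ℂ) : ‖(U : Matrix n n ℂ)‖ ≤ 1 := by
  have h1 : ‖(1 : Matrix n n ℂ)‖ ≤ 1 := by
    rw [Matrix.cstar_norm_def, _root_.map_one]; exact ContinuousLinearMap.norm_id_le
  have h2 := Matrix.l2_opNorm_conjTranspose_mul_self (U : Matrix n n ℂ)
  rw [← Matrix.star_eq_conjTranspose, Unitary.coe_star_mul_self U] at h2
  nlinarith [norm_nonneg (U : Matrix n n ℂ)]

lemma norm_diag_le {d : n → ℂ} {c : ℝ} (hc : 0 ≤ c) (h : ∀ i, ‖d i‖ ≤ c) :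
    ‖Matrix.diagonal d‖ ≤ c := by
  rw [Matrix.l2_opNorm_def]
  refine ContinuousLinearMap.opNorm_le_bound _ hc fun x => ?_
  set T := (Matrix.toEuclideanLin.trans LinearMap.toContinuousLinearMap) (Matrix.diagonal d)
  have hTx : ∀ i, T x i = d i * x i := by
    intro i
    show Matrix.toEuclideanLin (Matrix.diagonal d) x i = _
    rw [Matrix.toEuclideanLin_apply]
    simp [Matrix.mulVec_diagonal]
  rw [EuclideanSpace.norm_eq, EuclideanSpace.norm_eq]
  calc √(∑ i, ‖T x i‖ ^ 2) ≤ √(∑ i, c^2 * ‖x i‖ ^ 2) := by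
        apply Real.sqrt_le_sqrt
        apply Finset.sum_le_sum
        intro i _
        rw [hTx i, norm_mul, mul_pow]
        exact mul_le_mul_of_nonneg_right (by nlinarith [h i, norm_nonneg (d i)]) (sq_nonneg _)
    _ = c * √(∑ i, ‖x i‖ ^ 2) := by
        rw [← Finset.mul_sum, Real.sqrt_mul (sq_nonneg c), Real.sqrt_sq hc]

end NormLemmas


variable {n : Type*} [Fintype n] [DecidableEq n]

noncomputable def entryCLM (i j : n) : Matrix n n ℂ →L[ℂ] ℂ :=
  LinearMap.toContinuousLinearMap
    { toFun := fun X => X i j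
      map_add' := fun _ _ => rfl
      map_smul' := fun _ _ => rfl }

@[simp] lemma entryCLM_apply (i j : n) (X : Matrix n n ℂ) : entryCLM i j X = X i j := rfl

lemma integral_entry {a b : ℝ} {f : ℝ → Matrix n n ℂ}
    (hf : IntervalIntegrable f volume a b) (i j : n) :
    (∫ s in a..b, f s) i j = ∫ s in a..b, f s i j := by
  have h := (entryCLM i j).intervalIntegral_comp_comm hf
  simpa using h.symm

noncomputable def diagCLM : (n → ℂ) →L[ℂ] Matrix n n ℂ :=
  LinearMap.toContinuousLinearMap
    { toFun := Matrix.diagonal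
      map_add' := fun _ _ => (Matrix.diagonal_add _ _).symm
      map_smul' := fun c v => by simp [Matrix.diagonal_smul] }

@[simp] lemma diagCLM_apply (v : n → ℂ) : diagCLM v = Matrix.diagonal v := by
  simp [diagCLM]

variable (z : ℂ) (lam mu : n → ℝ) (K : Matrix n n ℂ)

noncomputable def dA (s : ℝ) : n → ℂ := fun i => (lam i : ℂ) ^ ((s:ℂ) * z)
noncomputable def dB (s : ℝ) : n → ℂ := fun j => (mu j : ℂ) ^ (((1 - s : ℝ):ℂ) * z)
noncomputable def pA (r : ℝ) : n → ℂ := fun i => (((1 + r * (lam i - 1))⁻¹ : ℝ) : ℂ)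

noncomputable def Em : Matrix n n ℂ := Matrix.of fun i j => ((lam i : ℂ) - (mu j : ℂ)) * K i j
noncomputable def Lm : Matrix n n ℂ :=
  Matrix.of fun i j => ((Real.log (lam i) : ℂ) - (Real.log (mu j) : ℂ)) * K i j
noncomputable def Wm : Matrix n n ℂ :=
  Matrix.of fun i j => ((lam i : ℂ) ^ z - (mu j : ℂ) ^ z) * K i j

noncomputable def Gm (s r : ℝ) : Matrix n n ℂ :=
  z • (Matrix.diagonal (fun i => dA z lam s i * pA lam r i) * Em lam mu K *
    Matrix.diagonal (fun j => dB z mu s j * pA mu r j))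

noncomputable def Hm (s : ℝ) : Matrix n n ℂ :=
  z • (Matrix.diagonal (dA z lam s) * Lm lam mu K * Matrix.diagonal (dB z mu s))

lemma contOn_pA_comp (hlam : ∀ i, 0 < lam i) (i : n) :
    ContinuousOn (fun r : ℝ => pA lam r i) (Set.uIcc (0:ℝ) 1) := by
  apply Complex.continuous_ofReal.comp_continuousOn
  apply ContinuousOn.inv₀
  · exact (continuous_const.add (continuous_id.mul continuous_const)).continuousOn
  · intro r hr
    rw [Set.uIcc_of_le zero_le_one] at hr
    exact (sc_pos_denom (hlam i) hr.1 hr.2).ne'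

lemma contOn_Gm (hlam : ∀ i, 0 < lam i) (hmu : ∀ j, 0 < mu j) (s : ℝ) :
    ContinuousOn (fun r => Gm z lam mu K s r) (Set.uIcc (0:ℝ) 1) := by
  have h1 : ContinuousOn (fun r : ℝ => Matrix.diagonal
      (fun i => dA z lam s i * pA lam r i)) (Set.uIcc (0:ℝ) 1) := by
    have : ContinuousOn (fun r : ℝ => (fun i => dA z lam s i * pA lam r i))
        (Set.uIcc (0:ℝ) 1) := by
      apply continuousOn_pi.2
      intro i
      exact continuousOn_const.mul (contOn_pA_comp lam hlam i)
    simpa [Function.comp_def] using diagCLM.continuous.comp_continuousOn this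
  have h2 : ContinuousOn (fun r : ℝ => Matrix.diagonal
      (fun j => dB z mu s j * pA mu r j)) (Set.uIcc (0:ℝ) 1) := by
    have : ContinuousOn (fun r : ℝ => (fun j => dB z mu s j * pA mu r j))
        (Set.uIcc (0:ℝ) 1) := by
      apply continuousOn_pi.2
      intro j
      exact continuousOn_const.mul (contOn_pA_comp mu hmu j)
    simpa [Function.comp_def] using diagCLM.continuous.comp_continuousOn this
  exact ((h1.mul continuousOn_const).mul h2).const_smul z

lemma cont_Hm (hlam : ∀ i, 0 < lam i) (hmu : ∀ j, 0 < mu j) :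
    Continuous (fun s => Hm z lam mu K s) := by
  have h1 : Continuous (fun s : ℝ => Matrix.diagonal (dA z lam s)) := by
    have hv : Continuous (fun s : ℝ => dA z lam s) := by
      apply continuous_pi
      intro i
      exact (Complex.continuous_ofReal.mul continuous_const).const_cpow
        (Or.inl (Complex.ofReal_ne_zero.mpr (hlam i).ne'))
    simpa [Function.comp_def] using diagCLM.continuous.comp hv
  have h2 : Continuous (fun s : ℝ => Matrix.diagonal (dB z mu s)) := by
    have hv : Continuous (fun s : ℝ => dB z mu s) := by
      apply continuous_pi
      intro j
      exact ((Complex.continuous_ofReal.comp (continuous_const.sub continuous_id)).mul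
        continuous_const).const_cpow (Or.inl (Complex.ofReal_ne_zero.mpr (hmu j).ne'))
    simpa [Function.comp_def] using diagCLM.continuous.comp hv
  exact ((h1.mul continuous_const).mul h2).const_smul z

lemma intInt_Gm (hlam : ∀ i, 0 < lam i) (hmu : ∀ j, 0 < mu j) (s : ℝ) :
    IntervalIntegrable (fun r => Gm z lam mu K s r) volume 0 1 :=
  (contOn_Gm z lam mu K hlam hmu s).intervalIntegrable

lemma intInt_Hm (hlam : ∀ i, 0 < lam i) (hmu : ∀ j, 0 < mu j) :
    IntervalIntegrable (fun s => Hm z lam mu K s) volume 0 1 :=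
  (cont_Hm z lam mu K hlam hmu).intervalIntegrable 0 1

lemma Hm_eq_integral (hlam : ∀ i, 0 < lam i) (hmu : ∀ j, 0 < mu j) (s : ℝ) :
    Hm z lam mu K s = ∫ r in (0:ℝ)..1, Gm z lam mu K s r := by
  ext i j
  rw [integral_entry (intInt_Gm z lam mu K hlam hmu s) i j]
  have entry_eq : ∀ r : ℝ, Gm z lam mu K s r i j
      = (z * dA z lam s i * dB z mu s j * ((lam i : ℂ) - (mu j : ℂ)) * K i j) *
        ((((1 + r * (lam i - 1))⁻¹ * (1 + r * (mu j - 1))⁻¹ : ℝ)) : ℂ) := by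
    intro r
    simp only [Gm, Em, pA, Matrix.smul_apply, smul_eq_mul, Matrix.mul_diagonal,
      Matrix.diagonal_mul, Matrix.of_apply]
    push_cast
    ring
  simp only [entry_eq]
  rw [intervalIntegral.integral_const_mul]
  have hofReal : (∫ r in (0:ℝ)..1, ((((1 + r * (lam i - 1))⁻¹ * (1 + r * (mu j - 1))⁻¹ : ℝ)) : ℂ))
      = Complex.ofReal (∫ r in (0:ℝ)..1, ((1 + r * (lam i - 1))⁻¹ * (1 + r * (mu j - 1))⁻¹)) := by
    have hint : IntervalIntegrable
        (fun r : ℝ => ((1 + r * (lam i - 1))⁻¹ * (1 + r * (mu j - 1))⁻¹ : ℝ)) volume 0 1 := by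
      apply ContinuousOn.intervalIntegrable
      apply ContinuousOn.mul
      · apply ContinuousOn.inv₀
          ((continuous_const.add (continuous_id.mul continuous_const)).continuousOn)
        intro r hr
        rw [Set.uIcc_of_le zero_le_one] at hr
        exact (sc_pos_denom (hlam i) hr.1 hr.2).ne'
      · apply ContinuousOn.inv₀
          ((continuous_const.add (continuous_id.mul continuous_const)).continuousOn)
        intro r hr
        rw [Set.uIcc_of_le zero_le_one] at hr
        exact (sc_pos_denom (hmu j) hr.1 hr.2).ne'
    simpa using (Complex.ofRealCLM.intervalIntegral_comp_comm hint)
  rw [hofReal]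
  have hC := congrArg Complex.ofReal (sc1 (hlam i) (hmu j))
  push_cast at hC
  have hHentry : Hm z lam mu K s i j
      = z * dA z lam s i * dB z mu s j *
        ((Real.log (lam i) : ℂ) - (Real.log (mu j) : ℂ)) * K i j := by
    simp only [Hm, Lm, Matrix.smul_apply, smul_eq_mul, Matrix.mul_diagonal,
      Matrix.diagonal_mul, Matrix.of_apply]
    ring
  rw [hHentry]
  linear_combination (-(z * dA z lam s i * dB z mu s j * K i j)) * hC

lemma Wm_eq_integral (hlam : ∀ i, 0 < lam i) (hmu : ∀ j, 0 < mu j) :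
    Wm z lam mu K = ∫ s in (0:ℝ)..1, Hm z lam mu K s := by
  ext i j
  rw [integral_entry (intInt_Hm z lam mu K hlam hmu) i j]
  have entry_eq : ∀ s : ℝ, Hm z lam mu K s i j
      = (z * ((Real.log (lam i) : ℂ) - (Real.log (mu j) : ℂ)) * K i j) *
        ((lam i : ℂ) ^ ((s:ℂ) * z) * (mu j : ℂ) ^ (((1 - s : ℝ):ℂ) * z)) := by
    intro s
    simp only [Hm, Lm, dA, dB, Matrix.smul_apply, smul_eq_mul, Matrix.mul_diagonal,
      Matrix.diagonal_mul, Matrix.of_apply]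
    ring
  simp only [entry_eq]
  rw [intervalIntegral.integral_const_mul]
  have h := sc2 (hlam i) (hmu j) z
  simp only [Wm, Matrix.of_apply]
  linear_combination (-(K i j)) * h


section NormBounds

variable {M : ℝ} {N : ℝ}

lemma denom2_pos {M r : ℝ} (hM : 1 ≤ M) (hr0 : 0 ≤ r) (hr1 : r ≤ 1) :
    0 < 1 - r * (1 - M⁻¹) := by
  have hM0 : 0 < M := lt_of_lt_of_le one_pos hM
  have hi : 0 < M⁻¹ := inv_pos.2 hM0
  have hi1 : M⁻¹ ≤ 1 := by rw [inv_le_one_iff₀]; right; exact hM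
  nlinarith [mul_le_of_le_one_left (by linarith : (0:ℝ) ≤ 1 - M⁻¹) hr1]

lemma pA_bound (hM : 1 ≤ M) {t : ℝ} (ht : M⁻¹ ≤ t) {r : ℝ} (hr0 : 0 ≤ r) (hr1 : r ≤ 1) :
    ‖(((1 + r * (t - 1))⁻¹ : ℝ) : ℂ)‖ ≤ (1 - r * (1 - M⁻¹))⁻¹ := by
  have hM0 : 0 < M := lt_of_lt_of_le one_pos hM
  have hMi : 0 < M⁻¹ := inv_pos.2 hM0
  have ht0 : 0 < t := lt_of_lt_of_le hMi ht
  have hd1 : 0 < 1 + r * (t - 1) := sc_pos_denom ht0 hr0 hr1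
  have hd2 : 0 < 1 - r * (1 - M⁻¹) := denom2_pos hM hr0 hr1
  have hle : 1 - r * (1 - M⁻¹) ≤ 1 + r * (t - 1) := by nlinarith [mul_nonneg hr0 (by linarith : (0:ℝ) ≤ t - M⁻¹)]
  rw [Complex.norm_real, Real.norm_eq_abs, abs_of_pos (inv_pos.2 hd1)]
  exact inv_anti₀ hd2 hle

lemma norm_dA_pA_le (hM : 1 ≤ M) (hlam : ∀ i, M⁻¹ ≤ lam i ∧ lam i ≤ M)
    {s : ℝ} (hs0 : 0 ≤ s) {r : ℝ} (hr0 : 0 ≤ r) (hr1 : r ≤ 1) (i : n) :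
    ‖dA z lam s i * pA lam r i‖ ≤ M ^ (s * |z.re|) * (1 - r * (1 - M⁻¹))⁻¹ := by
  rw [norm_mul]
  have h1 : ‖dA z lam s i‖ ≤ M ^ (s * |z.re|) := by
    have := sc4 hM (hlam i).1 (hlam i).2 ((s:ℂ) * z)
    have hre : ((s:ℂ) * z).re = s * z.re := by simp [Complex.mul_re]
    rw [hre] at this
    rw [abs_mul, abs_of_nonneg hs0] at this
    exact this
  have h2 : ‖pA lam r i‖ ≤ (1 - r * (1 - M⁻¹))⁻¹ := pA_bound hM (hlam i).1 hr0 hr1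
  have hd2 : 0 < 1 - r * (1 - M⁻¹) := denom2_pos hM hr0 hr1
  exact mul_le_mul h1 h2 (norm_nonneg _) (by positivity)

lemma norm_dB_pA_le (hM : 1 ≤ M) (hmu : ∀ j, M⁻¹ ≤ mu j ∧ mu j ≤ M)
    {s : ℝ} (hs1 : s ≤ 1) {r : ℝ} (hr0 : 0 ≤ r) (hr1 : r ≤ 1) (j : n) :
    ‖dB z mu s j * pA mu r j‖ ≤ M ^ ((1 - s) * |z.re|) * (1 - r * (1 - M⁻¹))⁻¹ := by
  rw [norm_mul]
  have h1 : ‖dB z mu s j‖ ≤ M ^ ((1 - s) * |z.re|) := by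
    have := sc4 hM (hmu j).1 (hmu j).2 (((1 - s : ℝ):ℂ) * z)
    have hre : (((1 - s : ℝ):ℂ) * z).re = (1 - s) * z.re := by simp [Complex.mul_re]
    rw [hre] at this
    rw [abs_mul, abs_of_nonneg (by linarith : (0:ℝ) ≤ 1 - s)] at this
    exact this
  have h2 : ‖pA mu r j‖ ≤ (1 - r * (1 - M⁻¹))⁻¹ := pA_bound hM (hmu j).1 hr0 hr1
  have hd2 : 0 < 1 - r * (1 - M⁻¹) := denom2_pos hM hr0 hr1
  exact mul_le_mul h1 h2 (norm_nonneg _) (by positivity)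

lemma norm_Gm_le (hM : 1 ≤ M) (hlam : ∀ i, M⁻¹ ≤ lam i ∧ lam i ≤ M)
    (hmu : ∀ j, M⁻¹ ≤ mu j ∧ mu j ≤ M) (hN : ‖Em lam mu K‖ ≤ N) (hN0 : 0 ≤ N)
    {s : ℝ} (hs0 : 0 ≤ s) (hs1 : s ≤ 1) {r : ℝ} (hr0 : 0 ≤ r) (hr1 : r ≤ 1) :
    ‖Gm z lam mu K s r‖ ≤ ‖z‖ * M ^ |z.re| * N * ((1 - r * (1 - M⁻¹))⁻¹) ^ 2 := by
  have hM0 : 0 < M := lt_of_lt_of_le one_pos hM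
  have hd2 : 0 < 1 - r * (1 - M⁻¹) := denom2_pos hM hr0 hr1
  have hD1 : ‖Matrix.diagonal (fun i => dA z lam s i * pA lam r i)‖
      ≤ M ^ (s * |z.re|) * (1 - r * (1 - M⁻¹))⁻¹ :=
    norm_diag_le (by positivity) (fun i => norm_dA_pA_le z lam hM hlam hs0 hr0 hr1 i)
  have hD2 : ‖Matrix.diagonal (fun j => dB z mu s j * pA mu r j)‖
      ≤ M ^ ((1 - s) * |z.re|) * (1 - r * (1 - M⁻¹))⁻¹ :=
    norm_diag_le (by positivity) (fun j => norm_dB_pA_le z mu hM hmu hs1 hr0 hr1 j)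
  have hMM : M ^ (s * |z.re|) * M ^ ((1 - s) * |z.re|) = M ^ |z.re| := by
    rw [← Real.rpow_add hM0]
    congr 1
    ring
  calc ‖Gm z lam mu K s r‖
      = ‖z‖ * ‖Matrix.diagonal (fun i => dA z lam s i * pA lam r i) * Em lam mu K *
          Matrix.diagonal (fun j => dB z mu s j * pA mu r j)‖ := norm_smul z _
    _ ≤ ‖z‖ * (‖Matrix.diagonal (fun i => dA z lam s i * pA lam r i) * Em lam mu K‖ *
          ‖Matrix.diagonal (fun j => dB z mu s j * pA mu r j)‖) := by
        exact mul_le_mul_of_nonneg_left (Matrix.l2_opNorm_mul _ _) (norm_nonneg z)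
    _ ≤ ‖z‖ * ((‖Matrix.diagonal (fun i => dA z lam s i * pA lam r i)‖ * ‖Em lam mu K‖) *
          ‖Matrix.diagonal (fun j => dB z mu s j * pA mu r j)‖) := by
        apply mul_le_mul_of_nonneg_left _ (norm_nonneg z)
        exact mul_le_mul_of_nonneg_right (Matrix.l2_opNorm_mul _ _) (norm_nonneg _)
    _ ≤ ‖z‖ * (((M ^ (s * |z.re|) * (1 - r * (1 - M⁻¹))⁻¹) * N) *
          (M ^ ((1 - s) * |z.re|) * (1 - r * (1 - M⁻¹))⁻¹)) := by
        apply mul_le_mul_of_nonneg_left _ (norm_nonneg z)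
        apply mul_le_mul _ hD2 (norm_nonneg _) (by positivity)
        exact mul_le_mul hD1 hN (norm_nonneg _) (by positivity)
    _ = ‖z‖ * M ^ |z.re| * N * ((1 - r * (1 - M⁻¹))⁻¹) ^ 2 := by
        rw [← hMM]
        ring

lemma norm_Hm_le (hM : 1 ≤ M) (hlam : ∀ i, M⁻¹ ≤ lam i ∧ lam i ≤ M)
    (hmu : ∀ j, M⁻¹ ≤ mu j ∧ mu j ≤ M) (hN : ‖Em lam mu K‖ ≤ N) (hN0 : 0 ≤ N)
    {s : ℝ} (hs0 : 0 ≤ s) (hs1 : s ≤ 1) :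
    ‖Hm z lam mu K s‖ ≤ ‖z‖ * M ^ |z.re| * N * M := by
  have hM0 : 0 < M := lt_of_lt_of_le one_pos hM
  have hlam' : ∀ i, 0 < lam i := fun i => lt_of_lt_of_le (inv_pos.2 hM0) (hlam i).1
  have hmu' : ∀ j, 0 < mu j := fun j => lt_of_lt_of_le (inv_pos.2 hM0) (hmu j).1
  rw [Hm_eq_integral z lam mu K hlam' hmu' s]
  have hg : IntervalIntegrable
      (fun r : ℝ => ‖z‖ * M ^ |z.re| * N * ((1 - r * (1 - M⁻¹))⁻¹) ^ 2) volume 0 1 := by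
    apply ContinuousOn.intervalIntegrable
    apply continuousOn_const.mul
    apply ContinuousOn.pow
    apply ContinuousOn.inv₀
      ((continuous_const.sub (continuous_id.mul continuous_const)).continuousOn)
    intro r hr
    rw [Set.uIcc_of_le zero_le_one] at hr
    exact (denom2_pos hM hr.1 hr.2).ne'
  have h := intervalIntegral.norm_integral_le_of_norm_le (μ := volume)
      (f := fun r => Gm z lam mu K s r)
      (g := fun r : ℝ => ‖z‖ * M ^ |z.re| * N * ((1 - r * (1 - M⁻¹))⁻¹) ^ 2)
      zero_le_one ?_ hg
  · refine h.trans ?_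
    rw [intervalIntegral.integral_const_mul, sc3 hM]
  · refine Filter.Eventually.of_forall fun r hr => ?_
    exact norm_Gm_le z lam mu K hM hlam hmu hN hN0 hs0 hs1 hr.1.le hr.2

end NormBounds


section NormWm
variable {n : Type*} [Fintype n] [DecidableEq n] (z : ℂ) (lam mu : n → ℝ) (K : Matrix n n ℂ)
variable {M N : ℝ}

lemma norm_Wm_le (hM : 1 ≤ M) (hlam : ∀ i, M⁻¹ ≤ lam i ∧ lam i ≤ M)
    (hmu : ∀ j, M⁻¹ ≤ mu j ∧ mu j ≤ M) (hN : ‖Em lam mu K‖ ≤ N) (hN0 : 0 ≤ N) :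
    ‖Wm z lam mu K‖ ≤ ‖z‖ * M ^ |z.re| * N * M := by
  have hM0 : 0 < M := lt_of_lt_of_le one_pos hM
  have hlam' : ∀ i, 0 < lam i := fun i => lt_of_lt_of_le (inv_pos.2 hM0) (hlam i).1
  have hmu' : ∀ j, 0 < mu j := fun j => lt_of_lt_of_le (inv_pos.2 hM0) (hmu j).1
  rw [Wm_eq_integral z lam mu K hlam' hmu']
  have h := intervalIntegral.norm_integral_le_of_norm_le_const (a := 0) (b := 1)
    (C := ‖z‖ * M ^ |z.re| * N * M) (f := fun s => Hm z lam mu K s) ?_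
  · simpa using h
  · intro s hs
    rw [Set.uIoc_of_le zero_le_one] at hs
    exact norm_Hm_le z lam mu K hM hlam hmu hN hN0 hs.1.le hs.2

end NormWm

section EigBounds
variable {n : Type*} [Fintype n] [DecidableEq n]

lemma mulVec_norm_le (A : Matrix n n ℂ) (v : EuclideanSpace ℂ n) :
    ‖(EuclideanSpace.equiv n ℂ).symm (A *ᵥ ⇑v)‖ ≤ ‖A‖ * ‖v‖ :=
  Matrix.l2_opNorm_mulVec A v

lemma eig_bounds {A : Matrix n n ℂ} (hA : A.PosDef) {M : ℝ}
    (h1 : ‖A‖ ≤ M) (h2 : ‖A⁻¹‖ ≤ M) (i : n) :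
    M⁻¹ ≤ hA.1.eigenvalues i ∧ hA.1.eigenvalues i ≤ M := by
  have hpos : 0 < hA.1.eigenvalues i := hA.eigenvalues_pos i
  have hvnorm : ‖hA.1.eigenvectorBasis i‖ = 1 := hA.1.eigenvectorBasis.orthonormal.1 i
  have hmv : A *ᵥ ⇑(hA.1.eigenvectorBasis i)
      = hA.1.eigenvalues i • ⇑(hA.1.eigenvectorBasis i) := hA.1.mulVec_eigenvectorBasis i
  have hA1 : hA.1.eigenvalues i ≤ ‖A‖ := by
    have hle := mulVec_norm_le A (hA.1.eigenvectorBasis i)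
    rw [hmv, show (EuclideanSpace.equiv n ℂ).symm
        (hA.1.eigenvalues i • ⇑(hA.1.eigenvectorBasis i))
        = hA.1.eigenvalues i • hA.1.eigenvectorBasis i from rfl,
      norm_smul, Real.norm_eq_abs, abs_of_pos hpos, hvnorm] at hle
    simpa using hle
  have hdet : IsUnit A.det := by
    rw [isUnit_iff_ne_zero]
    exact hA.det_pos.ne'
  have hmv2 : A⁻¹ *ᵥ ⇑(hA.1.eigenvectorBasis i)
      = (hA.1.eigenvalues i)⁻¹ • ⇑(hA.1.eigenvectorBasis i) := by
    have h3 : A⁻¹ *ᵥ (A *ᵥ ⇑(hA.1.eigenvectorBasis i)) = ⇑(hA.1.eigenvectorBasis i) := by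
      rw [Matrix.mulVec_mulVec, Matrix.nonsing_inv_mul A hdet, Matrix.one_mulVec]
    rw [hmv, Matrix.mulVec_smul] at h3
    calc A⁻¹ *ᵥ ⇑(hA.1.eigenvectorBasis i)
        = (hA.1.eigenvalues i)⁻¹ •
            (hA.1.eigenvalues i • (A⁻¹ *ᵥ ⇑(hA.1.eigenvectorBasis i))) := by
          rw [smul_smul, inv_mul_cancel₀ hpos.ne', one_smul]
      _ = (hA.1.eigenvalues i)⁻¹ • ⇑(hA.1.eigenvectorBasis i) := by rw [h3]
  have hA2 : (hA.1.eigenvalues i)⁻¹ ≤ ‖A⁻¹‖ := by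
    have hle := mulVec_norm_le A⁻¹ (hA.1.eigenvectorBasis i)
    rw [hmv2, show (EuclideanSpace.equiv n ℂ).symm
        ((hA.1.eigenvalues i)⁻¹ • ⇑(hA.1.eigenvectorBasis i))
        = (hA.1.eigenvalues i)⁻¹ • hA.1.eigenvectorBasis i from rfl,
      norm_smul, Real.norm_eq_abs, abs_of_pos (inv_pos.2 hpos), hvnorm] at hle
    simpa using hle
  refine ⟨?_, hA1.trans h1⟩
  have hlM : (hA.1.eigenvalues i)⁻¹ ≤ M := hA2.trans h2
  have := inv_anti₀ (inv_pos.2 hpos) hlM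
  rwa [inv_inv] at this

end EigBounds

end CpowProofAux

/-- For positive definite matrices `A, B` and any `z ∈ ℂ`,
`‖A^z - B^z‖ ≤ |z| · M^(1+|Re z|) · ‖A - B‖` where
`M = max{‖A‖, ‖A⁻¹‖, ‖B‖, ‖B⁻¹‖}` (operator norms). -/
theorem cpow_sub_cpow_opNorm_le {n : Type*} [Fintype n] [DecidableEq n]
    (A B : Matrix n n ℂ) (hA : A.PosDef) (hB : B.PosDef) (z : ℂ)
    (M : ℝ) (hM : M = max (max ‖A‖ ‖A⁻¹‖) (max ‖B‖ ‖B⁻¹‖)) :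
    ‖A.cpow z - B.cpow z‖ ≤ ‖z‖ * M ^ (1 + |z.re|) * ‖A - B‖ := by
  classical
  have hMnn : 0 ≤ M := by
    rw [hM]
    exact le_max_of_le_left (le_max_of_le_left (norm_nonneg A))
  rcases isEmpty_or_nonempty n with hn | hn
  · have h0 : A.cpow z - B.cpow z = (0 : Matrix n n ℂ) := Subsingleton.elim _ _
    rw [h0, norm_zero]
    have h1 : 0 ≤ M ^ (1 + |z.re|) := Real.rpow_nonneg hMnn _
    have h2 : (0:ℝ) ≤ ‖z‖ := norm_nonneg z
    positivity
  · have hMA : ‖A‖ ≤ M := by rw [hM]; exact le_max_of_le_left (le_max_left _ _)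
    have hMAi : ‖A⁻¹‖ ≤ M := by rw [hM]; exact le_max_of_le_left (le_max_right _ _)
    have hMB : ‖B‖ ≤ M := by rw [hM]; exact le_max_of_le_right (le_max_left _ _)
    have hMBi : ‖B⁻¹‖ ≤ M := by rw [hM]; exact le_max_of_le_right (le_max_right _ _)
    have hbA : ∀ i, M⁻¹ ≤ hA.1.eigenvalues i ∧ hA.1.eigenvalues i ≤ M :=
      fun i => CpowProofAux.eig_bounds hA hMA hMAi i
    have hbB : ∀ j, M⁻¹ ≤ hB.1.eigenvalues j ∧ hB.1.eigenvalues j ≤ M :=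
      fun j => CpowProofAux.eig_bounds hB hMB hMBi j
    obtain ⟨i0⟩ := hn
    have hM0 : 0 < M := lt_of_lt_of_le (hA.eigenvalues_pos i0) (hbA i0).2
    have hM1 : 1 ≤ M := by
      have h1 : M⁻¹ ≤ M := le_trans (hbA i0).1 (hbA i0).2
      nlinarith [mul_le_mul_of_nonneg_left h1 hM0.le, mul_inv_cancel₀ hM0.ne']
    set lam := hA.1.eigenvalues with hlam
    set mu := hB.1.eigenvalues with hmu
    set U := (hA.1.eigenvectorUnitary : Matrix n n ℂ) with hU
    set V := (hB.1.eigenvectorUnitary : Matrix n n ℂ) with hV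
    set K := star U * V with hK
    have hUU : star U * U = 1 := Unitary.coe_star_mul_self hA.1.eigenvectorUnitary
    have hUU' : U * star U = 1 := Unitary.coe_mul_star_self hA.1.eigenvectorUnitary
    have hVV : star V * V = 1 := Unitary.coe_star_mul_self hB.1.eigenvectorUnitary
    have hVV' : V * star V = 1 := Unitary.coe_mul_star_self hB.1.eigenvectorUnitary
    have hsA : A = U * Matrix.diagonal (fun i => (lam i : ℂ)) * star U := by
      have := hA.1.spectral_theorem
      exact this
    have hsB : B = V * Matrix.diagonal (fun j => (mu j : ℂ)) * star V := by
      have := hB.1.spectral_theorem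
      exact this
    have hE : CpowProofAux.Em lam mu K = star U * (A - B) * V := by
      have hWrep : CpowProofAux.Em lam mu K
          = Matrix.diagonal (fun i => (lam i : ℂ)) * K - K * Matrix.diagonal (fun j => (mu j : ℂ)) := by
        ext i j
        simp [CpowProofAux.Em, Matrix.diagonal_mul, Matrix.mul_diagonal, Matrix.sub_apply]
        ring
      rw [hWrep]
      have e2 : star U * A * V = Matrix.diagonal (fun i => (lam i : ℂ)) * K := by
        rw [hsA, hK]
        calc star U * (U * Matrix.diagonal (fun i => (lam i : ℂ)) * star U) * V
            = (star U * U) * Matrix.diagonal (fun i => (lam i : ℂ)) * (star U * V) := by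
              noncomm_ring
          _ = Matrix.diagonal (fun i => (lam i : ℂ)) * (star U * V) := by
              rw [hUU, Matrix.one_mul]
      have e3 : star U * B * V = K * Matrix.diagonal (fun j => (mu j : ℂ)) := by
        rw [hsB, hK]
        calc star U * (V * Matrix.diagonal (fun j => (mu j : ℂ)) * star V) * V
            = (star U * V) * Matrix.diagonal (fun j => (mu j : ℂ)) * (star V * V) := by
              noncomm_ring
          _ = (star U * V) * Matrix.diagonal (fun j => (mu j : ℂ)) := by
              rw [hVV, Matrix.mul_one]
      have e1 : star U * (A - B) * V = star U * A * V - star U * B * V := by noncomm_ring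
      rw [e1, e2, e3]
    have hWrep : CpowProofAux.Wm z lam mu K
        = Matrix.diagonal (fun i => (lam i : ℂ) ^ z) * K
          - K * Matrix.diagonal (fun j => (mu j : ℂ) ^ z) := by
      ext i j
      simp [CpowProofAux.Wm, Matrix.diagonal_mul, Matrix.mul_diagonal, Matrix.sub_apply]
      ring
    have hcA : A.cpow z = U * Matrix.diagonal (fun i => (lam i : ℂ) ^ z) * star U := by
      rw [Matrix.cpow, dif_pos hA.1]
    have hcB : B.cpow z = V * Matrix.diagonal (fun j => (mu j : ℂ) ^ z) * star V := by
      rw [Matrix.cpow, dif_pos hB.1]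
    have key : A.cpow z - B.cpow z = U * CpowProofAux.Wm z lam mu K * star V := by
      rw [hWrep, hcA, hcB, hK]
      symm
      calc U * (Matrix.diagonal (fun i => (lam i : ℂ) ^ z) * (star U * V)
            - (star U * V) * Matrix.diagonal (fun j => (mu j : ℂ) ^ z)) * star V
          = (U * Matrix.diagonal (fun i => (lam i : ℂ) ^ z) * star U) * (V * star V)
            - (U * star U) * (V * Matrix.diagonal (fun j => (mu j : ℂ) ^ z) * star V) := by
            noncomm_ring
        _ = U * Matrix.diagonal (fun i => (lam i : ℂ) ^ z) * star U
            - V * Matrix.diagonal (fun j => (mu j : ℂ) ^ z) * star V := by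
            rw [hUU', hVV', Matrix.mul_one, Matrix.one_mul]
    have hUle : ‖U‖ ≤ 1 := by rw [hU]; exact CpowProofAux.norm_unitary _
    have hVle : ‖V‖ ≤ 1 := by rw [hV]; exact CpowProofAux.norm_unitary _
    have hUsle : ‖star U‖ ≤ 1 := by
      rw [Matrix.star_eq_conjTranspose, Matrix.l2_opNorm_conjTranspose]; exact hUle
    have hVsle : ‖star V‖ ≤ 1 := by
      rw [Matrix.star_eq_conjTranspose, Matrix.l2_opNorm_conjTranspose]; exact hVle
    have hEnorm : ‖CpowProofAux.Em lam mu K‖ ≤ ‖A - B‖ := by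
      rw [hE]
      calc ‖star U * (A - B) * V‖ ≤ ‖star U * (A - B)‖ * ‖V‖ := Matrix.l2_opNorm_mul _ _
        _ ≤ (‖star U‖ * ‖A - B‖) * ‖V‖ :=
            mul_le_mul_of_nonneg_right (Matrix.l2_opNorm_mul _ _) (norm_nonneg _)
        _ ≤ (1 * ‖A - B‖) * 1 := by
            apply mul_le_mul _ hVle (norm_nonneg _) (by positivity)
            exact mul_le_mul_of_nonneg_right hUsle (norm_nonneg _)
        _ = ‖A - B‖ := by ring
    calc ‖A.cpow z - B.cpow z‖ = ‖U * CpowProofAux.Wm z lam mu K * star V‖ := by rw [key]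
      _ ≤ ‖U * CpowProofAux.Wm z lam mu K‖ * ‖star V‖ := Matrix.l2_opNorm_mul _ _
      _ ≤ (‖U‖ * ‖CpowProofAux.Wm z lam mu K‖) * ‖star V‖ :=
          mul_le_mul_of_nonneg_right (Matrix.l2_opNorm_mul _ _) (norm_nonneg _)
      _ ≤ (1 * ‖CpowProofAux.Wm z lam mu K‖) * 1 := by
          apply mul_le_mul _ hVsle (norm_nonneg _) (by positivity)
          exact mul_le_mul_of_nonneg_right hUle (norm_nonneg _)
      _ = ‖CpowProofAux.Wm z lam mu K‖ := by ring
      _ ≤ ‖z‖ * M ^ |z.re| * ‖A - B‖ * M :=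
          CpowProofAux.norm_Wm_le z lam mu K hM1 hbA hbB hEnorm (norm_nonneg _)
      _ = ‖z‖ * M ^ (1 + |z.re|) * ‖A - B‖ := by
          rw [Real.rpow_add hM0, Real.rpow_one]
          ring
end

section
/- If ρ and σ are quantum states (density matrices) with e^{-c}·σ ≤ ρ ≤ e^{c}·σ in the Loewner order for some c ≥ 0, then the trace norm of ρ - σ is at most 2c·e^{c}·(trace of σ), in particular ‖ρ - σ‖₁ ≤ 2c·e^{c} when σ is a state. (Special case used: if e^{-2βh}·d^{-1}·I ≤ ω ≤ e^{2βh}·d^{-1}·I then ‖ω - d^{-1}I‖₁ ≤ 2βh·e^{2βh}.) -/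
open scoped ComplexOrder

/-- The trace norm `‖A‖₁ = Tr √(A†A)` (sum of singular values). -/
noncomputable def traceNorm {m : Type*} [Fintype m] [DecidableEq m] (A : Matrix m m ℂ) : ℝ :=
  ∑ i, Real.sqrt ((Matrix.posSemidef_conjTranspose_mul_self A).1.eigenvalues i)

/-- A quantum state (density matrix): positive semidefinite with unit trace. -/
def IsState {m : Type*} [Fintype m] (ρ : Matrix m m ℂ) : Prop :=
  ρ.PosSemidef ∧ Matrix.trace ρ = 1

open Matrix

lemma trace_conj_diag {m : Type*} [Fintype m] [DecidableEq m] (U : Matrix m m ℂ)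
    (hU : star U * U = 1) (f : m → ℝ) :
    Matrix.trace (U * Matrix.diagonal ((↑) ∘ f) * star U) = ((∑ i, f i : ℝ) : ℂ) := by
  rw [Matrix.trace_mul_cycle, hU, Matrix.one_mul, Matrix.trace_diagonal]
  push_cast
  rfl

lemma conj_mul_conj {m : Type*} [Fintype m] [DecidableEq m] (U : Matrix m m ℂ)
    (hU : star U * U = 1) (D E : Matrix m m ℂ) :
    (U * D * star U) * (U * E * star U) = U * (D * E) * star U := by
  have h : star U * (U * (E * star U)) = E * star U := by
    rw [← Matrix.mul_assoc, hU, Matrix.one_mul]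
  calc (U * D * star U) * (U * E * star U)
      = U * (D * (star U * (U * (E * star U)))) := by simp only [Matrix.mul_assoc]
    _ = U * (D * (E * star U)) := by rw [h]
    _ = U * (D * E) * star U := by simp only [Matrix.mul_assoc]

lemma traceNorm_eq_sum_abs {m : Type*} [Fintype m] [DecidableEq m]
    (A : Matrix m m ℂ) (hA : A.IsHermitian) :
    traceNorm A = ∑ i, |hA.eigenvalues i| := by
  have hB := Matrix.posSemidef_conjTranspose_mul_self A
  set U : Matrix m m ℂ := (hA.eigenvectorUnitary : Matrix m m ℂ) with hUdef
  have hU : star U * U = 1 := Matrix.mem_unitaryGroup_iff'.mp hA.eigenvectorUnitary.2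
  set C : Matrix m m ℂ :=
    U * Matrix.diagonal ((↑) ∘ fun i => |hA.eigenvalues i|) * star U with hCdef
  have hCpsd : C.PosSemidef := by
    have hdiag : (Matrix.diagonal ((↑) ∘ fun i => |hA.eigenvalues i| : m → ℂ)).PosSemidef := by
      rw [Matrix.posSemidef_diagonal_iff]
      intro i
      simpa using Complex.zero_le_real.mpr (abs_nonneg _)
    simpa [hCdef, Matrix.star_eq_conjTranspose] using hdiag.mul_mul_conjTranspose_same U
  have hC2 : C ^ 2 = Aᴴ * A := by
    have hspec : A = U * Matrix.diagonal ((↑) ∘ hA.eigenvalues) * star U := by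
      simpa using hA.spectral_theorem
    have hdd : Matrix.diagonal ((↑) ∘ fun i => |hA.eigenvalues i| : m → ℂ) *
        Matrix.diagonal ((↑) ∘ fun i => |hA.eigenvalues i|) =
        Matrix.diagonal ((↑) ∘ hA.eigenvalues : m → ℂ) *
        Matrix.diagonal ((↑) ∘ hA.eigenvalues) := by
      rw [Matrix.diagonal_mul_diagonal, Matrix.diagonal_mul_diagonal]
      exact congrArg Matrix.diagonal (funext fun i => by
        simp only [Function.comp_apply, ← Complex.ofReal_mul, abs_mul_abs_self])
    rw [pow_two, hCdef, conj_mul_conj U hU, hdd, ← conj_mul_conj U hU, ← hspec, hA.eq]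
  have hCsqrt : C = hB.1.cfc Real.sqrt := by
    open scoped MatrixOrder in
    rw [← hB.1.cfc_eq, ← cfcₙ_eq_cfc, ← CFC.sqrt_eq_real_sqrt (Aᴴ * A) hB.nonneg, eq_comm,
      CFC.sqrt_eq_iff _ _ hB.nonneg hCpsd.nonneg, ← pow_two, hC2]
  have hUB : star (hB.1.eigenvectorUnitary : Matrix m m ℂ) *
      (hB.1.eigenvectorUnitary : Matrix m m ℂ) = 1 :=
    Matrix.mem_unitaryGroup_iff'.mp hB.1.eigenvectorUnitary.2
  have h1 : Matrix.trace (hB.1.cfc Real.sqrt) =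
      ((∑ i, Real.sqrt (hB.1.eigenvalues i) : ℝ) : ℂ) := by
    rw [Matrix.IsHermitian.cfc, Unitary.conjStarAlgAut_apply]
    exact trace_conj_diag _ hUB (fun i => Real.sqrt (hB.1.eigenvalues i))
  have h2 : Matrix.trace C = ((∑ i, |hA.eigenvalues i| : ℝ) : ℂ) :=
    trace_conj_diag U hU _
  have : ((∑ i, Real.sqrt (hB.1.eigenvalues i) : ℝ) : ℂ)
      = ((∑ i, |hA.eigenvalues i| : ℝ) : ℂ) := by rw [← h1, ← hCsqrt, h2]
  exact_mod_cast this


/-- If `e^{-c}·σ ≤ ρ ≤ e^{c}·σ` in the Loewner order for states `ρ, σ` and `c ≥ 0`,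
then `‖ρ - σ‖₁ ≤ 2c·e^{c}·Tr σ`; in particular `‖ρ - σ‖₁ ≤ 2c·e^c` since `Tr σ = 1`. -/
theorem traceNorm_sub_le_of_loewner {m : Type*} [Fintype m] [DecidableEq m]
    (ρ σ : Matrix m m ℂ) (hρ : ρ.PosSemidef) (hσ : σ.PosSemidef)
    (hρ1 : Matrix.trace ρ = 1) (hσ1 : Matrix.trace σ = 1)
    (c : ℝ) (hc : 0 ≤ c)
    (hlow : (ρ - (Real.exp (-c) : ℂ) • σ).PosSemidef)
    (hup : ((Real.exp c : ℂ) • σ - ρ).PosSemidef) :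
    traceNorm (ρ - σ) ≤ 2 * c * Real.exp c * (Matrix.trace σ).re ∧
      traceNorm (ρ - σ) ≤ 2 * c * Real.exp c := by
  have hA : (ρ - σ).IsHermitian := hρ.1.sub hσ.1
  set U : Matrix m m ℂ := (hA.eigenvectorUnitary : Matrix m m ℂ) with hUdef
  have hU : U * star U = 1 := Matrix.mem_unitaryGroup_iff.mp hA.eigenvectorUnitary.2
  set v : m → m → ℂ := fun i => ⇑(hA.eigenvectorBasis i) with hvdef
  -- quadratic forms
  set s : m → ℝ := fun i => (dotProduct (star (v i)) (σ *ᵥ v i)).re with hsdef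
  set r : m → ℝ := fun i => (dotProduct (star (v i)) (ρ *ᵥ v i)).re with hrdef
  have hs0 : ∀ i, 0 ≤ s i := fun i => (Complex.le_def.mp (hσ.dotProduct_mulVec_nonneg (v i))).1
  have hlow' : ∀ i, Real.exp (-c) * s i ≤ r i := by
    intro i
    have := (Complex.le_def.mp (hlow.dotProduct_mulVec_nonneg (v i))).1
    simp only [Matrix.sub_mulVec, dotProduct_sub, Matrix.smul_mulVec,
      dotProduct_smul, Complex.sub_re, Complex.zero_re, smul_eq_mul,
      Complex.re_ofReal_mul] at this
    linarith
  have hup' : ∀ i, r i ≤ Real.exp c * s i := by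
    intro i
    have := (Complex.le_def.mp (hup.dotProduct_mulVec_nonneg (v i))).1
    simp only [Matrix.sub_mulVec, dotProduct_sub, Matrix.smul_mulVec,
      dotProduct_smul, Complex.sub_re, Complex.zero_re, smul_eq_mul,
      Complex.re_ofReal_mul] at this
    linarith
  have heig : ∀ i, hA.eigenvalues i = r i - s i := by
    intro i
    rw [hA.eigenvalues_eq i]
    simp only [Matrix.sub_mulVec, dotProduct_sub, RCLike.re_to_complex, Complex.sub_re]
    rfl
  have hexp2 : 2 ≤ Real.exp c + Real.exp (-c) := by
    nlinarith [Real.add_one_le_exp c, Real.add_one_le_exp (-c)]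
  have habs : ∀ i, |hA.eigenvalues i| ≤ (Real.exp c - 1) * s i := by
    intro i
    rw [heig i]
    rw [abs_le]
    constructor
    · nlinarith [hs0 i, hlow' i, hup' i]
    · nlinarith [hs0 i, hlow' i, hup' i]
  -- sum of s i equals (trace σ).re = 1
  have hdiag : ∀ i, (star U * σ * U) i i = dotProduct (star (v i)) (σ *ᵥ v i) := by
    intro i
    simp only [Matrix.mul_apply, Matrix.star_apply, dotProduct, Matrix.mulVec,
      Finset.sum_mul, Finset.mul_sum, hvdef, hUdef, Matrix.IsHermitian.eigenvectorUnitary_apply,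
      Pi.star_apply]
    rw [Finset.sum_comm]
    exact Finset.sum_congr rfl fun k _ => Finset.sum_congr rfl fun j _ => by ring
  have htr : Matrix.trace (star U * σ * U) = Matrix.trace σ := by
    rw [Matrix.trace_mul_cycle, hU, Matrix.one_mul]
  have hsum : ∑ i, s i = (Matrix.trace σ).re := by
    have : Matrix.trace (star U * σ * U) = ∑ i, dotProduct (star (v i)) (σ *ᵥ v i) := by
      rw [Matrix.trace]
      exact Finset.sum_congr rfl fun i _ => hdiag i
    rw [← htr, this, Complex.re_sum]
  have hσre : (Matrix.trace σ).re = 1 := by rw [hσ1]; rfl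
  have hmain : traceNorm (ρ - σ) ≤ Real.exp c - 1 := by
    rw [traceNorm_eq_sum_abs (ρ - σ) hA]
    calc ∑ i, |hA.eigenvalues i| ≤ ∑ i, (Real.exp c - 1) * s i :=
          Finset.sum_le_sum fun i _ => habs i
      _ = (Real.exp c - 1) * ∑ i, s i := by rw [Finset.mul_sum]
      _ = Real.exp c - 1 := by rw [hsum, hσre, mul_one]
  have hfin : Real.exp c - 1 ≤ 2 * c * Real.exp c := by
    have h1 : Real.exp c * Real.exp (-c) = 1 := by
      rw [← Real.exp_add]; simp
    nlinarith [Real.add_one_le_exp (-c), Real.exp_pos c, hc, h1,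
      mul_nonneg hc (Real.exp_pos c).le]
  constructor
  · rw [hσre, mul_one]; linarith
  · linarith
end

section
/- For an n-site system, the quantum W₁ norm of any traceless self-adjoint operator X satisfies ‖X‖_{W₁} ≤ Σ_{k=0}^{n-1} ‖Tr_{1…k} X‖₁, where Tr_{1…0}X = X. -/
open scoped ComplexOrder

/-- Extend a configuration on `V \ {v}` by the value `k` at site `v`. -/
def insertAt {V : Type*} [DecidableEq V] {d : ℕ} (v : V) (k : Fin d)
    (s : {w : V // w ≠ v} → Fin d) : V → Fin d :=
  fun w => if h : w = v then k else s ⟨w, h⟩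

/-- Partial trace over the site `v` of an operator on `n` qudits. -/
noncomputable def ptraceSite {V : Type*} [Fintype V] [DecidableEq V] {d : ℕ} (v : V)
    (X : Matrix (V → Fin d) (V → Fin d) ℂ) :
    Matrix ({w : V // w ≠ v} → Fin d) ({w : V // w ≠ v} → Fin d) ℂ :=
  Matrix.of fun s t => ∑ k : Fin d, X (insertAt v k s) (insertAt v k t)

/-- Extend a configuration on `V \ A` by a configuration `f` on `A`. -/
def insertSet {V : Type*} [DecidableEq V] {d : ℕ} (A : Finset V)
    (f : {w : V // w ∈ A} → Fin d) (s : {w : V // w ∉ A} → Fin d) : V → Fin d :=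
  fun w => if h : w ∈ A then f ⟨w, h⟩ else s ⟨w, h⟩

/-- Partial trace over the sites in `A` of an operator on `n` qudits. -/
noncomputable def ptraceSet {V : Type*} [Fintype V] [DecidableEq V] {d : ℕ} (A : Finset V)
    (X : Matrix (V → Fin d) (V → Fin d) ℂ) :
    Matrix ({w : V // w ∉ A} → Fin d) ({w : V // w ∉ A} → Fin d) ℂ :=
  Matrix.of fun s t =>
    ∑ f : {w : V // w ∈ A} → Fin d, X (insertSet A f s) (insertSet A f t)

/-- The quantum Wasserstein norm of order 1 of De Palma et al.:
`‖X‖_{W₁} = min { (1/2) ∑_v ‖Y_v‖₁ : X = ∑_v Y_v, Tr_v Y_v = 0 }`. -/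
noncomputable def W1norm {V : Type*} [Fintype V] [DecidableEq V] {d : ℕ}
    (X : Matrix (V → Fin d) (V → Fin d) ℂ) : ℝ :=
  sInf { r : ℝ | ∃ Y : V → Matrix (V → Fin d) (V → Fin d) ℂ,
    X = ∑ v, Y v ∧ (∀ v, ptraceSite v (Y v) = 0) ∧
      r = (1 / 2) * ∑ v, traceNorm (Y v) }

namespace Matrix.PosSemidef
open scoped MatrixOrder
variable {m : Type*} [Fintype m] [DecidableEq m]

noncomputable def sqrt {M : Matrix m m ℂ} (_hM : M.PosSemidef) : Matrix m m ℂ := CFC.sqrt M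

lemma sqrt_eq_hcfc {M : Matrix m m ℂ} (hM : M.PosSemidef) : hM.sqrt = hM.1.cfc Real.sqrt := by
  rw [sqrt, CFC.sqrt_eq_real_sqrt M hM.nonneg, cfcₙ_eq_cfc, hM.1.cfc_eq]

lemma posSemidef_sqrt {M : Matrix m m ℂ} (hM : M.PosSemidef) : hM.sqrt.PosSemidef :=
  Matrix.nonneg_iff_posSemidef.mp (CFC.sqrt_nonneg M)

lemma sq_sqrt {M : Matrix m m ℂ} (hM : M.PosSemidef) : hM.sqrt ^ 2 = M :=
  CFC.sq_sqrt M hM.nonneg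

lemma sqrt_mul_self {M : Matrix m m ℂ} (hM : M.PosSemidef) : hM.sqrt * hM.sqrt = M :=
  CFC.sqrt_mul_sqrt_self M hM.nonneg

lemma eq_sqrt_of_sq_eq {A B : Matrix m m ℂ} (hA : A.PosSemidef) (hB : B.PosSemidef)
    (hAB : A ^ 2 = B) : A = hB.sqrt :=
  (CFC.sqrt_unique (by rw [← sq]; exact hAB) hA.nonneg).symm

end Matrix.PosSemidef

namespace W1aux
open Matrix
variable {m : Type*} [Fintype m] [DecidableEq m]

lemma sum_sqrt_eig_congr {M N : Matrix m m ℂ} (h : M = N) (hM : M.IsHermitian) (hN : N.IsHermitian) :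
    ∑ i, Real.sqrt (hM.eigenvalues i) = ∑ i, Real.sqrt (hN.eigenvalues i) := by subst h; rfl

lemma traceNorm_eq_of {A B : Matrix m m ℂ} (h : Aᴴ * A = Bᴴ * B) : traceNorm A = traceNorm B :=
  sum_sqrt_eig_congr h _ _

lemma traceNorm_nonneg (A : Matrix m m ℂ) : 0 ≤ traceNorm A :=
  Finset.sum_nonneg fun _ _ => Real.sqrt_nonneg _

lemma trace_sqrt {M : Matrix m m ℂ} (hM : M.PosSemidef) :
    Matrix.trace hM.sqrt = ((∑ i, Real.sqrt (hM.1.eigenvalues i) : ℝ) : ℂ) := by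
  rw [PosSemidef.sqrt_eq_hcfc, IsHermitian.cfc, Unitary.conjStarAlgAut_apply,
    Matrix.trace_mul_cycle, Unitary.coe_star_mul_self, one_mul, trace_diagonal]
  push_cast
  rfl

lemma traceNorm_eq_re_trace (A : Matrix m m ℂ) :
    traceNorm A = (Matrix.trace (posSemidef_conjTranspose_mul_self A).sqrt).re := by
  rw [trace_sqrt]
  simp [traceNorm]

lemma traceNorm_zero : traceNorm (0 : Matrix m m ℂ) = 0 := by
  rw [traceNorm_eq_re_trace]
  have h0 : (0 : Matrix m m ℂ) = (posSemidef_conjTranspose_mul_self (0 : Matrix m m ℂ)).sqrt :=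
    Matrix.PosSemidef.eq_sqrt_of_sq_eq Matrix.PosSemidef.zero _ (by simp)
  rw [← h0]
  simp

lemma traceNorm_neg (A : Matrix m m ℂ) : traceNorm (-A) = traceNorm A :=
  traceNorm_eq_of (by simp)

lemma traceNorm_smul (r : ℝ) (hr : 0 ≤ r) (A : Matrix m m ℂ) :
    traceNorm ((r : ℂ) • A) = r * traceNorm A := by
  have hA := posSemidef_conjTranspose_mul_self A
  have hsq : ((r : ℂ) • hA.sqrt) ^ 2 = ((r : ℂ) • A)ᴴ * ((r : ℂ) • A) := by
    rw [smul_pow, hA.sq_sqrt, conjTranspose_smul, smul_mul, mul_smul_comm, smul_smul]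
    congr 1
    rw [Complex.star_def, Complex.conj_ofReal, sq]
  have hpsd : ((r : ℂ) • hA.sqrt).PosSemidef := by
    have hs := hA.posSemidef_sqrt
    exact hs.smul (Complex.zero_le_real.mpr hr)
  have heq : (r : ℂ) • hA.sqrt = (posSemidef_conjTranspose_mul_self ((r : ℂ) • A)).sqrt :=
    Matrix.PosSemidef.eq_sqrt_of_sq_eq hpsd _ hsq
  rw [traceNorm_eq_re_trace, ← heq, Matrix.trace_smul, traceNorm_eq_re_trace]
  simp [Complex.smul_re]

lemma trace_mul_diag (T : Matrix m m ℂ) (c : m → ℂ) :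
    Matrix.trace (T * diagonal c) = ∑ i, T i i * c i := by
  simp only [Matrix.trace, Matrix.diag, Matrix.mul_apply, Matrix.diagonal_apply, mul_ite, mul_zero]
  simp

lemma psd_diag_nonneg {M : Matrix m m ℂ} (hM : M.PosSemidef) (i : m) : 0 ≤ M i i := by
  exact hM.diag_nonneg

lemma cs_lite {X Y : Matrix m m ℂ} (i : m)
    (hX : ((Xᴴ * X) i i).re ≤ 1) (hY : ((Yᴴ * Y) i i).re ≤ 1) :
    ((Xᴴ * Y) i i).re ≤ 1 := by
  have hent : ∀ Z W : Matrix m m ℂ, (Zᴴ * W) i i = ∑ b, (starRingEnd ℂ) (Z b i) * W b i := by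
    intro Z W
    simp [Matrix.mul_apply, Matrix.conjTranspose_apply]
  have hXd : ((Xᴴ * X) i i).re = ∑ b, Complex.normSq (X b i) := by
    rw [hent, Complex.re_sum]
    refine Finset.sum_congr rfl fun b _ => ?_
    rw [mul_comm, Complex.mul_conj]
    simp
  have hYd : ((Yᴴ * Y) i i).re = ∑ b, Complex.normSq (Y b i) := by
    rw [hent, Complex.re_sum]
    refine Finset.sum_congr rfl fun b _ => ?_
    rw [mul_comm, Complex.mul_conj]
    simp
  have step : ((Xᴴ * Y) i i).re ≤ ∑ b, (Complex.normSq (X b i) + Complex.normSq (Y b i)) / 2 := by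
    rw [hent, Complex.re_sum]
    refine Finset.sum_le_sum fun b _ => ?_
    refine le_trans (Complex.re_le_norm _) ?_
    rw [norm_mul, Complex.norm_conj]
    have h2 : ‖X b i‖ * ‖Y b i‖ ≤
        (‖X b i‖ ^ 2 + ‖Y b i‖ ^ 2) / 2 := by
      nlinarith [sq_nonneg (‖X b i‖ - ‖Y b i‖)]
    simpa [Complex.sq_norm] using h2
  have hsum : (∑ b, (Complex.normSq (X b i) + Complex.normSq (Y b i)) / 2)
      = (((Xᴴ * X) i i).re + ((Yᴴ * Y) i i).re) / 2 := by
    rw [hXd, hYd, ← Finset.sum_div, Finset.sum_add_distrib]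
  rw [hsum] at step
  linarith

lemma exists_dual (A : Matrix m m ℂ) :
    ∃ E : Matrix m m ℂ, (1 - Eᴴ * E).PosSemidef ∧ (Matrix.trace (Eᴴ * A)).re = traceNorm A ∧
      ∀ B : Matrix m m ℂ, (1 - Bᴴ * B).PosSemidef → (Matrix.trace (Bᴴ * A)).re ≤ traceNorm A := by
  classical
  have hA := posSemidef_conjTranspose_mul_self A
  set V : Matrix m m ℂ := (hA.1.eigenvectorUnitary : Matrix m m ℂ) with hVdef
  have hV : Vᴴ * V = 1 := by
    rw [← Matrix.star_eq_conjTranspose]; exact UnitaryGroup.star_mul_self _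
  have hV' : V * Vᴴ = 1 := by
    rw [← Matrix.star_eq_conjTranspose]
    exact (Matrix.mem_unitaryGroup_iff).mp hA.1.eigenvectorUnitary.2
  set lam : m → ℝ := hA.1.eigenvalues with hlamdef
  have hlam : ∀ i, 0 ≤ lam i := hA.eigenvalues_nonneg
  set D : (m → ℝ) → Matrix m m ℂ := fun f => diagonal (fun i => (f i : ℂ)) with hDdef
  have hDmul : ∀ f g : m → ℝ, D f * D g = D (fun i => f i * g i) := by
    intro f g
    simp [hDdef, diagonal_mul_diagonal]
  have hDH : ∀ f : m → ℝ, (D f)ᴴ = D f := by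
    intro f
    have hstar : (star fun i => ((f i : ℝ) : ℂ)) = fun i => ((f i : ℝ) : ℂ) := by
      funext i
      simp
    simp only [hDdef, diagonal_conjTranspose, hstar]
  have hprod : ∀ f g : m → ℝ, (V * D f * Vᴴ) * (V * D g * Vᴴ) = V * D (fun i => f i * g i) * Vᴴ := by
    intro f g
    have h1 : (V * D f * Vᴴ) * (V * D g * Vᴴ) = V * (D f * ((Vᴴ * V) * (D g * Vᴴ))) := by
      simp only [Matrix.mul_assoc]
    rw [h1, hV, Matrix.one_mul, ← Matrix.mul_assoc (D f) (D g) Vᴴ, hDmul, ← Matrix.mul_assoc]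
  have hherm : ∀ f : m → ℝ, (V * D f * Vᴴ)ᴴ = V * D f * Vᴴ := by
    intro f
    simp only [Matrix.conjTranspose_mul, Matrix.conjTranspose_conjTranspose, hDH]
    rw [Matrix.mul_assoc]
  have spec : Aᴴ * A = V * D lam * Vᴴ := by
    rw [← Matrix.star_eq_conjTranspose]
    exact hA.1.spectral_theorem
  set g : m → ℝ := fun i => if lam i = 0 then 0 else (Real.sqrt (lam i))⁻¹ with hgdef
  set ind : m → ℝ := fun i => if lam i = 0 then 0 else 1 with hinddef
  set sqv : m → ℝ := fun i => Real.sqrt (lam i) with hsqdef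
  have hsqrt0 : ∀ i, lam i = 0 → sqv i = 0 := fun i h => by simp [hsqdef, h]
  have hsq_ne : ∀ i, lam i ≠ 0 → Real.sqrt (lam i) ≠ 0 := by
    intro i h hc
    exact h (by rw [← Real.mul_self_sqrt (hlam i), hc, mul_zero])
  set G : Matrix m m ℂ := V * D g * Vᴴ with hGdef
  set E : Matrix m m ℂ := A * G with hEdef
  set S : Matrix m m ℂ := V * D sqv * Vᴴ with hSdef
  set Q : Matrix m m ℂ := V * D ind * Vᴴ with hQdef
  -- E^H E = Q
  have hEHE : Eᴴ * E = Q := by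
    rw [hEdef, Matrix.conjTranspose_mul, hGdef, hherm]
    calc (V * D g * Vᴴ) * Aᴴ * (A * (V * D g * Vᴴ))
        = (V * D g * Vᴴ) * ((Aᴴ * A) * (V * D g * Vᴴ)) := by simp only [Matrix.mul_assoc]
      _ = (V * D g * Vᴴ) * ((V * D lam * Vᴴ) * (V * D g * Vᴴ)) := by rw [spec]
      _ = Q := by
          rw [hprod, hprod, hQdef]
          have hfun : (fun i => g i * (lam i * g i)) = ind := by
            funext i
            by_cases h : lam i = 0
            · simp [hgdef, hinddef, h]
            · have hs : Real.sqrt (lam i) ≠ 0 := hsq_ne i h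
              have hl : lam i = Real.sqrt (lam i) * Real.sqrt (lam i) :=
                (Real.mul_self_sqrt (hlam i)).symm
              simp only [hgdef, hinddef, if_neg h]
              rw [hl]
              field_simp
              rw [Real.sqrt_sq (Real.sqrt_nonneg _)]
          rw [hfun]
  -- contraction
  have hcontr : (1 - Eᴴ * E).PosSemidef := by
    rw [hEHE, hQdef]
    have h1 : (1 : Matrix m m ℂ) - V * D ind * Vᴴ = V * D (fun i => 1 - ind i) * Vᴴ := by
      have : D (fun i => 1 - ind i) = 1 - D ind := by
        ext i j
        simp only [hDdef, Matrix.sub_apply, Matrix.diagonal_apply, Matrix.one_apply]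
        split <;> simp
      rw [this, Matrix.mul_sub, Matrix.mul_one, Matrix.sub_mul, hV']
    rw [h1]
    have hpsd : (D (fun i => 1 - ind i)).PosSemidef := by
      rw [hDdef]
      refine posSemidef_diagonal_iff.mpr fun i => ?_
      by_cases h : lam i = 0 <;> simp [hinddef, h]
    simpa using hpsd.mul_mul_conjTranspose_same V
  -- E * S = A
  have hES : E * S = A := by
    have hgs : (fun i => g i * sqv i) = ind := by
      funext i
      by_cases h : lam i = 0
      · simp [hgdef, hinddef, h, hsqrt0 i h]
      · simp [hgdef, hinddef, hsqdef, h, inv_mul_cancel₀ (hsq_ne i h)]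
    have h1 : E * S = A * Q := by
      rw [hEdef, hGdef, hSdef, Matrix.mul_assoc, hprod, hgs, hQdef]
    rw [h1]
    -- A * Q = A
    have hN : (A * (V * D (fun i => 1 - ind i) * Vᴴ))ᴴ * (A * (V * D (fun i => 1 - ind i) * Vᴴ)) = 0 := by
      rw [Matrix.conjTranspose_mul, hherm]
      calc (V * D (fun i => 1 - ind i) * Vᴴ) * Aᴴ * (A * (V * D (fun i => 1 - ind i) * Vᴴ))
          = (V * D (fun i => 1 - ind i) * Vᴴ) * ((Aᴴ * A) * (V * D (fun i => 1 - ind i) * Vᴴ)) := by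
            simp only [Matrix.mul_assoc]
        _ = (V * D (fun i => 1 - ind i) * Vᴴ) * ((V * D lam * Vᴴ) * (V * D (fun i => 1 - ind i) * Vᴴ)) := by rw [spec]
        _ = V * D (fun i => (1 - ind i) * (lam i * (1 - ind i))) * Vᴴ := by rw [hprod, hprod]
        _ = 0 := by
            have : (fun i => (1 - ind i) * (lam i * (1 - ind i))) = fun _ => (0:ℝ) := by
              funext i
              by_cases h : lam i = 0 <;> simp [hinddef, h]
            rw [this]
            simp [hDdef]
    have hAN : A * (V * D (fun i => 1 - ind i) * Vᴴ) = 0 :=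
      Matrix.conjTranspose_mul_self_eq_zero.mp hN
    have h2 : (1 : Matrix m m ℂ) - Q = V * D (fun i => 1 - ind i) * Vᴴ := by
      have : D (fun i => 1 - ind i) = 1 - D ind := by
        ext i j
        simp only [hDdef, Matrix.sub_apply, Matrix.diagonal_apply, Matrix.one_apply]
        split <;> simp
      rw [this, Matrix.mul_sub, Matrix.mul_one, Matrix.sub_mul, hV', hQdef]
    have h3 : A * ((1 : Matrix m m ℂ) - Q) = 0 := by rw [h2]; exact hAN
    have h4 : A - A * Q = 0 := by rwa [Matrix.mul_sub, Matrix.mul_one] at h3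
    rw [sub_eq_zero] at h4
    exact h4.symm
  -- traceNorm A = ∑ sqv
  have htn : traceNorm A = ∑ i, sqv i := rfl
  -- key bound on diagonal entries
  have key : ∀ B : Matrix m m ℂ, (1 - Bᴴ * B).PosSemidef → ∀ i, (((B * V)ᴴ * (B * V)) i i).re ≤ 1 := by
    intro B hB i
    have hpsd := hB.conjTranspose_mul_mul_same V
    have hd := psd_diag_nonneg hpsd i
    have hexp : (Vᴴ * (1 - Bᴴ * B) * V) i i = 1 - ((B * V)ᴴ * (B * V)) i i := by
      have h1 : Vᴴ * (1 - Bᴴ * B) * V = 1 - (B * V)ᴴ * (B * V) := by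
        rw [Matrix.mul_sub, Matrix.sub_mul, Matrix.mul_one, hV, Matrix.conjTranspose_mul]
        simp only [Matrix.mul_assoc]
      rw [h1, Matrix.sub_apply, Matrix.one_apply_eq]
    rw [hexp] at hd
    have := Complex.le_def.mp hd
    simp only [Complex.zero_re, Complex.sub_re, Complex.one_re] at this
    linarith [this.1]
  -- the trace formula
  have htrace : ∀ B : Matrix m m ℂ,
      Matrix.trace (Bᴴ * A) = ∑ i, ((B * V)ᴴ * (E * V)) i i * (sqv i : ℂ) := by
    intro B
    have h1 : Bᴴ * A = (Bᴴ * E * V * D sqv) * Vᴴ := by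
      rw [← hES, hSdef]
      simp only [Matrix.mul_assoc]
    rw [h1, Matrix.trace_mul_comm, ← Matrix.mul_assoc, ← Matrix.mul_assoc, ← Matrix.mul_assoc]
    rw [trace_mul_diag]
    refine Finset.sum_congr rfl fun i _ => ?_
    congr 1
    have : Vᴴ * Bᴴ * E * V = (B * V)ᴴ * (E * V) := by
      rw [Matrix.conjTranspose_mul]
      simp only [Matrix.mul_assoc]
    rw [this]
  refine ⟨E, hcontr, ?_, ?_⟩
  · -- equality
    rw [htrace E, htn, Complex.re_sum]
    have hT : (E * V)ᴴ * (E * V) = D ind := by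
      have h1 : (E * V)ᴴ * (E * V) = Vᴴ * (Eᴴ * E) * V := by
        rw [Matrix.conjTranspose_mul]
        simp only [Matrix.mul_assoc]
      rw [h1, hEHE, hQdef]
      calc Vᴴ * (V * D ind * Vᴴ) * V = (Vᴴ * V) * D ind * (Vᴴ * V) := by simp only [Matrix.mul_assoc]
        _ = D ind := by rw [hV, Matrix.one_mul, Matrix.mul_one]
    rw [hT]
    refine Finset.sum_congr rfl fun i _ => ?_
    by_cases h : lam i = 0
    · simp [hDdef, Matrix.diagonal_apply_eq, hinddef, h, hsqrt0 i h]
    · simp [hDdef, Matrix.diagonal_apply_eq, hinddef, h]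
  · -- inequality
    intro B hB
    rw [htrace B, htn, Complex.re_sum]
    refine Finset.sum_le_sum fun i _ => ?_
    have h1 : (((B * V)ᴴ * (E * V)) i i * (sqv i : ℂ)).re = (((B * V)ᴴ * (E * V)) i i).re * sqv i := by
      rw [Complex.mul_re]
      simp
    rw [h1]
    have h2 := cs_lite i (key B hB i) (key E hcontr i)
    nlinarith [Real.sqrt_nonneg (lam i), h2]

lemma traceNorm_triangle (A B : Matrix m m ℂ) :
    traceNorm (A + B) ≤ traceNorm A + traceNorm B := by
  obtain ⟨E, hE, heq, -⟩ := exists_dual (A + B)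
  obtain ⟨-, -, -, hA⟩ := exists_dual A
  obtain ⟨-, -, -, hB⟩ := exists_dual B
  have h : Matrix.trace (Eᴴ * (A + B)) = Matrix.trace (Eᴴ * A) + Matrix.trace (Eᴴ * B) := by
    rw [Matrix.mul_add, Matrix.trace_add]
  calc traceNorm (A + B) = (Matrix.trace (Eᴴ * (A + B))).re := heq.symm
    _ = (Matrix.trace (Eᴴ * A)).re + (Matrix.trace (Eᴴ * B)).re := by rw [h, Complex.add_re]
    _ ≤ traceNorm A + traceNorm B := add_le_add (hA E hE) (hB E hE)

section embed
open Matrix Kronecker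
variable {V : Type*} [Fintype V] [DecidableEq V] {d : ℕ}

def setEquiv (A : Finset V) :
    (({w : V // w ∈ A} → Fin d) × ({w : V // w ∉ A} → Fin d)) ≃ (V → Fin d) where
  toFun fu := insertSet A fu.1 fu.2
  invFun s := (fun w => s w, fun w => s w)
  left_inv := by
    rintro ⟨f, u⟩
    refine Prod.ext ?_ ?_ <;> funext w
    · simp [insertSet, w.2]
    · simp [insertSet, w.2]
  right_inv s := by
    funext w
    by_cases h : w ∈ A <;> simp [insertSet, h]

noncomputable def embed (A : Finset V)
    (B : Matrix ({w : V // w ∉ A} → Fin d) ({w : V // w ∉ A} → Fin d) ℂ) :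
    Matrix (V → Fin d) (V → Fin d) ℂ :=
  ((1 : Matrix ({w : V // w ∈ A} → Fin d) ({w : V // w ∈ A} → Fin d) ℂ) ⊗ₖ B).submatrix
    ((setEquiv A).symm) ((setEquiv A).symm)

lemma embed_apply (A : Finset V)
    (B : Matrix ({w : V // w ∉ A} → Fin d) ({w : V // w ∉ A} → Fin d) ℂ) (s t : V → Fin d) :
    embed A B s t = if (fun w : {w : V // w ∈ A} => s w) = (fun w : {w : V // w ∈ A} => t w)
      then B (fun w => s w) (fun w => t w) else 0 := by
  simp only [embed, Matrix.submatrix_apply, Matrix.kroneckerMap_apply, Matrix.one_apply]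
  have h1 : (setEquiv A (d := d)).symm s =
      ((fun w : {w : V // w ∈ A} => s w), (fun w : {w : V // w ∉ A} => s w)) := rfl
  have h2 : (setEquiv A (d := d)).symm t =
      ((fun w : {w : V // w ∈ A} => t w), (fun w : {w : V // w ∉ A} => t w)) := rfl
  rw [h1, h2]
  by_cases h : (fun w : {w : V // w ∈ A} => s w) = (fun w : {w : V // w ∈ A} => t w) <;>
    simp [h]

lemma one_kron_conjT {p q : Type*} [Fintype p] [DecidableEq p] [Fintype q]
    (B : Matrix q q ℂ) : ((1 : Matrix p p ℂ) ⊗ₖ B)ᴴ = 1 ⊗ₖ Bᴴ := by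
  ext ⟨a, b⟩ ⟨c, e⟩
  simp only [Matrix.conjTranspose_apply, Matrix.kroneckerMap_apply, Matrix.one_apply]
  by_cases h : a = c
  · simp [h, eq_comm]
  · simp [h, Ne.symm h]

lemma embed_mul (A : Finset V)
    (B C : Matrix ({w : V // w ∉ A} → Fin d) ({w : V // w ∉ A} → Fin d) ℂ) :
    embed A B * embed A C = embed A (B * C) := by
  rw [embed, embed, embed, Matrix.submatrix_mul_equiv, ← Matrix.mul_kronecker_mul, one_mul]

lemma embed_conjT (A : Finset V)
    (B : Matrix ({w : V // w ∉ A} → Fin d) ({w : V // w ∉ A} → Fin d) ℂ) :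
    (embed A B)ᴴ = embed A Bᴴ := by
  rw [embed, Matrix.conjTranspose_submatrix, one_kron_conjT, embed]

lemma trace_submatrix_equiv' {p q : Type*} [Fintype p] [Fintype q] (M : Matrix q q ℂ)
    (e : p ≃ q) : (M.submatrix e e).trace = M.trace := by
  simp only [Matrix.trace, Matrix.diag, Matrix.submatrix_apply]
  exact Fintype.sum_equiv e _ _ (fun i => rfl)

lemma trace_embed (A : Finset V)
    (B : Matrix ({w : V // w ∉ A} → Fin d) ({w : V // w ∉ A} → Fin d) ℂ) :
    Matrix.trace (embed A B) =
      (Fintype.card ({w : V // w ∈ A} → Fin d) : ℂ) * Matrix.trace B := by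
  rw [embed, trace_submatrix_equiv', Matrix.trace_kronecker, Matrix.trace_one]

lemma embed_psd (A : Finset V)
    {B : Matrix ({w : V // w ∉ A} → Fin d) ({w : V // w ∉ A} → Fin d) ℂ}
    (hB : B.PosSemidef) : (embed A B).PosSemidef := by
  have h1 : (1 : Matrix ({w : V // w ∈ A} → Fin d) ({w : V // w ∈ A} → Fin d) ℂ) ⊗ₖ B =
      ((1 : Matrix ({w : V // w ∈ A} → Fin d) ({w : V // w ∈ A} → Fin d) ℂ) ⊗ₖ hB.sqrt)ᴴ *
      ((1 : Matrix ({w : V // w ∈ A} → Fin d) ({w : V // w ∈ A} → Fin d) ℂ) ⊗ₖ hB.sqrt) := by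
    rw [one_kron_conjT, ← Matrix.mul_kronecker_mul, one_mul, hB.posSemidef_sqrt.1.eq,
      hB.sqrt_mul_self]
  rw [embed, h1]
  exact (Matrix.posSemidef_conjTranspose_mul_self _).submatrix _

lemma traceNorm_embed (A : Finset V)
    (B : Matrix ({w : V // w ∉ A} → Fin d) ({w : V // w ∉ A} → Fin d) ℂ) :
    traceNorm (embed A B) = (Fintype.card ({w : V // w ∈ A} → Fin d) : ℝ) * traceNorm B := by
  have hBps := Matrix.posSemidef_conjTranspose_mul_self B
  have h1 : (embed A B)ᴴ * (embed A B) = embed A (Bᴴ * B) := by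
    rw [embed_conjT, embed_mul]
  have hsq : (embed A hBps.sqrt) ^ 2 = (embed A B)ᴴ * (embed A B) := by
    rw [h1, sq, embed_mul, hBps.sqrt_mul_self]
  have hpsd : (embed A hBps.sqrt).PosSemidef := embed_psd A hBps.posSemidef_sqrt
  have heq : embed A hBps.sqrt = (Matrix.posSemidef_conjTranspose_mul_self (embed A B)).sqrt :=
    Matrix.PosSemidef.eq_sqrt_of_sq_eq hpsd _ hsq
  rw [traceNorm_eq_re_trace, ← heq, trace_embed, traceNorm_eq_re_trace]
  rw [show ((Fintype.card ({w : V // w ∈ A} → Fin d) : ℂ)) =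
    ((Fintype.card ({w : V // w ∈ A} → Fin d) : ℝ) : ℂ) from by norm_cast,
    Complex.re_ofReal_mul]

lemma ptraceSite_smul (v : V) (c : ℂ) (M : Matrix (V → Fin d) (V → Fin d) ℂ) :
    ptraceSite v (c • M) = c • ptraceSite v M := by
  ext s t
  simp [ptraceSite, Finset.mul_sum]

lemma ptraceSite_sub (v : V) (M N : Matrix (V → Fin d) (V → Fin d) ℂ) :
    ptraceSite v (M - N) = ptraceSite v M - ptraceSite v N := by
  ext s t
  simp [ptraceSite, Finset.sum_sub_distrib]

end embed

section main
open Matrix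

def SS (n k : ℕ) : Finset (Fin n) := Finset.univ.filter fun i => (i : ℕ) < k

lemma mem_SS {n k : ℕ} {i : Fin n} : i ∈ SS n k ↔ (i : ℕ) < k := by
  simp [SS]

def ssEquiv {n k : ℕ} (hk : k ≤ n) : {w : Fin n // w ∈ SS n k} ≃ Fin k where
  toFun w := ⟨w.1.1, mem_SS.mp w.2⟩
  invFun j := ⟨⟨j.1, lt_of_lt_of_le j.2 hk⟩, mem_SS.mpr j.2⟩
  left_inv w := rfl
  right_inv j := rfl

lemma card_conf {n k d : ℕ} (hk : k ≤ n) :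
    Fintype.card ({w : Fin n // w ∈ SS n k} → Fin d) = d ^ k := by
  rw [Fintype.card_fun, Fintype.card_fin, Fintype.card_congr (ssEquiv hk), Fintype.card_fin]

def vEquiv {n d : ℕ} (v : Fin n) :
    (Fin d × ({w : Fin n // w ∈ SS n ↑v} → Fin d)) ≃ ({w : Fin n // w ∈ SS n (↑v + 1)} → Fin d) where
  toFun kf w := if h : w.1 ∈ SS n ↑v then kf.2 ⟨w.1, h⟩ else kf.1
  invFun g := (g ⟨v, mem_SS.mpr (Nat.lt_succ_self _)⟩,
               fun w => g ⟨w.1, mem_SS.mpr (Nat.lt_succ_of_lt (mem_SS.mp w.2))⟩)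
  left_inv := by
    rintro ⟨k, f⟩
    refine Prod.ext ?_ ?_
    · show (if h : (v : Fin n) ∈ SS n ↑v then f ⟨v, h⟩ else k) = k
      rw [dif_neg (by simp [mem_SS])]
    · funext w
      show (if h : w.1 ∈ SS n ↑v then f ⟨w.1, h⟩ else k) = f w
      rw [dif_pos w.2]
  right_inv := by
    intro g
    funext w
    by_cases h : w.1 ∈ SS n ↑v
    · show (if h' : w.1 ∈ SS n ↑v then g _ else g _) = g w
      rw [dif_pos h]
    · show (if h' : w.1 ∈ SS n ↑v then g _ else g _) = g w
      rw [dif_neg h]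
      congr 1
      apply Subtype.ext
      apply Fin.ext
      have h1 : (w.1 : ℕ) < ↑v + 1 := mem_SS.mp w.2
      have h2 : ¬ (w.1 : ℕ) < ↑v := fun hc => h (mem_SS.mpr hc)
      simp only []
      omega

def fullEquiv {n d : ℕ} : ({w : Fin n // w ∈ SS n n} → Fin d) ≃ (Fin n → Fin d) where
  toFun f w := f ⟨w, mem_SS.mpr w.2⟩
  invFun s w := s w.1
  left_inv f := rfl
  right_inv s := rfl

end main
end W1aux

open W1aux Matrix

set_option maxHeartbeats 2000000 in
/-- For an `n`-site system, `‖X‖_{W₁} ≤ Σ_{k=0}^{n-1} ‖Tr_{1…k} X‖₁` for every traceless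
self-adjoint `X`, where `Tr_{1…k}` is the partial trace over the first `k` sites. -/
theorem W1norm_le_sum_traceNorm_ptrace (n d : ℕ)
    (X : Matrix (Fin n → Fin d) (Fin n → Fin d) ℂ)
    (hX : X.IsHermitian) (htr : Matrix.trace X = 0) :
    W1norm X ≤ ∑ k ∈ Finset.range n,
      traceNorm (ptraceSet (Finset.univ.filter fun i : Fin n => (i : ℕ) < k) X) := by
  classical
  show W1norm X ≤ ∑ k ∈ Finset.range n, traceNorm (ptraceSet (SS n k) X)
  set P : ℕ → Matrix (Fin n → Fin d) (Fin n → Fin d) ℂ :=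
    fun k => ((d : ℂ) ^ k)⁻¹ • embed (SS n k) (ptraceSet (SS n k) X) with hP
  -- (1) P 0 = X
  haveI hie : IsEmpty {w : Fin n // w ∈ SS n 0} :=
    ⟨fun w => by have := mem_SS.mp w.2; omega⟩
  have hnm0 : ∀ w : Fin n, w ∉ SS n 0 := fun w hc => by have := mem_SS.mp hc; omega
  have hP0 : P 0 = X := by
    ext s t
    simp only [hP, pow_zero, inv_one, one_smul]
    rw [embed_apply, if_pos (funext fun w => isEmptyElim w)]
    show (∑ f : {w : Fin n // w ∈ SS n 0} → Fin d,
      X (insertSet (SS n 0) f fun w => s w.1) (insertSet (SS n 0) f fun w => t w.1)) = X s t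
    rw [Fintype.sum_unique]
    congr 1 <;> funext w <;> simp [insertSet, hnm0 w]
  -- (2) P n = 0
  have hPnz : P n = 0 := by
    have hembed : embed (SS n n) (ptraceSet (SS n n) X) = 0 := by
      ext s t
      rw [embed_apply]
      have hval : ∀ u u' : {w : Fin n // w ∉ SS n n} → Fin d,
          ptraceSet (SS n n) X u u' = 0 := by
        intro u u'
        have h1 : ∀ (f : {w : Fin n // w ∈ SS n n} → Fin d) (u : {w : Fin n // w ∉ SS n n} → Fin d),
            insertSet (SS n n) f u = fullEquiv f := by
          intro f u
          funext w
          simp [insertSet, fullEquiv, mem_SS.mpr w.2]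
        show (∑ f : {w : Fin n // w ∈ SS n n} → Fin d,
            X (insertSet (SS n n) f u) (insertSet (SS n n) f u')) = 0
        calc (∑ f : {w : Fin n // w ∈ SS n n} → Fin d,
              X (insertSet (SS n n) f u) (insertSet (SS n n) f u'))
            = ∑ f : {w : Fin n // w ∈ SS n n} → Fin d, X (fullEquiv f) (fullEquiv f) := by
              refine Finset.sum_congr rfl fun f _ => by rw [h1 f u, h1 f u']
          _ = ∑ s' : Fin n → Fin d, X s' s' :=
              Fintype.sum_equiv fullEquiv _ _ (fun f => rfl)
          _ = Matrix.trace X := rfl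
          _ = 0 := htr
      split <;> simp [hval]
    simp only [hP, hembed, smul_zero]
  -- (3) peel
  have peel : ∀ v : Fin n, ptraceSite v (P ↑v) = ptraceSite v (P (↑v + 1)) := by
    intro v
    rcases Nat.eq_zero_or_pos d with hd | hd
    · subst hd
      ext s t
      simp [ptraceSite]
    have hd' : (d : ℂ) ≠ 0 := Nat.cast_ne_zero.mpr hd.ne'
    simp only [hP, ptraceSite_smul]
    ext s t
    simp only [Matrix.smul_apply, smul_eq_mul, ptraceSite, Matrix.of_apply]
    have hne : ∀ w : Fin n, (w : ℕ) < ↑v → w ≠ v := by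
      intro w hw he
      subst he; omega
    have hnotmem : ∀ w : {w : Fin n // w ∉ SS n (↑v + 1)}, w.1 ≠ v := by
      intro w he
      exact w.2 (mem_SS.mpr (by rw [he]; omega))
    have hcondB : ∀ k : Fin d,
        ((fun w : {w : Fin n // w ∈ SS n ↑v} => insertAt v k s w.1)
          = fun w : {w : Fin n // w ∈ SS n ↑v} => insertAt v k t w.1)
        ↔ ∀ w : {w : Fin n // w ≠ v}, ((w.1 : ℕ) < ↑v) → s w = t w := by
      intro k
      constructor
      · intro h w hw
        have hmem : w.1 ∈ SS n ↑v := mem_SS.mpr hw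
        have h2 := congrFun h ⟨w.1, hmem⟩
        simpa [insertAt, w.2] using h2
      · intro h
        funext w
        have hw : (w.1 : ℕ) < ↑v := mem_SS.mp w.2
        have hne' : w.1 ≠ v := hne _ hw
        simp only [insertAt, dif_neg hne']
        exact h ⟨w.1, hne'⟩ hw
    have hcondA : ∀ k : Fin d,
        ((fun w : {w : Fin n // w ∈ SS n (↑v + 1)} => insertAt v k s w.1)
          = fun w : {w : Fin n // w ∈ SS n (↑v + 1)} => insertAt v k t w.1)
        ↔ ∀ w : {w : Fin n // w ≠ v}, ((w.1 : ℕ) < ↑v) → s w = t w := by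
      intro k
      constructor
      · intro h w hw
        have hmem : w.1 ∈ SS n (↑v + 1) := mem_SS.mpr (Nat.lt_succ_of_lt hw)
        have h2 := congrFun h ⟨w.1, hmem⟩
        simpa [insertAt, w.2] using h2
      · intro h
        funext w
        by_cases hv : w.1 = v
        · simp [insertAt, hv]
        · have hw : (w.1 : ℕ) < ↑v + 1 := mem_SS.mp w.2
          have hwlt : (w.1 : ℕ) < ↑v := by
            have : (w.1 : ℕ) ≠ (v : ℕ) := fun hc => hv (Fin.ext hc)
            omega
          simp only [insertAt, dif_neg hv]
          exact h ⟨w.1, hv⟩ hwlt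
    by_cases hC : ∀ w : {w : Fin n // w ≠ v}, ((w.1 : ℕ) < ↑v) → s w = t w
    · -- both sides nonzero
      have htermA : ∀ k : Fin d,
          embed (SS n (↑v + 1)) (ptraceSet (SS n (↑v + 1)) X) (insertAt v k s) (insertAt v k t)
          = ptraceSet (SS n (↑v + 1)) X (fun w => s ⟨w.1, hnotmem w⟩)
              (fun w => t ⟨w.1, hnotmem w⟩) := by
        intro k
        rw [embed_apply, if_pos ((hcondA k).mpr hC)]
        congr 1 <;> funext w <;> simp only [insertAt, dif_neg (hnotmem w)]
      have htermB : ∀ k : Fin d,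
          embed (SS n ↑v) (ptraceSet (SS n ↑v) X) (insertAt v k s) (insertAt v k t)
          = ptraceSet (SS n ↑v) X (fun w => insertAt v k s w.1)
              (fun w => insertAt v k t w.1) := by
        intro k
        rw [embed_apply, if_pos ((hcondB k).mpr hC)]
      have hkey : (∑ k : Fin d, ptraceSet (SS n ↑v) X (fun w => insertAt v k s w.1)
            (fun w => insertAt v k t w.1))
          = ptraceSet (SS n (↑v + 1)) X (fun w => s ⟨w.1, hnotmem w⟩)
              (fun w => t ⟨w.1, hnotmem w⟩) := by
        have hpoint : ∀ (k : Fin d) (f : {w : Fin n // w ∈ SS n ↑v} → Fin d)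
            (z : {w : Fin n // w ≠ v} → Fin d),
            insertSet (SS n ↑v) f (fun w => insertAt v k z w.1)
              = insertSet (SS n (↑v + 1)) (vEquiv v (k, f))
                  (fun w => z ⟨w.1, hnotmem w⟩) := by
          intro k f z
          funext w
          by_cases h1 : w ∈ SS n ↑v
          · have h2 : w ∈ SS n (↑v + 1) := mem_SS.mpr (Nat.lt_succ_of_lt (mem_SS.mp h1))
            simp only [insertSet, dif_pos h1, dif_pos h2]
            show f _ = (if h : w ∈ SS n ↑v then f ⟨w, h⟩ else k)
            rw [dif_pos h1]
          · by_cases h2 : w = v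
            · subst h2
              have h3 : w ∈ SS n (↑w + 1) := mem_SS.mpr (Nat.lt_succ_self _)
              simp only [insertSet, dif_neg h1, dif_pos h3]
              show insertAt w k z w = (if h : w ∈ SS n ↑w then f ⟨w, h⟩ else k)
              rw [dif_neg h1]
              simp [insertAt]
            · have h3 : w ∉ SS n (↑v + 1) := by
                intro hc
                have hlt := mem_SS.mp hc
                have hne1 : (w : ℕ) ≠ (v : ℕ) := fun hc' => h2 (Fin.ext hc')
                have hne2 : ¬ (w : ℕ) < ↑v := fun hc' => h1 (mem_SS.mpr hc')
                omega
              simp only [insertSet, dif_neg h1, dif_neg h3]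
              simp [insertAt, h2]
        show (∑ k : Fin d, ∑ f : {w : Fin n // w ∈ SS n ↑v} → Fin d,
            X (insertSet (SS n ↑v) f fun w => insertAt v k s w.1)
              (insertSet (SS n ↑v) f fun w => insertAt v k t w.1))
          = ∑ g : {w : Fin n // w ∈ SS n (↑v + 1)} → Fin d,
              X (insertSet (SS n (↑v + 1)) g fun w => s ⟨w.1, hnotmem w⟩)
                (insertSet (SS n (↑v + 1)) g fun w => t ⟨w.1, hnotmem w⟩)
        rw [← Fintype.sum_prod_type']
        refine Fintype.sum_equiv (vEquiv v) _ _ ?_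
        rintro ⟨k, f⟩
        rw [hpoint k f s, hpoint k f t]
      rw [Finset.sum_congr rfl (fun k _ => htermA k), Finset.sum_congr rfl
        (fun k _ => htermB k), hkey, Finset.sum_const, Finset.card_univ, Fintype.card_fin,
        nsmul_eq_mul, pow_succ]
      field_simp
    · -- condition fails: both sides zero
      have hzA : ∀ k : Fin d,
          embed (SS n (↑v + 1)) (ptraceSet (SS n (↑v + 1)) X) (insertAt v k s) (insertAt v k t)
          = 0 := by
        intro k
        rw [embed_apply, if_neg (fun h => hC ((hcondA k).mp h))]
      have hzB : ∀ k : Fin d,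
          embed (SS n ↑v) (ptraceSet (SS n ↑v) X) (insertAt v k s) (insertAt v k t) = 0 := by
        intro k
        rw [embed_apply, if_neg (fun h => hC ((hcondB k).mp h))]
      rw [Finset.sum_congr rfl (fun k _ => hzA k), Finset.sum_congr rfl (fun k _ => hzB k)]
      simp
  -- (4) norm bounds
  have hnorm : ∀ k : ℕ, k ≤ n → traceNorm (P k) ≤ traceNorm (ptraceSet (SS n k) X) := by
    intro k hk
    have hr : ((d : ℂ) ^ k)⁻¹ = ((((d : ℝ) ^ k)⁻¹ : ℝ) : ℂ) := by push_cast; rfl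
    have h2 : traceNorm (P k)
        = ((d : ℝ) ^ k)⁻¹ * ((Fintype.card ({w : Fin n // w ∈ SS n k} → Fin d) : ℝ)
            * traceNorm (ptraceSet (SS n k) X)) := by
      show traceNorm (((d : ℂ) ^ k)⁻¹ • embed (SS n k) (ptraceSet (SS n k) X)) = _
      rw [hr, traceNorm_smul _ (by positivity), traceNorm_embed]
    rw [h2, card_conf hk, ← mul_assoc]
    have h1 : ((d : ℝ) ^ k)⁻¹ * ((d ^ k : ℕ) : ℝ) ≤ 1 := by
      push_cast
      rcases eq_or_ne ((d : ℝ) ^ k) 0 with h | h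
      · simp [h]
      · rw [inv_mul_cancel₀ h]
    exact mul_le_of_le_one_left (traceNorm_nonneg _) h1
  have hPtn0 : traceNorm (P n) = 0 := by rw [hPnz]; exact traceNorm_zero
  -- (5) assemble
  have hsumX : X = ∑ v : Fin n, (P ↑v - P (↑v + 1)) := by
    rw [Fin.sum_univ_eq_sum_range (fun k => P k - P (k + 1)), Finset.sum_range_sub',
      hP0, hPnz, sub_zero]
  have hptr : ∀ v : Fin n, ptraceSite v (P ↑v - P (↑v + 1)) = 0 := by
    intro v
    rw [ptraceSite_sub, peel v, sub_self]
  have hbdd : BddBelow { r : ℝ | ∃ Y : Fin n → Matrix (Fin n → Fin d) (Fin n → Fin d) ℂ,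
      X = ∑ v, Y v ∧ (∀ v, ptraceSite v (Y v) = 0) ∧
        r = (1 / 2) * ∑ v, traceNorm (Y v) } := by
    refine ⟨0, ?_⟩
    rintro r ⟨Y', -, -, rfl⟩
    have : (0:ℝ) ≤ ∑ v, traceNorm (Y' v) :=
      Finset.sum_nonneg fun v _ => traceNorm_nonneg _
    linarith
  have hmem : ((1 / 2) * ∑ v : Fin n, traceNorm (P ↑v - P (↑v + 1)) : ℝ) ∈
      { r : ℝ | ∃ Y : Fin n → Matrix (Fin n → Fin d) (Fin n → Fin d) ℂ,
      X = ∑ v, Y v ∧ (∀ v, ptraceSite v (Y v) = 0) ∧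
        r = (1 / 2) * ∑ v, traceNorm (Y v) } :=
    ⟨fun v => P ↑v - P (↑v + 1), hsumX, hptr, rfl⟩
  have h1 : W1norm X ≤ (1 / 2) * ∑ v : Fin n, traceNorm (P ↑v - P (↑v + 1)) :=
    csInf_le hbdd hmem
  refine h1.trans ?_
  have htri : ∀ k : ℕ, traceNorm (P k - P (k + 1))
      ≤ traceNorm (P k) + traceNorm (P (k + 1)) := by
    intro k
    have h := traceNorm_triangle (P k) (-(P (k + 1)))
    simpa [sub_eq_add_neg, traceNorm_neg] using h
  have hsplit : ∑ v : Fin n, traceNorm (P ↑v - P (↑v + 1))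
      ≤ (∑ k ∈ Finset.range n, traceNorm (P k))
        + ∑ k ∈ Finset.range n, traceNorm (P (k + 1)) := by
    rw [Fin.sum_univ_eq_sum_range (fun k => traceNorm (P k - P (k + 1))),
      ← Finset.sum_add_distrib]
    exact Finset.sum_le_sum fun k _ => htri k
  have hshift : ∑ k ∈ Finset.range n, traceNorm (P (k + 1))
      ≤ ∑ k ∈ Finset.range n, traceNorm (P k) := by
    have e1 : ∑ k ∈ Finset.range (n + 1), traceNorm (P k)
        = (∑ k ∈ Finset.range n, traceNorm (P (k + 1))) + traceNorm (P 0) :=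
      Finset.sum_range_succ' _ n
    have e2 : ∑ k ∈ Finset.range (n + 1), traceNorm (P k)
        = (∑ k ∈ Finset.range n, traceNorm (P k)) + traceNorm (P n) :=
      Finset.sum_range_succ _ n
    have h0 := traceNorm_nonneg (P 0)
    rw [hPtn0] at e2
    linarith
  have hfin : ∑ k ∈ Finset.range n, traceNorm (P k)
      ≤ ∑ k ∈ Finset.range n, traceNorm (ptraceSet (SS n k) X) :=
    Finset.sum_le_sum fun k hk => hnorm k (le_of_lt (Finset.mem_range.mp hk))
  linarith
end

section
/- For any traceless self-adjoint operator X on an n-qudit system and any subset A of sites, ‖X‖_{W₁} ≤ |A|·‖X‖₁ + ‖Tr_A X‖_{W₁}. -/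
open scoped ComplexOrder

set_option linter.unusedSectionVars false
set_option linter.unusedVariables false
set_option maxHeartbeats 1000000

namespace QW1

open Matrix Complex

variable {m : Type*} [Fintype m] [DecidableEq m]

noncomputable def ev (x : m → ℂ) : EuclideanSpace ℂ m := (WithLp.equiv 2 (m → ℂ)).symm x

lemma ev_apply (x : m → ℂ) (i : m) : ev x i = x i := rfl

lemma toEuclideanLin_ev (M : Matrix m m ℂ) (x : m → ℂ) :
    Matrix.toEuclideanLin M (ev x) = ev (M *ᵥ x) :=
  Matrix.toEuclideanLin_apply_piLp_toLp M x

lemma inner_ev (x y : m → ℂ) :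
    (inner ℂ (ev x) (ev y) : ℂ) = ∑ i, (starRingEnd ℂ) (x i) * y i := by
  simp [PiLp.inner_apply, RCLike.inner_apply, ev_apply, mul_comm]

lemma norm_ev_sq (x : m → ℂ) : ‖ev x‖ ^ 2 = ∑ i, ‖x i‖ ^ 2 := by
  rw [EuclideanSpace.norm_eq, Real.sq_sqrt (by positivity)]
  simp [ev_apply]

lemma norm_ev_le {x y : m → ℂ} (h : ∑ i, ‖x i‖ ^ 2 ≤ ∑ i, ‖y i‖ ^ 2) :
    ‖ev x‖ ≤ ‖ev y‖ := by
  rw [EuclideanSpace.norm_eq, EuclideanSpace.norm_eq]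
  exact Real.sqrt_le_sqrt h

/-- `M` is a contraction in the `ℓ²`-operator sense. -/
def opc (M : Matrix m m ℂ) : Prop := ∀ x : m → ℂ, ‖ev (M *ᵥ x)‖ ≤ ‖ev x‖

lemma opc_mul {M N : Matrix m m ℂ} (hM : opc M) (hN : opc N) : opc (M * N) := fun x => by
  rw [← Matrix.mulVec_mulVec]
  exact (hM _).trans (hN x)

lemma inner_swap (M : Matrix m m ℂ) (x y : m → ℂ) :
    (inner ℂ (ev x) (ev (M *ᵥ y)) : ℂ) = inner ℂ (ev (Mᴴ *ᵥ x)) (ev y) := by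
  rw [← toEuclideanLin_ev, ← toEuclideanLin_ev,
    Matrix.toEuclideanLin_conjTranspose_eq_adjoint, LinearMap.adjoint_inner_left]

lemma norm_ev_mulVec_sq (M : Matrix m m ℂ) (x : m → ℂ) :
    ‖ev (M *ᵥ x)‖ ^ 2 = (inner ℂ (ev x) (ev ((Mᴴ * M) *ᵥ x)) : ℂ).re := by
  have h : (inner ℂ (ev x) (ev ((Mᴴ * M) *ᵥ x)) : ℂ)
      = inner ℂ (ev (M *ᵥ x)) (ev (M *ᵥ x)) := by
    rw [← Matrix.mulVec_mulVec, inner_swap, Matrix.conjTranspose_conjTranspose]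
  rw [h, ← @inner_self_eq_norm_sq ℂ, RCLike.re_to_complex]

lemma opc_conjTranspose {M : Matrix m m ℂ} (hM : opc M) : opc Mᴴ := by
  intro x
  rcases eq_or_lt_of_le (norm_nonneg (ev (Mᴴ *ᵥ x))) with h0 | h0
  · rw [← h0]; exact norm_nonneg _
  have h1 : ‖ev (Mᴴ *ᵥ x)‖ ^ 2 ≤ ‖ev x‖ * ‖ev (Mᴴ *ᵥ x)‖ := by
    rw [← @inner_self_eq_norm_sq ℂ]
    have h2 : (inner ℂ (ev (Mᴴ *ᵥ x)) (ev (Mᴴ *ᵥ x)) : ℂ)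
        = inner ℂ (ev x) (ev (M *ᵥ (Mᴴ *ᵥ x))) := by
      rw [inner_swap M x (Mᴴ *ᵥ x)]
    rw [RCLike.re_to_complex]
    calc (inner ℂ (ev (Mᴴ *ᵥ x)) (ev (Mᴴ *ᵥ x)) : ℂ).re
        ≤ ‖(inner ℂ (ev x) (ev (M *ᵥ (Mᴴ *ᵥ x))) : ℂ)‖ := by
          rw [h2]; exact Complex.re_le_norm _
      _ ≤ ‖ev x‖ * ‖ev (M *ᵥ (Mᴴ *ᵥ x))‖ := norm_inner_le_norm _ _
      _ ≤ ‖ev x‖ * ‖ev (Mᴴ *ᵥ x)‖ :=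
          mul_le_mul_of_nonneg_left (hM _) (norm_nonneg _)
  nlinarith [h1]

lemma unitary_norm_ev {U : Matrix m m ℂ} (hU : Uᴴ * U = 1) (x : m → ℂ) :
    ‖ev (U *ᵥ x)‖ = ‖ev x‖ := by
  have h : ‖ev (U *ᵥ x)‖ ^ 2 = ‖ev x‖ ^ 2 := by
    rw [norm_ev_mulVec_sq, hU, Matrix.one_mulVec, ← @inner_self_eq_norm_sq ℂ,
      RCLike.re_to_complex]
  have := norm_nonneg (ev (U *ᵥ x)); have := norm_nonneg (ev x)
  nlinarith


/-- A matrix of the form `U * diagonal g * Uᴴ` with `0 ≤ g ≤ 1` real is a contraction. -/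
lemma opc_conj_diag {U : Matrix m m ℂ} (hU : Uᴴ * U = 1) (hU' : U * Uᴴ = 1)
    {g : m → ℝ} (hg0 : ∀ i, 0 ≤ g i) (hg1 : ∀ i, g i ≤ 1) {M : Matrix m m ℂ}
    (hM : Mᴴ * M = U * Matrix.diagonal (fun i => (g i : ℂ)) * Uᴴ) : opc M := by
  intro x
  have key : ‖ev (M *ᵥ x)‖ ^ 2 ≤ ‖ev x‖ ^ 2 := by
    rw [norm_ev_mulVec_sq, hM]
    have h1 : (U * Matrix.diagonal (fun i => (g i : ℂ)) * Uᴴ) *ᵥ x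
        = U *ᵥ (Matrix.diagonal (fun i => (g i : ℂ)) *ᵥ (Uᴴ *ᵥ x)) := by
      rw [Matrix.mulVec_mulVec, Matrix.mulVec_mulVec]
    rw [h1, inner_swap]
    set y := Uᴴ *ᵥ x with hy
    have h2 : (inner ℂ (ev y) (ev (Matrix.diagonal (fun i => (g i : ℂ)) *ᵥ y)) : ℂ).re
        = ∑ i, g i * Complex.normSq (y i) := by
      rw [inner_ev]
      rw [Complex.re_sum]
      congr 1; ext i
      rw [Matrix.mulVec_diagonal]
      have : (starRingEnd ℂ) (y i) * ((g i : ℂ) * y i)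
          = (g i : ℂ) * ((starRingEnd ℂ) (y i) * y i) := by ring
      rw [this, ← Complex.normSq_eq_conj_mul_self, ← Complex.ofReal_mul, Complex.ofReal_re]
    rw [h2]
    have h3 : ∑ i, g i * Complex.normSq (y i) ≤ ∑ i, Complex.normSq (y i) := by
      apply Finset.sum_le_sum
      intro i _
      have := Complex.normSq_nonneg (y i)
      nlinarith [hg0 i, hg1 i]
    have h4 : ∑ i, Complex.normSq (y i) = ‖ev y‖ ^ 2 := by
      rw [norm_ev_sq]
      congr 1; ext i
      rw [Complex.sq_norm]
    have h5 : ‖ev y‖ = ‖ev x‖ := by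
      have hUc : (Uᴴ)ᴴ * Uᴴ = 1 := by rw [Matrix.conjTranspose_conjTranspose, hU']
      exact unitary_norm_ev hUc x
    calc ∑ i, g i * Complex.normSq (y i) ≤ ∑ i, Complex.normSq (y i) := h3
      _ = ‖ev y‖ ^ 2 := h4
      _ = ‖ev x‖ ^ 2 := by rw [h5]
  have h5 := norm_nonneg (ev (M *ᵥ x)); have h6 := norm_nonneg (ev x)
  nlinarith


lemma diag_entry_norm_le {U M : Matrix m m ℂ} (hU : Uᴴ * U = 1) (hM : opc M) (i : m) :
    ‖(Uᴴ * M * U) i i‖ ≤ 1 := by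
  set u : m → ℂ := fun j => U j i with hu
  have hcol : (Uᴴ * M * U) i i = inner ℂ (ev u) (ev (M *ᵥ u)) := by
    rw [inner_ev]
    simp only [Matrix.mul_apply, Matrix.conjTranspose_apply, Matrix.mulVec,
      dotProduct, Finset.sum_mul, Finset.mul_sum]
    rw [Finset.sum_comm]
    apply Finset.sum_congr rfl; intro j _
    apply Finset.sum_congr rfl; intro k _
    simp only [hu, Complex.star_def]
    ring
  have hnu : ‖ev u‖ = 1 := by
    have h1 : ‖ev u‖ ^ 2 = 1 := by
      rw [norm_ev_sq]
      have h2 : (Uᴴ * U) i i = 1 := by rw [hU]; simp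
      rw [Matrix.mul_apply] at h2
      have h4 : ∀ j, (Uᴴ) i j * U j i = ((‖u j‖ ^ 2 : ℝ) : ℂ) := fun j => by
        rw [Matrix.conjTranspose_apply, Complex.star_def, ← Complex.normSq_eq_conj_mul_self,
          Complex.normSq_eq_norm_sq]
      rw [Finset.sum_congr rfl (fun j _ => h4 j), ← Complex.ofReal_sum] at h2
      exact_mod_cast h2
    nlinarith [norm_nonneg (ev u)]
  rw [hcol]
  calc ‖(inner ℂ (ev u) (ev (M *ᵥ u)) : ℂ)‖ ≤ ‖ev u‖ * ‖ev (M *ᵥ u)‖ := norm_inner_le_norm _ _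
    _ ≤ ‖ev u‖ * ‖ev u‖ := mul_le_mul_of_nonneg_left (hM u) (norm_nonneg _)
    _ = 1 := by rw [hnu]; ring

lemma trace_diagonal_mul (g : m → ℂ) (M : Matrix m m ℂ) :
    Matrix.trace (Matrix.diagonal g * M) = ∑ i, g i * M i i := by
  simp [Matrix.trace, Matrix.diag, Matrix.diagonal_mul]

namespace TN
variable (A : Matrix m m ℂ)

noncomputable def U : Matrix m m ℂ :=
  ((Matrix.posSemidef_conjTranspose_mul_self A).1.eigenvectorUnitary : Matrix m m ℂ)

noncomputable def ei : m → ℝ := (Matrix.posSemidef_conjTranspose_mul_self A).1.eigenvalues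

noncomputable def ind : m → ℝ := fun i => if ei A i = 0 then 0 else 1

noncomputable def fin : m → ℝ := fun i => if ei A i = 0 then 0 else (Real.sqrt (ei A i))⁻¹

noncomputable def W : Matrix m m ℂ :=
  A * U A * Matrix.diagonal (fun i => (fin A i : ℂ)) * (U A)ᴴ

noncomputable def S : Matrix m m ℂ :=
  U A * Matrix.diagonal (fun i => (Real.sqrt (ei A i) : ℂ)) * (U A)ᴴ

lemma hU : (U A)ᴴ * U A = 1 := by
  rw [← Matrix.star_eq_conjTranspose]
  exact (Matrix.mem_unitaryGroup_iff').mp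
    ((Matrix.posSemidef_conjTranspose_mul_self A).1.eigenvectorUnitary).2

lemma hU' : U A * (U A)ᴴ = 1 := by
  rw [← Matrix.star_eq_conjTranspose]
  exact (Matrix.mem_unitaryGroup_iff).mp
    ((Matrix.posSemidef_conjTranspose_mul_self A).1.eigenvectorUnitary).2

lemma hei (i : m) : 0 ≤ ei A i :=
  (Matrix.posSemidef_conjTranspose_mul_self A).eigenvalues_nonneg i

lemma hdiag : (U A)ᴴ * (Aᴴ * A) * U A = Matrix.diagonal (fun i => (ei A i : ℂ)) := by
  have hs := (Matrix.posSemidef_conjTranspose_mul_self A).1.spectral_theorem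
  conv_lhs => rw [hs, Unitary.conjStarAlgAut_apply]
  show (U A)ᴴ * (U A * _ * star (U A)) * U A = _
  rw [Matrix.star_eq_conjTranspose]
  calc _ = ((U A)ᴴ * U A) * Matrix.diagonal _ * ((U A)ᴴ * U A) := by noncomm_ring
    _ = _ := by rw [hU A, Matrix.one_mul, Matrix.mul_one]; rfl

lemma hAU : (A * U A)ᴴ * (A * U A) = Matrix.diagonal (fun i => (ei A i : ℂ)) := by
  rw [Matrix.conjTranspose_mul, ← hdiag A]
  noncomm_ring

lemma col0 {i : m} (h : ei A i = 0) (s : m) : (A * U A) s i = 0 := by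
  have h1 : ((A * U A)ᴴ * (A * U A)) i i = 0 := by
    rw [hAU A, Matrix.diagonal_apply_eq, h, Complex.ofReal_zero]
  rw [Matrix.mul_apply] at h1
  have h2 : ∀ j, ((A * U A)ᴴ) i j * (A * U A) j i = (Complex.normSq ((A * U A) j i) : ℂ) := by
    intro j
    rw [Matrix.conjTranspose_apply, Complex.star_def, ← Complex.normSq_eq_conj_mul_self]
  rw [Finset.sum_congr rfl (fun j _ => h2 j), ← Complex.ofReal_sum] at h1
  have h3 : ∑ j, Complex.normSq ((A * U A) j i) = 0 := Complex.ofReal_eq_zero.mp h1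
  have h4 := Finset.sum_eq_zero_iff_of_nonneg
    (fun j _ => Complex.normSq_nonneg ((A * U A) j i)) |>.mp h3 s (Finset.mem_univ s)
  exact Complex.normSq_eq_zero.mp h4

lemma AUind : A * U A * Matrix.diagonal (fun i => (ind A i : ℂ)) = A * U A := by
  ext s i
  rw [Matrix.mul_diagonal]
  by_cases h : ei A i = 0
  · rw [col0 A h s]; ring
  · simp [ind, h]

lemma polar : W A * S A = A := by
  have key : W A * S A
      = A * U A * (Matrix.diagonal (fun i => (fin A i : ℂ))
        * ((U A)ᴴ * U A) * Matrix.diagonal (fun i => (Real.sqrt (ei A i) : ℂ))) * (U A)ᴴ := by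
    unfold W S; noncomm_ring
  have h2 : (fun i => (fin A i : ℂ) * (Real.sqrt (ei A i) : ℂ)) = fun i => ((ind A i : ℂ)) := by
    ext i
    by_cases h : ei A i = 0
    · simp [fin, ind, h]
    · have hpos : 0 < Real.sqrt (ei A i) := Real.sqrt_pos.mpr (lt_of_le_of_ne (hei A i) (Ne.symm h))
      rw [show fin A i = (Real.sqrt (ei A i))⁻¹ by simp [fin, h],
        show ind A i = 1 by simp [ind, h], ← Complex.ofReal_mul,
        inv_mul_cancel₀ (ne_of_gt hpos), Complex.ofReal_one]
  rw [key, hU A, Matrix.mul_one, Matrix.diagonal_mul_diagonal, h2, AUind A,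
    Matrix.mul_assoc, hU' A, Matrix.mul_one]

lemma WcW : (W A)ᴴ * W A = U A * Matrix.diagonal (fun i => (ind A i : ℂ)) * (U A)ᴴ := by
  have hWc : (W A)ᴴ = U A * Matrix.diagonal (fun i => (fin A i : ℂ)) * (U A)ᴴ * Aᴴ := by
    unfold W
    rw [Matrix.conjTranspose_mul, Matrix.conjTranspose_mul, Matrix.conjTranspose_mul,
      Matrix.conjTranspose_conjTranspose, Matrix.diagonal_conjTranspose]
    have : (star fun i => (fin A i : ℂ)) = fun i => (fin A i : ℂ) := by
      ext i; simp [Pi.star_apply, Complex.star_def, Complex.conj_ofReal]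
    rw [this]
    noncomm_ring
  have key : (W A)ᴴ * W A = U A * (Matrix.diagonal (fun i => (fin A i : ℂ))
      * ((U A)ᴴ * (Aᴴ * A) * U A) * Matrix.diagonal (fun i => (fin A i : ℂ))) * (U A)ᴴ := by
    rw [hWc]; unfold W; noncomm_ring
  have h3 : (fun i => (fin A i : ℂ) * (ei A i : ℂ) * (fin A i : ℂ))
      = fun i => ((ind A i : ℂ)) := by
    ext i
    by_cases h : ei A i = 0
    · simp [fin, ind, h]
    · have hpos : 0 < ei A i := lt_of_le_of_ne (hei A i) (Ne.symm h)
      rw [show fin A i = (Real.sqrt (ei A i))⁻¹ by simp [fin, h],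
        show ind A i = 1 by simp [ind, h], ← Complex.ofReal_mul, ← Complex.ofReal_mul,
        show (Real.sqrt (ei A i))⁻¹ * ei A i * (Real.sqrt (ei A i))⁻¹
          = ei A i / (Real.sqrt (ei A i) * Real.sqrt (ei A i)) by ring,
        Real.mul_self_sqrt (hei A i), div_self (ne_of_gt hpos), Complex.ofReal_one]
  rw [key, hdiag A, Matrix.diagonal_mul_diagonal, Matrix.diagonal_mul_diagonal, h3]

lemma opc_W : opc (W A) := by
  apply opc_conj_diag (hU A) (hU' A) (g := ind A)
  · intro i; by_cases h : ei A i = 0 <;> simp [ind, h]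
  · intro i; by_cases h : ei A i = 0 <;> simp [ind, h]
  · exact WcW A

lemma trace_A_Wc : Matrix.trace (A * (W A)ᴴ) = (traceNorm A : ℂ) := by
  have hWc : (W A)ᴴ = U A * Matrix.diagonal (fun i => (fin A i : ℂ)) * (U A)ᴴ * Aᴴ := by
    unfold W
    rw [Matrix.conjTranspose_mul, Matrix.conjTranspose_mul, Matrix.conjTranspose_mul,
      Matrix.conjTranspose_conjTranspose, Matrix.diagonal_conjTranspose]
    have : (star fun i => (fin A i : ℂ)) = fun i => (fin A i : ℂ) := by
      ext i; simp [Pi.star_apply, Complex.star_def, Complex.conj_ofReal]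
    rw [this]
    noncomm_ring
  rw [Matrix.trace_mul_comm, hWc]
  have key : U A * Matrix.diagonal (fun i => (fin A i : ℂ)) * (U A)ᴴ * Aᴴ * A
      = U A * (Matrix.diagonal (fun i => (fin A i : ℂ)) * ((U A)ᴴ * (Aᴴ * A))) := by
    noncomm_ring
  rw [key, Matrix.trace_mul_comm, Matrix.mul_assoc, hdiag A, Matrix.diagonal_mul_diagonal,
    Matrix.trace_diagonal]
  have h2 : ∀ i, (fin A i : ℂ) * (ei A i : ℂ) = ((Real.sqrt (ei A i) : ℝ) : ℂ) := by
    intro i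
    by_cases h : ei A i = 0
    · simp [fin, h]
    · have hpos : 0 < ei A i := lt_of_le_of_ne (hei A i) (Ne.symm h)
      rw [show fin A i = (Real.sqrt (ei A i))⁻¹ by simp [fin, h], ← Complex.ofReal_mul]
      congr 1
      rw [show (Real.sqrt (ei A i))⁻¹ * ei A i = ei A i / Real.sqrt (ei A i) by ring,
        Real.div_sqrt]
  rw [Finset.sum_congr rfl (fun i _ => h2 i), ← Complex.ofReal_sum]
  rfl

lemma traceNorm_eq : traceNorm A = ∑ i, Real.sqrt (ei A i) := rfl

end TN

lemma traceNorm_nonneg (A : Matrix m m ℂ) : 0 ≤ traceNorm A :=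
  Finset.sum_nonneg fun i _ => Real.sqrt_nonneg _

lemma exists_dual (A : Matrix m m ℂ) :
    ∃ B : Matrix m m ℂ, opc B ∧ Matrix.trace (A * B) = (traceNorm A : ℂ) :=
  ⟨(TN.W A)ᴴ, opc_conjTranspose (TN.opc_W A), TN.trace_A_Wc A⟩

lemma norm_trace_mul_le (A : Matrix m m ℂ) {B : Matrix m m ℂ} (hB : opc B) :
    ‖Matrix.trace (A * B)‖ ≤ traceNorm A := by
  have hM : opc (B * TN.W A) := opc_mul hB (TN.opc_W A)
  set M := B * TN.W A with hMdef
  have key1 : A * B = TN.W A * (TN.S A * B) := by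
    conv_lhs => rw [← TN.polar A]
    rw [Matrix.mul_assoc]
  have key2 : TN.S A * B * TN.W A
      = TN.U A * (Matrix.diagonal (fun i => (Real.sqrt (TN.ei A i) : ℂ))
        * ((TN.U A)ᴴ * M)) := by
    unfold TN.S
    rw [hMdef]
    noncomm_ring
  rw [key1, Matrix.trace_mul_comm, key2, Matrix.trace_mul_comm, Matrix.mul_assoc,
    trace_diagonal_mul]
  have hentry : ∀ i, (((TN.U A)ᴴ * M) * TN.U A) i i = ((TN.U A)ᴴ * M * TN.U A) i i :=
    fun i => rfl
  calc ‖∑ i, (Real.sqrt (TN.ei A i) : ℂ) * ((((TN.U A)ᴴ * M) * TN.U A) i i)‖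
      ≤ ∑ i, ‖(Real.sqrt (TN.ei A i) : ℂ) * ((((TN.U A)ᴴ * M) * TN.U A) i i)‖ :=
        norm_sum_le _ _
    _ ≤ ∑ i, Real.sqrt (TN.ei A i) := by
        apply Finset.sum_le_sum
        intro i _
        rw [norm_mul, Complex.norm_real, Real.norm_eq_abs,
          _root_.abs_of_nonneg (Real.sqrt_nonneg _)]
        have h1 : ‖(((TN.U A)ᴴ * M * TN.U A)) i i‖ ≤ 1 :=
          diag_entry_norm_le (TN.hU A) hM i
        nlinarith [Real.sqrt_nonneg (TN.ei A i), norm_nonneg ((((TN.U A)ᴴ * M) * TN.U A) i i)]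
    _ = traceNorm A := (TN.traceNorm_eq A).symm

lemma re_trace_mul_le (A : Matrix m m ℂ) {B : Matrix m m ℂ} (hB : opc B) :
    (Matrix.trace (A * B)).re ≤ traceNorm A :=
  le_trans (Complex.re_le_norm _) (by exact norm_trace_mul_le A hB)

lemma traceNorm_add_le (A B : Matrix m m ℂ) :
    traceNorm (A + B) ≤ traceNorm A + traceNorm B := by
  obtain ⟨C, hC, htr⟩ := exists_dual (A + B)
  have h1 : traceNorm (A + B) = (Matrix.trace ((A + B) * C)).re := by
    rw [htr, Complex.ofReal_re]
  rw [h1, Matrix.add_mul, Matrix.trace_add, Complex.add_re]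
  exact add_le_add (re_trace_mul_le A hC) (re_trace_mul_le B hC)

lemma traceNorm_sub_le (A B : Matrix m m ℂ) :
    traceNorm (A - B) ≤ traceNorm A + traceNorm B := by
  obtain ⟨C, hC, htr⟩ := exists_dual (A - B)
  have h1 : traceNorm (A - B) = (Matrix.trace ((A - B) * C)).re := by
    rw [htr, Complex.ofReal_re]
  rw [h1, Matrix.sub_mul, Matrix.trace_sub, Complex.sub_re]
  have h2 := re_trace_mul_le A hC
  have h3 : -(Matrix.trace (B * C)).re ≤ traceNorm B := by
    have h4 : ‖Matrix.trace (B * C)‖ ≤ traceNorm B := norm_trace_mul_le B hC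
    have h5 := Complex.abs_re_le_norm (Matrix.trace (B * C))
    have := abs_le.mp (le_trans h5 h4)
    linarith [this.1]
  linarith

lemma norm_ev_congr {x y : m → ℂ} (h : ∑ i, ‖x i‖ ^ 2 = ∑ i, ‖y i‖ ^ 2) :
    ‖ev x‖ = ‖ev y‖ := le_antisymm (norm_ev_le h.le) (norm_ev_le h.ge)

end QW1

namespace QW1
open Matrix Complex

variable {V : Type*} [Fintype V] [DecidableEq V] {d : ℕ}

def res (v : V) (s : V → Fin d) : {w : V // w ≠ v} → Fin d := fun u => s u.1

def resMem (A : Finset V) (s : V → Fin d) : {w : V // w ∈ A} → Fin d := fun u => s u.1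

def resNot (A : Finset V) (s : V → Fin d) : {w : V // w ∉ A} → Fin d := fun u => s u.1

lemma insertAt_self (v : V) (k : Fin d) (s : {w : V // w ≠ v} → Fin d) :
    insertAt v k s v = k := by simp [insertAt]

lemma insertAt_ne (v : V) (k : Fin d) (s : {w : V // w ≠ v} → Fin d) {w : V} (h : w ≠ v) :
    insertAt v k s w = s ⟨w, h⟩ := by simp [insertAt, h]

lemma res_insertAt (v : V) (k : Fin d) (s : {w : V // w ≠ v} → Fin d) :
    res v (insertAt v k s) = s := by
  funext u; simp [res, insertAt, u.2]

lemma insertAt_res (v : V) (s : V → Fin d) : insertAt v (s v) (res v s) = s := by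
  funext w
  by_cases h : w = v
  · subst h; simp [insertAt]
  · simp [insertAt, h, res]

lemma resMem_insertSet (A : Finset V) (f : {w : V // w ∈ A} → Fin d)
    (s : {w : V // w ∉ A} → Fin d) : resMem A (insertSet A f s) = f := by
  funext u; simp [resMem, insertSet, u.2]

lemma resNot_insertSet (A : Finset V) (f : {w : V // w ∈ A} → Fin d)
    (s : {w : V // w ∉ A} → Fin d) : resNot A (insertSet A f s) = s := by
  funext u; simp [resNot, insertSet, u.2]

lemma insertSet_res (A : Finset V) (s : V → Fin d) :
    insertSet A (resMem A s) (resNot A s) = s := by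
  funext w
  by_cases h : w ∈ A <;> simp [insertSet, h, resMem, resNot]

lemma sum_cfg {M : Type*} [AddCommMonoid M] (v : V) (g : (V → Fin d) → M) :
    ∑ s, g s = ∑ k : Fin d, ∑ t : {w : V // w ≠ v} → Fin d, g (insertAt v k t) := by
  rw [← (Equiv.funSplitAt v (Fin d)).symm.sum_comp g, Fintype.sum_prod_type]
  apply Finset.sum_congr rfl; intro k _
  apply Finset.sum_congr rfl; intro t _
  congr 1
  funext w
  by_cases h : w = v
  · subst h; simp [insertAt]
  · simp [insertAt, h]

lemma sum_cfg_set {M : Type*} [AddCommMonoid M] (A : Finset V) (g : (V → Fin d) → M) :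
    ∑ s, g s = ∑ f : {w : V // w ∈ A} → Fin d, ∑ t : {w : V // w ∉ A} → Fin d,
      g (insertSet A f t) := by
  rw [← (Equiv.piEquivPiSubtypeProd (fun w => w ∈ A) (fun _ => Fin d)).symm.sum_comp g,
    Fintype.sum_prod_type]
  apply Finset.sum_congr rfl; intro f _
  apply Finset.sum_congr rfl; intro t _
  have he : (Equiv.piEquivPiSubtypeProd (fun w => w ∈ A) (fun _ => Fin d)).symm (f, t)
      = insertSet A f t := by
    funext w; by_cases h : w ∈ A <;> simp [insertSet, h, Equiv.piEquivPiSubtypeProd]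
  rw [he]

noncomputable def liftId (v : V)
    (B : Matrix ({w : V // w ≠ v} → Fin d) ({w : V // w ≠ v} → Fin d) ℂ) :
    Matrix (V → Fin d) (V → Fin d) ℂ :=
  Matrix.of fun s t => if s v = t v then B (res v s) (res v t) else 0

noncomputable def liftMix (v : V)
    (B : Matrix ({w : V // w ≠ v} → Fin d) ({w : V // w ≠ v} → Fin d) ℂ) :
    Matrix (V → Fin d) (V → Fin d) ℂ :=
  Matrix.of fun s t => if s v = t v then (d : ℂ)⁻¹ * B (res v s) (res v t) else 0

noncomputable def liftIdSet (A : Finset V)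
    (B : Matrix ({w : V // w ∉ A} → Fin d) ({w : V // w ∉ A} → Fin d) ℂ) :
    Matrix (V → Fin d) (V → Fin d) ℂ :=
  Matrix.of fun s t => if resMem A s = resMem A t then B (resNot A s) (resNot A t) else 0

lemma trace_expand {n : Type*} [Fintype n] (Y Z : Matrix n n ℂ) :
    Matrix.trace (Y * Z) = ∑ s, ∑ t, Y s t * Z t s := by
  simp [Matrix.trace, Matrix.diag, Matrix.mul_apply]

lemma trace_mul_liftId (v : V) (X : Matrix (V → Fin d) (V → Fin d) ℂ)
    (B : Matrix ({w : V // w ≠ v} → Fin d) ({w : V // w ≠ v} → Fin d) ℂ) :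
    Matrix.trace (X * liftId v B) = Matrix.trace (ptraceSite v X * B) := by
  rw [trace_expand, trace_expand]
  rw [sum_cfg v (fun s => ∑ t, X s t * liftId v B t s)]
  have step1 : ∀ (k : Fin d) (s' : {w : V // w ≠ v} → Fin d),
      ∑ t, X (insertAt v k s') t * liftId v B t (insertAt v k s')
        = ∑ t', X (insertAt v k s') (insertAt v k t') * B t' s' := by
    intro k s'
    rw [sum_cfg v (fun t => X (insertAt v k s') t * liftId v B t (insertAt v k s'))]
    rw [Finset.sum_eq_single k]
    · apply Finset.sum_congr rfl; intro t' _
      simp [liftId, insertAt_self, res_insertAt]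
    · intro j _ hj
      apply Finset.sum_eq_zero; intro t' _
      simp [liftId, insertAt_self, hj]
    · intro h; exact absurd (Finset.mem_univ k) h
  rw [Finset.sum_congr rfl (fun k _ => Finset.sum_congr rfl (fun s' _ => step1 k s'))]
  rw [Finset.sum_comm]
  apply Finset.sum_congr rfl; intro s' _
  rw [show (ptraceSite v X : Matrix _ _ ℂ) = Matrix.of fun a b =>
    ∑ k : Fin d, X (insertAt v k a) (insertAt v k b) from rfl]
  rw [Finset.sum_comm]
  apply Finset.sum_congr rfl; intro t' _
  rw [Matrix.of_apply, Finset.sum_mul]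

lemma trace_mul_liftIdSet (A : Finset V) (X : Matrix (V → Fin d) (V → Fin d) ℂ)
    (B : Matrix ({w : V // w ∉ A} → Fin d) ({w : V // w ∉ A} → Fin d) ℂ) :
    Matrix.trace (X * liftIdSet A B) = Matrix.trace (ptraceSet A X * B) := by
  rw [trace_expand, trace_expand]
  rw [sum_cfg_set A (fun s => ∑ t, X s t * liftIdSet A B t s)]
  have step1 : ∀ (f : {w : V // w ∈ A} → Fin d) (s' : {w : V // w ∉ A} → Fin d),
      ∑ t, X (insertSet A f s') t * liftIdSet A B t (insertSet A f s')
        = ∑ t', X (insertSet A f s') (insertSet A f t') * B t' s' := by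
    intro f s'
    rw [sum_cfg_set A (fun t => X (insertSet A f s') t * liftIdSet A B t (insertSet A f s'))]
    rw [Finset.sum_eq_single f]
    · apply Finset.sum_congr rfl; intro t' _
      simp [liftIdSet, resMem_insertSet, resNot_insertSet]
    · intro g _ hg
      apply Finset.sum_eq_zero; intro t' _
      simp [liftIdSet, resMem_insertSet, hg]
    · intro h; exact absurd (Finset.mem_univ f) h
  rw [Finset.sum_congr rfl (fun f _ => Finset.sum_congr rfl (fun s' _ => step1 f s'))]
  rw [Finset.sum_comm]
  apply Finset.sum_congr rfl; intro s' _
  rw [show (ptraceSet A X : Matrix _ _ ℂ) = Matrix.of fun a b =>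
    ∑ f : {w : V // w ∈ A} → Fin d, X (insertSet A f a) (insertSet A f b) from rfl]
  rw [Finset.sum_comm]
  apply Finset.sum_congr rfl; intro t' _
  rw [Matrix.of_apply, Finset.sum_mul]

lemma liftId_mulVec (v : V)
    (B : Matrix ({w : V // w ≠ v} → Fin d) ({w : V // w ≠ v} → Fin d) ℂ)
    (x : (V → Fin d) → ℂ) (s : V → Fin d) :
    (liftId v B *ᵥ x) s = (B *ᵥ (fun t' => x (insertAt v (s v) t'))) (res v s) := by
  simp only [Matrix.mulVec, dotProduct]
  rw [sum_cfg v (fun t => liftId v B s t * x t)]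
  rw [Finset.sum_eq_single (s v)]
  · apply Finset.sum_congr rfl; intro t' _
    simp [liftId, insertAt_self, res_insertAt]
  · intro j _ hj
    apply Finset.sum_eq_zero; intro t' _
    simp [liftId, insertAt_self, Ne.symm hj]
  · intro h; exact absurd (Finset.mem_univ (s v)) h

lemma liftIdSet_mulVec (A : Finset V)
    (B : Matrix ({w : V // w ∉ A} → Fin d) ({w : V // w ∉ A} → Fin d) ℂ)
    (x : (V → Fin d) → ℂ) (s : V → Fin d) :
    (liftIdSet A B *ᵥ x) s = (B *ᵥ (fun t' => x (insertSet A (resMem A s) t'))) (resNot A s) := by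
  simp only [Matrix.mulVec, dotProduct]
  rw [sum_cfg_set A (fun t => liftIdSet A B s t * x t)]
  rw [Finset.sum_eq_single (resMem A s)]
  · apply Finset.sum_congr rfl; intro t' _
    simp [liftIdSet, resMem_insertSet, resNot_insertSet]
  · intro g _ hg
    apply Finset.sum_eq_zero; intro t' _
    simp [liftIdSet, resMem_insertSet, Ne.symm hg]
  · intro h; exact absurd (Finset.mem_univ _) h

lemma sq_norm_le_of_opc {n : Type*} [Fintype n] [DecidableEq n] {B : Matrix n n ℂ}
    (hB : opc B) (y : n → ℂ) : ∑ i, ‖(B *ᵥ y) i‖ ^ 2 ≤ ∑ i, ‖y i‖ ^ 2 := by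
  have h := hB y
  have h2 : ‖ev (B *ᵥ y)‖ ^ 2 ≤ ‖ev y‖ ^ 2 := by
    have := norm_nonneg (ev (B *ᵥ y))
    nlinarith
  rwa [norm_ev_sq, norm_ev_sq] at h2

lemma opc_liftId (v : V)
    {B : Matrix ({w : V // w ≠ v} → Fin d) ({w : V // w ≠ v} → Fin d) ℂ}
    (hB : opc B) : opc (liftId v B) := by
  intro x
  apply norm_ev_le
  calc ∑ s, ‖(liftId v B *ᵥ x) s‖ ^ 2
      = ∑ k : Fin d, ∑ s', ‖(B *ᵥ (fun t' => x (insertAt v k t'))) s'‖ ^ 2 := by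
        rw [sum_cfg v (fun s => ‖(liftId v B *ᵥ x) s‖ ^ 2)]
        apply Finset.sum_congr rfl; intro k _
        apply Finset.sum_congr rfl; intro s' _
        rw [liftId_mulVec, insertAt_self, res_insertAt]
    _ ≤ ∑ k : Fin d, ∑ s', ‖x (insertAt v k s')‖ ^ 2 := by
        apply Finset.sum_le_sum; intro k _
        exact sq_norm_le_of_opc hB _
    _ = ∑ s, ‖x s‖ ^ 2 := (sum_cfg v (fun s => ‖x s‖ ^ 2)).symm

lemma opc_liftIdSet (A : Finset V)
    {B : Matrix ({w : V // w ∉ A} → Fin d) ({w : V // w ∉ A} → Fin d) ℂ}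
    (hB : opc B) : opc (liftIdSet A B) := by
  intro x
  apply norm_ev_le
  calc ∑ s, ‖(liftIdSet A B *ᵥ x) s‖ ^ 2
      = ∑ f, ∑ s', ‖(B *ᵥ (fun t' => x (insertSet A f t'))) s'‖ ^ 2 := by
        rw [sum_cfg_set A (fun s => ‖(liftIdSet A B *ᵥ x) s‖ ^ 2)]
        apply Finset.sum_congr rfl; intro f _
        apply Finset.sum_congr rfl; intro s' _
        rw [liftIdSet_mulVec, resMem_insertSet, resNot_insertSet]
    _ ≤ ∑ f, ∑ s', ‖x (insertSet A f s')‖ ^ 2 := by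
        apply Finset.sum_le_sum; intro f _
        exact sq_norm_le_of_opc hB _
    _ = ∑ s, ‖x s‖ ^ 2 := (sum_cfg_set A (fun s => ‖x s‖ ^ 2)).symm

lemma traceNorm_ptraceSite_le (v : V) (X : Matrix (V → Fin d) (V → Fin d) ℂ) :
    traceNorm (ptraceSite v X) ≤ traceNorm X := by
  obtain ⟨B, hB, htr⟩ := exists_dual (ptraceSite v X)
  have h1 : traceNorm (ptraceSite v X) = (Matrix.trace (X * liftId v B)).re := by
    rw [trace_mul_liftId, htr, Complex.ofReal_re]
  rw [h1]
  exact re_trace_mul_le X (opc_liftId v hB)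

lemma traceNorm_ptraceSet_le (A : Finset V) (X : Matrix (V → Fin d) (V → Fin d) ℂ) :
    traceNorm (ptraceSet A X) ≤ traceNorm X := by
  obtain ⟨B, hB, htr⟩ := exists_dual (ptraceSet A X)
  have h1 : traceNorm (ptraceSet A X) = (Matrix.trace (X * liftIdSet A B)).re := by
    rw [trace_mul_liftIdSet, htr, Complex.ofReal_re]
  rw [h1]
  exact re_trace_mul_le X (opc_liftIdSet A hB)

end QW1

namespace QW1
open Matrix Complex

lemma traceNorm_zero {n : Type*} [Fintype n] [DecidableEq n] :
    traceNorm (0 : Matrix n n ℂ) = 0 := by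
  obtain ⟨C, hC, htr⟩ := exists_dual (0 : Matrix n n ℂ)
  rw [Matrix.zero_mul, Matrix.trace_zero] at htr
  exact_mod_cast htr.symm

variable {V : Type*} [Fintype V] [DecidableEq V] {d : ℕ}

lemma ptraceSite_apply (v : V) (X : Matrix (V → Fin d) (V → Fin d) ℂ)
    (s t : {w : V // w ≠ v} → Fin d) :
    ptraceSite v X s t = ∑ k : Fin d, X (insertAt v k s) (insertAt v k t) := rfl

lemma ptraceSite_liftMix (hd : d ≠ 0) (v : V)
    (B : Matrix ({w : V // w ≠ v} → Fin d) ({w : V // w ≠ v} → Fin d) ℂ) :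
    ptraceSite v (liftMix v B) = B := by
  ext s t
  rw [ptraceSite_apply]
  have h1 : ∀ k : Fin d, liftMix v B (insertAt v k s) (insertAt v k t)
      = (d : ℂ)⁻¹ * B s t := by
    intro k
    simp [liftMix, insertAt_self, res_insertAt]
  rw [Finset.sum_congr rfl (fun k _ => h1 k), Finset.sum_const, Finset.card_univ,
    Fintype.card_fin, nsmul_eq_mul]
  have : (d : ℂ) ≠ 0 := Nat.cast_ne_zero.mpr hd
  field_simp

lemma ptraceSite_sub (v : V) (X Y : Matrix (V → Fin d) (V → Fin d) ℂ) :
    ptraceSite v (X - Y) = ptraceSite v X - ptraceSite v Y := by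
  ext s t
  rw [Matrix.sub_apply, ptraceSite_apply, ptraceSite_apply, ptraceSite_apply,
    ← Finset.sum_sub_distrib]
  apply Finset.sum_congr rfl; intro k _
  rw [Matrix.sub_apply]

lemma ptraceSite_sum {ι : Type*} (v : V) (s : Finset ι)
    (f : ι → Matrix (V → Fin d) (V → Fin d) ℂ) :
    ptraceSite v (∑ i ∈ s, f i) = ∑ i ∈ s, ptraceSite v (f i) := by
  ext a b
  rw [ptraceSite_apply]
  have h1 : ∀ k : Fin d, (∑ i ∈ s, f i) (insertAt v k a) (insertAt v k b)
      = ∑ i ∈ s, f i (insertAt v k a) (insertAt v k b) := fun k => by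
    rw [Matrix.sum_apply]
  rw [Finset.sum_congr rfl (fun k _ => h1 k), Finset.sum_comm, Matrix.sum_apply]
  exact Finset.sum_congr rfl fun i _ => (ptraceSite_apply v (f i) a b).symm

lemma liftMix_sum {ι : Type*} (v : V) (s : Finset ι)
    (f : ι → Matrix ({w : V // w ≠ v} → Fin d) ({w : V // w ≠ v} → Fin d) ℂ) :
    liftMix v (∑ i ∈ s, f i) = ∑ i ∈ s, liftMix v (f i) := by
  ext a b
  rw [Matrix.sum_apply]
  by_cases h : a v = b v
  · simp only [liftMix, Matrix.of_apply, h, if_true, Matrix.sum_apply, Finset.mul_sum]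
  · simp only [liftMix, Matrix.of_apply, h, if_false]
    exact (Finset.sum_eq_zero fun i _ => by simp [liftMix, h]).symm

lemma ptraceSite_liftMix_ne (v : V) (w' : {u : V // u ≠ v})
    (B : Matrix ({w : V // w ≠ v} → Fin d) ({w : V // w ≠ v} → Fin d) ℂ)
    (hB : ptraceSite w' B = 0) :
    ptraceSite (w'.1) (liftMix v B) = 0 := by
  have hv : v ≠ w'.1 := Ne.symm w'.2
  ext s t
  rw [ptraceSite_apply, Matrix.zero_apply]
  set σ : ({x : V // x ≠ w'.1} → Fin d) → ({u : {w : V // w ≠ v} // u ≠ w'} → Fin d) :=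
    fun s u => s ⟨u.1.1, fun h => u.2 (Subtype.ext h)⟩ with hσ
  have key : ∀ (k : Fin d) (s : {x : V // x ≠ w'.1} → Fin d),
      res v (insertAt w'.1 k s) = insertAt w' k (σ s) := by
    intro k s
    funext x
    show insertAt w'.1 k s x.1 = insertAt w' k (σ s) x
    by_cases h : x = w'
    · subst h
      rw [insertAt_self, insertAt_self]
    · have h1 : x.1 ≠ w'.1 := fun hh => h (Subtype.ext hh)
      rw [insertAt_ne _ _ _ h1, insertAt_ne _ _ _ h]
  have hentry : ∀ k : Fin d, liftMix v B (insertAt w'.1 k s) (insertAt w'.1 k t)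
      = if s ⟨v, hv⟩ = t ⟨v, hv⟩ then
          (d : ℂ)⁻¹ * B (insertAt w' k (σ s)) (insertAt w' k (σ t)) else 0 := by
    intro k
    show (if (insertAt w'.1 k s) v = (insertAt w'.1 k t) v then
        (d : ℂ)⁻¹ * B (res v (insertAt w'.1 k s)) (res v (insertAt w'.1 k t)) else 0) = _
    rw [insertAt_ne _ _ _ hv, insertAt_ne _ _ _ hv, key, key]
  rw [Finset.sum_congr rfl (fun k _ => hentry k)]
  by_cases hc : s ⟨v, hv⟩ = t ⟨v, hv⟩
  · simp only [hc, if_true]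
    rw [← Finset.mul_sum]
    have : ∑ k : Fin d, B (insertAt w' k (σ s)) (insertAt w' k (σ t))
        = ptraceSite w' B (σ s) (σ t) := rfl
    rw [this, hB, Matrix.zero_apply, mul_zero]
  · simp [hc]

noncomputable def cmp (v : V) (k : Fin d) (C : Matrix (V → Fin d) (V → Fin d) ℂ) :
    Matrix ({w : V // w ≠ v} → Fin d) ({w : V // w ≠ v} → Fin d) ℂ :=
  Matrix.of fun t' s' => C (insertAt v k t') (insertAt v k s')

lemma cmp_mulVec (v : V) (k : Fin d) (C : Matrix (V → Fin d) (V → Fin d) ℂ)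
    (y : ({w : V // w ≠ v} → Fin d) → ℂ) (t' : {w : V // w ≠ v} → Fin d) :
    (cmp v k C *ᵥ y) t'
      = (C *ᵥ (fun t => if t v = k then y (res v t) else 0)) (insertAt v k t') := by
  simp only [Matrix.mulVec, dotProduct, cmp, Matrix.of_apply]
  rw [sum_cfg v (fun t => C (insertAt v k t') t * (if t v = k then y (res v t) else 0))]
  rw [Finset.sum_eq_single k]
  · apply Finset.sum_congr rfl; intro s' _
    rw [insertAt_self, if_pos rfl, res_insertAt]
  · intro j _ hj
    apply Finset.sum_eq_zero; intro s' _
    rw [insertAt_self, if_neg hj, mul_zero]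
  · intro h; exact absurd (Finset.mem_univ k) h

lemma opc_cmp (v : V) (k : Fin d) {C : Matrix (V → Fin d) (V → Fin d) ℂ}
    (hC : opc C) : opc (cmp v k C) := by
  intro y
  set z : (V → Fin d) → ℂ := fun t => if t v = k then y (res v t) else 0 with hz
  apply norm_ev_le
  calc ∑ t', ‖(cmp v k C *ᵥ y) t'‖ ^ 2
      = ∑ t', ‖(C *ᵥ z) (insertAt v k t')‖ ^ 2 := by
        apply Finset.sum_congr rfl; intro t' _
        rw [cmp_mulVec]
    _ ≤ ∑ t, ‖(C *ᵥ z) t‖ ^ 2 := by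
        rw [sum_cfg v (fun t => ‖(C *ᵥ z) t‖ ^ 2)]
        exact Finset.single_le_sum
          (f := fun j => ∑ t', ‖(C *ᵥ z) (insertAt v j t')‖ ^ 2)
          (fun j _ => Finset.sum_nonneg fun t' _ => by positivity) (Finset.mem_univ k)
    _ ≤ ∑ t, ‖z t‖ ^ 2 := sq_norm_le_of_opc hC z
    _ = ∑ t', ‖y t'‖ ^ 2 := by
        rw [sum_cfg v (fun t => ‖z t‖ ^ 2)]
        rw [Finset.sum_eq_single k]
        · apply Finset.sum_congr rfl; intro t' _
          simp [hz, insertAt_self, res_insertAt]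
        · intro j _ hj
          apply Finset.sum_eq_zero; intro t' _
          simp [hz, insertAt_self, hj]
        · intro h; exact absurd (Finset.mem_univ k) h

lemma trace_liftMix_mul (v : V)
    (B : Matrix ({w : V // w ≠ v} → Fin d) ({w : V // w ≠ v} → Fin d) ℂ)
    (C : Matrix (V → Fin d) (V → Fin d) ℂ) :
    Matrix.trace (liftMix v B * C)
      = (d : ℂ)⁻¹ * ∑ k : Fin d, Matrix.trace (B * cmp v k C) := by
  rw [trace_expand]
  rw [sum_cfg v (fun s => ∑ t, liftMix v B s t * C t s)]
  have step1 : ∀ (k : Fin d) (s' : {w : V // w ≠ v} → Fin d),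
      ∑ t, liftMix v B (insertAt v k s') t * C t (insertAt v k s')
        = ∑ t', (d : ℂ)⁻¹ * (B s' t' * C (insertAt v k t') (insertAt v k s')) := by
    intro k s'
    rw [sum_cfg v (fun t => liftMix v B (insertAt v k s') t * C t (insertAt v k s'))]
    rw [Finset.sum_eq_single k]
    · apply Finset.sum_congr rfl; intro t' _
      simp only [liftMix, Matrix.of_apply, insertAt_self, if_true, eq_self_iff_true,
        res_insertAt]
      ring
    · intro j _ hj
      apply Finset.sum_eq_zero; intro t' _
      simp [liftMix, insertAt_self, Ne.symm hj]
    · intro h; exact absurd (Finset.mem_univ k) h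
  rw [Finset.sum_congr rfl (fun k _ => Finset.sum_congr rfl (fun s' _ => step1 k s'))]
  rw [Finset.mul_sum]
  apply Finset.sum_congr rfl; intro k _
  rw [trace_expand, Finset.mul_sum]
  apply Finset.sum_congr rfl; intro s' _
  rw [Finset.mul_sum]
  apply Finset.sum_congr rfl; intro t' _
  show (d : ℂ)⁻¹ * (B s' t' * C (insertAt v k t') (insertAt v k s'))
      = (d : ℂ)⁻¹ * (B s' t' * cmp v k C t' s')
  rfl

lemma traceNorm_liftMix_le (v : V)
    (B : Matrix ({w : V // w ≠ v} → Fin d) ({w : V // w ≠ v} → Fin d) ℂ) :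
    traceNorm (liftMix v B) ≤ traceNorm B := by
  by_cases hd : d = 0
  · have h0 : liftMix v B = 0 := by
      ext s t
      simp only [liftMix, Matrix.of_apply, hd, Nat.cast_zero, _root_.inv_zero, zero_mul,
        Matrix.zero_apply, ite_self]
    rw [h0, traceNorm_zero]
    exact traceNorm_nonneg B
  · obtain ⟨C, hC, htr⟩ := exists_dual (liftMix v B)
    have h1 : traceNorm (liftMix v B) = (Matrix.trace (liftMix v B * C)).re := by
      rw [htr, Complex.ofReal_re]
    rw [h1, trace_liftMix_mul]
    have h2 : ((d : ℂ))⁻¹ = (((d : ℝ)⁻¹ : ℝ) : ℂ) := by push_cast; rfl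
    rw [h2]
    rw [show ((((d : ℝ)⁻¹ : ℝ) : ℂ) * ∑ k : Fin d, Matrix.trace (B * cmp v k C)).re
        = (d : ℝ)⁻¹ * (∑ k : Fin d, Matrix.trace (B * cmp v k C)).re from by
      rw [Complex.mul_re, Complex.ofReal_re, Complex.ofReal_im]; ring]
    rw [Complex.re_sum]
    have h3 : ∑ k : Fin d, (Matrix.trace (B * cmp v k C)).re
        ≤ ∑ k : Fin d, traceNorm B :=
      Finset.sum_le_sum fun k _ => re_trace_mul_le B (opc_cmp v k hC)
    rw [Finset.sum_const, Finset.card_univ, Fintype.card_fin, nsmul_eq_mul] at h3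
    have hd0 : (0 : ℝ) < (d : ℝ) := by
      exact_mod_cast Nat.pos_of_ne_zero hd
    calc (d : ℝ)⁻¹ * ∑ k : Fin d, (Matrix.trace (B * cmp v k C)).re
        ≤ (d : ℝ)⁻¹ * ((d : ℝ) * traceNorm B) := by
          apply mul_le_mul_of_nonneg_left h3 (by positivity)
      _ = traceNorm B := by field_simp
end QW1

namespace QW1
open Matrix Complex

variable {V : Type*} [Fintype V] [DecidableEq V] {d : ℕ}

lemma W1mem_nonneg {X : Matrix (V → Fin d) (V → Fin d) ℂ} {r : ℝ}
    (hr : r ∈ { r : ℝ | ∃ Y : V → Matrix (V → Fin d) (V → Fin d) ℂ,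
      X = ∑ v, Y v ∧ (∀ v, ptraceSite v (Y v) = 0) ∧
        r = (1 / 2) * ∑ v, traceNorm (Y v) }) : 0 ≤ r := by
  obtain ⟨Y, -, -, rfl⟩ := hr
  have h := Finset.sum_nonneg (fun v (_ : v ∈ Finset.univ) => traceNorm_nonneg (Y v))
  have : (0:ℝ) ≤ (1/2 : ℝ) := by norm_num
  exact mul_nonneg this h

lemma W1norm_nonneg (X : Matrix (V → Fin d) (V → Fin d) ℂ) : 0 ≤ W1norm X :=
  Real.sInf_nonneg fun _ hr => W1mem_nonneg hr

lemma W1norm_le_of_mem {X : Matrix (V → Fin d) (V → Fin d) ℂ}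
    {Y : V → Matrix (V → Fin d) (V → Fin d) ℂ}
    (h1 : X = ∑ v, Y v) (h2 : ∀ v, ptraceSite v (Y v) = 0) :
    W1norm X ≤ (1 / 2) * ∑ v, traceNorm (Y v) :=
  csInf_le ⟨0, fun _ hr => W1mem_nonneg hr⟩ ⟨Y, h1, h2, rfl⟩

/-! ### Existence of a decomposition for traceless operators -/

def override (J : Finset V) (g : {w : V // w ∈ J} → Fin d) (s : V → Fin d) : V → Fin d :=
  fun w => if h : w ∈ J then g ⟨w, h⟩ else s w

noncomputable def mixTr (J : Finset V) (Y : Matrix (V → Fin d) (V → Fin d) ℂ) :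
    Matrix (V → Fin d) (V → Fin d) ℂ :=
  Matrix.of fun s t => (∏ u ∈ J, if s u = t u then (d : ℂ)⁻¹ else 0)
    * ∑ g : {w : V // w ∈ J} → Fin d, Y (override J g s) (override J g t)

lemma mixTr_empty (Y : Matrix (V → Fin d) (V → Fin d) ℂ) : mixTr ∅ Y = Y := by
  ext s t
  haveI : IsEmpty {w : V // w ∈ (∅ : Finset V)} :=
    ⟨fun u => absurd u.2 (Finset.notMem_empty u.1)⟩
  show (∏ u ∈ (∅ : Finset V), if s u = t u then (d : ℂ)⁻¹ else 0)
    * ∑ g : {w : V // w ∈ (∅ : Finset V)} → Fin d,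
        Y (override ∅ g s) (override ∅ g t) = Y s t
  rw [Finset.prod_empty, one_mul]
  have hov : ∀ (g : {w : V // w ∈ (∅ : Finset V)} → Fin d) (u : V → Fin d),
      override ∅ g u = u := by
    intro g u; funext w
    simp [override]
  rw [Fintype.sum_subsingleton _ (fun u => isEmptyElim u)]
  rw [hov, hov]

lemma mixTr_univ (Y : Matrix (V → Fin d) (V → Fin d) ℂ) (htr : Matrix.trace Y = 0) :
    mixTr Finset.univ Y = 0 := by
  ext s t
  show (∏ u ∈ Finset.univ, if s u = t u then (d : ℂ)⁻¹ else 0)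
    * ∑ g : {w : V // w ∈ (Finset.univ : Finset V)} → Fin d,
        Y (override Finset.univ g s) (override Finset.univ g t) = 0
  set e : ({w : V // w ∈ (Finset.univ : Finset V)} → Fin d) ≃ (V → Fin d) :=
    Equiv.arrowCongr (Equiv.subtypeUnivEquiv (fun w => Finset.mem_univ w)) (Equiv.refl _)
      with he
  have hov : ∀ (g : {w : V // w ∈ (Finset.univ : Finset V)} → Fin d) (u : V → Fin d),
      override Finset.univ g u = e g := by
    intro g u; funext w
    simp [override, he, Equiv.arrowCongr, Equiv.subtypeUnivEquiv]
  have hsum : ∑ g : {w : V // w ∈ (Finset.univ : Finset V)} → Fin d,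
      Y (override Finset.univ g s) (override Finset.univ g t) = Matrix.trace Y := by
    rw [Finset.sum_congr rfl (fun g _ => by rw [hov g s, hov g t])]
    exact e.sum_comp (fun u => Y u u)
  rw [hsum, htr, mul_zero]

lemma ptraceSite_mixTr_insert (v : V) (J : Finset V) (hv : v ∉ J)
    (Y : Matrix (V → Fin d) (V → Fin d) ℂ) :
    ptraceSite v (mixTr (insert v J) Y) = ptraceSite v (mixTr J Y) := by
  by_cases hd : d = 0
  · subst hd
    ext s t
    rw [ptraceSite_apply, ptraceSite_apply, Finset.univ_eq_empty, Finset.sum_empty,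
      Finset.sum_empty]
  ext s t
  rw [ptraceSite_apply, ptraceSite_apply]
  -- the common product over J
  set h : V → ℂ := fun u => if hu : u ≠ v
    then (if s ⟨u, hu⟩ = t ⟨u, hu⟩ then (d : ℂ)⁻¹ else 0) else 0 with hh
  have hprod : ∀ (k : Fin d),
      (∏ u ∈ J, if insertAt v k s u = insertAt v k t u then (d : ℂ)⁻¹ else 0)
        = ∏ u ∈ J, h u := by
    intro k
    apply Finset.prod_congr rfl
    intro u hu
    have hne : u ≠ v := ne_of_mem_of_not_mem hu hv
    rw [insertAt_ne _ _ _ hne, insertAt_ne _ _ _ hne, hh]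
    simp [hne]
  set P : ℂ := ∏ u ∈ J, h u with hP
  -- the insert-side override
  set ovA : ({w : V // w ∈ insert v J} → Fin d) → ({w : V // w ≠ v} → Fin d) → (V → Fin d) :=
    fun g s => fun w => if h : w ∈ insert v J then g ⟨w, h⟩
      else s ⟨w, fun he => h (he ▸ Finset.mem_insert_self v J)⟩ with hovA
  have hA : ∀ (k : Fin d) (g : {w : V // w ∈ insert v J} → Fin d)
      (u : {w : V // w ≠ v} → Fin d),
      override (insert v J) g (insertAt v k u) = ovA g u := by
    intro k g u; funext w
    by_cases h1 : w ∈ insert v J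
    · have h1' := h1
      rw [Finset.mem_insert] at h1'
      simp [override, hovA, h1, h1']
    · have h1' := h1
      rw [Finset.mem_insert] at h1'
      have h2 : w ≠ v := fun he => h1 (he ▸ Finset.mem_insert_self v J)
      simp [override, hovA, h1, h1', insertAt_ne _ _ _ h2]
  -- the J-side override
  have hB : ∀ (k : Fin d) (g : {w : V // w ∈ J} → Fin d)
      (u : {w : V // w ≠ v} → Fin d),
      override J g (insertAt v k u) = ovA (fun w' => if h : w'.1 = v then k
        else g ⟨w'.1, (Finset.mem_insert.mp w'.2).resolve_left h⟩) u := by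
    intro k g u; funext w
    by_cases h1 : w = v
    · subst h1
      simp [override, hovA, hv, insertAt_self, Finset.mem_insert]
    · by_cases h2 : w ∈ J
      · simp [override, hovA, h2, h1, Finset.mem_insert]
      · simp [override, hovA, h1, h2, Finset.mem_insert, insertAt_ne _ _ _ h1]
  -- equivalence between Fin d × (J-configs) and (insert v J)-configs
  set E : Fin d × ({w : V // w ∈ J} → Fin d) → ({w : V // w ∈ insert v J} → Fin d) :=
    fun p w' => if h : w'.1 = v then p.1
      else p.2 ⟨w'.1, (Finset.mem_insert.mp w'.2).resolve_left h⟩ with hE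
  have hEbij : Function.Bijective E := by
    constructor
    · intro p q hpq
      have h1 : p.1 = q.1 := by
        have := congrFun hpq ⟨v, Finset.mem_insert_self v J⟩
        simpa [hE] using this
      have h2 : p.2 = q.2 := by
        funext u
        have hne : u.1 ≠ v := ne_of_mem_of_not_mem u.2 hv
        have := congrFun hpq ⟨u.1, Finset.mem_insert_of_mem u.2⟩
        simpa [hE, hne] using this
      exact Prod.ext h1 h2
    · intro g'
      refine ⟨⟨g' ⟨v, Finset.mem_insert_self v J⟩,
        fun u => g' ⟨u.1, Finset.mem_insert_of_mem u.2⟩⟩, ?_⟩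
      funext w'
      by_cases h1 : w'.1 = v
      · simp only [hE, dif_pos h1]
        congr 1
        exact Subtype.ext h1.symm
      · simp only [hE, dif_neg h1]
  -- compute both sides
  set T : ℂ := ∑ g : {w : V // w ∈ insert v J} → Fin d, Y (ovA g s) (ovA g t) with hT
  have hLHS : ∀ k : Fin d, mixTr (insert v J) Y (insertAt v k s) (insertAt v k t)
      = (d : ℂ)⁻¹ * P * T := by
    intro k
    show (∏ u ∈ insert v J, if insertAt v k s u = insertAt v k t u then (d : ℂ)⁻¹ else 0)
      * ∑ g, Y (override (insert v J) g (insertAt v k s))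
          (override (insert v J) g (insertAt v k t)) = _
    rw [Finset.prod_insert hv, insertAt_self, insertAt_self, if_pos rfl, hprod k]
    rw [Finset.sum_congr rfl (fun g _ => by rw [hA k g s, hA k g t])]
  have hRHS : ∀ k : Fin d, mixTr J Y (insertAt v k s) (insertAt v k t)
      = P * ∑ g : {w : V // w ∈ J} → Fin d,
          Y (ovA (E (k, g)) s) (ovA (E (k, g)) t) := by
    intro k
    show (∏ u ∈ J, if insertAt v k s u = insertAt v k t u then (d : ℂ)⁻¹ else 0)
      * ∑ g, Y (override J g (insertAt v k s)) (override J g (insertAt v k t)) = _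
    rw [hprod k]
    rw [Finset.sum_congr rfl (fun g _ => by rw [hB k g s, hB k g t])]
  rw [Finset.sum_congr rfl (fun k _ => hLHS k), Finset.sum_congr rfl (fun k _ => hRHS k)]
  have hd' : (d : ℂ) ≠ 0 := Nat.cast_ne_zero.mpr hd
  have hsum2 : ∑ p : Fin d × ({w : V // w ∈ J} → Fin d),
      Y (ovA (E p) s) (ovA (E p) t) = T :=
    Function.Bijective.sum_comp hEbij (fun g => Y (ovA g s) (ovA g t))
  have hL : ∑ _k : Fin d, ((d : ℂ)⁻¹ * P * T) = P * T := by
    rw [Finset.sum_const, Finset.card_univ, Fintype.card_fin, nsmul_eq_mul]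
    field_simp
  have hR : ∑ k : Fin d, (P * ∑ g : {w : V // w ∈ J} → Fin d,
      Y (ovA (E (k, g)) s) (ovA (E (k, g)) t)) = P * T := by
    rw [← Finset.mul_sum]
    congr 1
    rw [← hsum2, Fintype.sum_prod_type]
  rw [hL, hR]

end QW1

namespace QW1
open Matrix Complex

variable {V : Type*} [Fintype V] [DecidableEq V] {d : ℕ}

lemma trace_ptraceSite (v : V) (X : Matrix (V → Fin d) (V → Fin d) ℂ) :
    Matrix.trace (ptraceSite v X) = Matrix.trace X := by
  have h1 : Matrix.trace (ptraceSite v X)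
      = ∑ s', ∑ k : Fin d, X (insertAt v k s') (insertAt v k s') := by
    simp only [Matrix.trace, Matrix.diag]
    apply Finset.sum_congr rfl; intro s' _; rfl
  rw [h1, Finset.sum_comm, ← sum_cfg v (fun s => X s s)]
  rfl

lemma trace_ptraceSet (A : Finset V) (X : Matrix (V → Fin d) (V → Fin d) ℂ) :
    Matrix.trace (ptraceSet A X) = Matrix.trace X := by
  have h1 : Matrix.trace (ptraceSet A X)
      = ∑ s', ∑ f, X (insertSet A f s') (insertSet A f s') := by
    simp only [Matrix.trace, Matrix.diag]
    apply Finset.sum_congr rfl; intro s' _; rfl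
  rw [h1, Finset.sum_comm, ← sum_cfg_set A (fun s => X s s)]
  rfl

lemma exists_decomposition (X : Matrix (V → Fin d) (V → Fin d) ℂ)
    (htr : Matrix.trace X = 0) :
    ∃ Y : V → Matrix (V → Fin d) (V → Fin d) ℂ,
      X = ∑ v, Y v ∧ ∀ v, ptraceSite v (Y v) = 0 := by
  classical
  set e := Fintype.equivFin V with he
  set Jset : ℕ → Finset V := fun j => Finset.univ.filter (fun u => (e u : ℕ) < j) with hJ
  set Φ : ℕ → Matrix (V → Fin d) (V → Fin d) ℂ := fun j => mixTr (Jset j) X with hΦ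
  have hΦ0 : Φ 0 = X := by
    have h2 : Jset 0 = ∅ := by
      ext u; simp [hJ]
    show mixTr (Jset 0) X = X
    rw [h2]; exact mixTr_empty X
  have hΦn : Φ (Fintype.card V) = 0 := by
    have h3 : Jset (Fintype.card V) = Finset.univ := by
      ext u; simp [hJ, (e u).2]
    show mixTr (Jset (Fintype.card V)) X = 0
    rw [h3]; exact mixTr_univ X htr
  refine ⟨fun v => Φ ((e v : ℕ)) - Φ ((e v : ℕ) + 1), ?_, ?_⟩
  · have h1 : ∑ v, (Φ ((e v : ℕ)) - Φ ((e v : ℕ) + 1))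
        = ∑ j : Fin (Fintype.card V), (Φ ((j : ℕ)) - Φ ((j : ℕ) + 1)) :=
      Equiv.sum_comp e (fun j : Fin (Fintype.card V) => Φ ((j : ℕ)) - Φ ((j : ℕ) + 1))
    rw [h1, Fin.sum_univ_eq_sum_range (fun j => Φ j - Φ (j + 1)),
      Finset.sum_range_sub' (fun j => Φ j), hΦ0, hΦn, sub_zero]
  · intro v
    have hv : v ∉ Jset ((e v : ℕ)) := by simp [hJ]
    have hins : Jset ((e v : ℕ) + 1) = insert v (Jset ((e v : ℕ))) := by
      ext u
      simp only [hJ, Finset.mem_filter, Finset.mem_univ, true_and, Finset.mem_insert]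
      rw [Nat.lt_succ_iff_lt_or_eq]
      constructor
      · rintro (h | h)
        · exact Or.inr h
        · exact Or.inl (e.injective (Fin.val_injective h))
      · rintro (h | h)
        · subst h; exact Or.inr rfl
        · exact Or.inl h
    rw [ptraceSite_sub, show Φ ((e v : ℕ) + 1) = mixTr (insert v (Jset ((e v : ℕ)))) X
      from by
        show mixTr (Jset ((e v : ℕ) + 1)) X = _
        rw [hins]]
    rw [ptraceSite_mixTr_insert v _ hv]
    exact sub_self _

lemma W1norm_le_traceNorm_add_site (v : V) (X : Matrix (V → Fin d) (V → Fin d) ℂ)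
    (htr : Matrix.trace X = 0) :
    W1norm X ≤ traceNorm X + W1norm (ptraceSite v X) := by
  by_cases hd : d = 0
  · subst hd
    have hX0 : X = 0 := by
      ext s t
      exact isEmptyElim (s v)
    have h1 : W1norm X ≤ (1 / 2) * ∑ _w : V, traceNorm (0 : Matrix (V → Fin 0) (V → Fin 0) ℂ) := by
      apply W1norm_le_of_mem (Y := fun _ => 0)
      · rw [hX0, Finset.sum_const, smul_zero]
      · intro w
        ext s t
        rw [ptraceSite_apply, Matrix.zero_apply]
        simp
    rw [Finset.sum_congr rfl (fun w _ => traceNorm_zero), Finset.sum_const, smul_zero,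
      mul_zero] at h1
    have h2 := traceNorm_nonneg X
    have h3 := W1norm_nonneg (ptraceSite v X)
    linarith
  · have hne : Matrix.trace (ptraceSite v X) = 0 := by
      rw [trace_ptraceSite, htr]
    obtain ⟨Z0, hZ0sum, hZ0pt⟩ := exists_decomposition (ptraceSite v X) hne
    have hSne : Set.Nonempty { r : ℝ | ∃ Z : {w : V // w ≠ v} →
        Matrix (({w : V // w ≠ v}) → Fin d) (({w : V // w ≠ v}) → Fin d) ℂ,
        ptraceSite v X = ∑ w, Z w ∧ (∀ w, ptraceSite w (Z w) = 0) ∧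
          r = (1 / 2) * ∑ w, traceNorm (Z w) } :=
      ⟨_, Z0, hZ0sum, hZ0pt, rfl⟩
    have key : ∀ r ∈ { r : ℝ | ∃ Z : {w : V // w ≠ v} →
        Matrix (({w : V // w ≠ v}) → Fin d) (({w : V // w ≠ v}) → Fin d) ℂ,
        ptraceSite v X = ∑ w, Z w ∧ (∀ w, ptraceSite w (Z w) = 0) ∧
          r = (1 / 2) * ∑ w, traceNorm (Z w) }, W1norm X ≤ traceNorm X + r := by
      rintro r ⟨Z, hsum, hpt, rfl⟩
      set Y : V → Matrix (V → Fin d) (V → Fin d) ℂ := fun w =>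
        if h : w = v then X - liftMix v (ptraceSite v X) else liftMix v (Z ⟨w, h⟩) with hY
      have hYv : Y v = X - liftMix v (ptraceSite v X) := by rw [hY]; simp
      have hYw : ∀ u : {w : V // w ≠ v}, Y u.1 = liftMix v (Z u) := by
        intro u
        rw [hY]
        simp only [dif_neg u.2]
      have herase : ∑ w ∈ Finset.univ.erase v, Y w = liftMix v (ptraceSite v X) := by
        have hsub : ∑ w ∈ Finset.univ.erase v, Y w = ∑ u : {w : V // w ≠ v}, Y u.1 := by
          apply Finset.sum_subtype
          intro w
          simp [Finset.mem_erase]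
        rw [hsub, Finset.sum_congr rfl (fun u _ => hYw u), ← liftMix_sum, ← hsum]
      have hY1 : X = ∑ w, Y w := by
        rw [← Finset.add_sum_erase Finset.univ Y (Finset.mem_univ v), hYv, herase]
        abel
      have hY2 : ∀ w, ptraceSite w (Y w) = 0 := by
        intro w
        by_cases h : w = v
        · subst h
          rw [hYv, ptraceSite_sub, ptraceSite_liftMix hd, sub_self]
        · have := ptraceSite_liftMix_ne v ⟨w, h⟩ (Z ⟨w, h⟩) (hpt ⟨w, h⟩)
          rw [show Y w = liftMix v (Z ⟨w, h⟩) from hYw ⟨w, h⟩]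
          exact this
      have hcost : (1 / 2) * ∑ w, traceNorm (Y w)
          ≤ traceNorm X + (1 / 2) * ∑ u, traceNorm (Z u) := by
        have hYvcost : traceNorm (Y v) ≤ 2 * traceNorm X := by
          rw [hYv]
          calc traceNorm (X - liftMix v (ptraceSite v X))
              ≤ traceNorm X + traceNorm (liftMix v (ptraceSite v X)) :=
                traceNorm_sub_le _ _
            _ ≤ traceNorm X + traceNorm (ptraceSite v X) := by
                linarith [traceNorm_liftMix_le v (ptraceSite v X)]
            _ ≤ traceNorm X + traceNorm X := by
                linarith [traceNorm_ptraceSite_le v X]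
            _ = 2 * traceNorm X := by ring
        have hsplit : ∑ w, traceNorm (Y w)
            = traceNorm (Y v) + ∑ w ∈ Finset.univ.erase v, traceNorm (Y w) :=
          (Finset.add_sum_erase Finset.univ (fun w => traceNorm (Y w))
            (Finset.mem_univ v)).symm
        have hrest : ∑ w ∈ Finset.univ.erase v, traceNorm (Y w)
            ≤ ∑ u, traceNorm (Z u) := by
          have hsub : ∑ w ∈ Finset.univ.erase v, traceNorm (Y w)
              = ∑ u : {w : V // w ≠ v}, traceNorm (Y u.1) := by
            apply Finset.sum_subtype
            intro w
            simp [Finset.mem_erase]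
          rw [hsub]
          apply Finset.sum_le_sum
          intro u _
          rw [hYw u]
          exact traceNorm_liftMix_le v (Z u)
        rw [hsplit]
        have h4 : traceNorm (Y v) + ∑ w ∈ Finset.univ.erase v, traceNorm (Y w)
            ≤ 2 * traceNorm X + ∑ u, traceNorm (Z u) := by
          linarith
        linarith
      calc W1norm X ≤ (1 / 2) * ∑ w, traceNorm (Y w) := W1norm_le_of_mem hY1 hY2
        _ ≤ traceNorm X + (1 / 2) * ∑ u, traceNorm (Z u) := hcost
    have hfinal : W1norm X - traceNorm X ≤ W1norm (ptraceSite v X) := by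
      apply le_csInf hSne
      intro b hb
      linarith [key b hb]
    linarith
end QW1

namespace QW1
open Matrix Complex

section Submatrix
variable {m m' : Type*} [Fintype m] [DecidableEq m] [Fintype m'] [DecidableEq m']

lemma opc_submatrix {M : Matrix m m ℂ} (hM : opc M) (σ : m' ≃ m) :
    opc (M.submatrix σ σ) := by
  intro x
  have hmv : M.submatrix σ σ *ᵥ x = (M *ᵥ (x ∘ σ.symm)) ∘ σ :=
    Matrix.submatrix_mulVec_equiv M x σ σ
  apply norm_ev_le
  calc ∑ i, ‖(M.submatrix σ σ *ᵥ x) i‖ ^ 2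
      = ∑ i, ‖(M *ᵥ (x ∘ σ.symm)) (σ i)‖ ^ 2 := by rw [hmv]; rfl
    _ = ∑ j, ‖(M *ᵥ (x ∘ σ.symm)) j‖ ^ 2 :=
        Equiv.sum_comp σ (fun j => ‖(M *ᵥ (x ∘ σ.symm)) j‖ ^ 2)
    _ ≤ ∑ j, ‖(x ∘ σ.symm) j‖ ^ 2 := sq_norm_le_of_opc hM _
    _ = ∑ i, ‖x i‖ ^ 2 := Equiv.sum_comp σ.symm (fun i => ‖x i‖ ^ 2)

lemma trace_submatrix_mul (σ : m' ≃ m) (M : Matrix m m ℂ) (B : Matrix m' m' ℂ) :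
    Matrix.trace (M.submatrix σ σ * B) = Matrix.trace (M * B.submatrix σ.symm σ.symm) := by
  rw [trace_expand, trace_expand]
  rw [← Equiv.sum_comp σ.symm
    (fun s => ∑ t, M.submatrix σ σ s t * B t s)]
  apply Finset.sum_congr rfl; intro s _
  rw [← Equiv.sum_comp σ.symm
    (fun t => M.submatrix σ σ (σ.symm s) t * B t (σ.symm s))]
  apply Finset.sum_congr rfl; intro t _
  rw [Matrix.submatrix_apply, Matrix.submatrix_apply, Equiv.apply_symm_apply,
    Equiv.apply_symm_apply]

lemma traceNorm_submatrix_le (σ : m' ≃ m) (M : Matrix m m ℂ) :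
    traceNorm (M.submatrix σ σ) ≤ traceNorm M := by
  obtain ⟨B, hB, htr⟩ := exists_dual (M.submatrix σ σ)
  have h1 : traceNorm (M.submatrix σ σ)
      = (Matrix.trace (M * B.submatrix σ.symm σ.symm)).re := by
    rw [← trace_submatrix_mul, htr, Complex.ofReal_re]
  rw [h1]
  exact re_trace_mul_le M (opc_submatrix hB σ.symm)

lemma submatrix_submatrix_self (σ : m' ≃ m) (M : Matrix m m ℂ) :
    (M.submatrix σ σ).submatrix σ.symm σ.symm = M := by
  ext i j
  simp [Matrix.submatrix_apply]

lemma traceNorm_submatrix (σ : m' ≃ m) (M : Matrix m m ℂ) :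
    traceNorm (M.submatrix σ σ) = traceNorm M := by
  refine le_antisymm (traceNorm_submatrix_le σ M) ?_
  have h := traceNorm_submatrix_le σ.symm (M.submatrix σ σ)
  rwa [submatrix_submatrix_self] at h

end Submatrix

variable {d : ℕ}

def ceq {V₁ V₂ : Type*} (g : V₁ ≃ V₂) : (V₂ → Fin d) ≃ (V₁ → Fin d) :=
  (Equiv.arrowCongr g (Equiv.refl (Fin d))).symm

lemma ceq_apply {V₁ V₂ : Type*} (g : V₁ ≃ V₂) (s : V₂ → Fin d) :
    (ceq g) s = s ∘ g := rfl

section Reindex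
variable {V₁ V₂ : Type*} [Fintype V₁] [DecidableEq V₁] [Fintype V₂] [DecidableEq V₂]

def siteEquiv (g : V₁ ≃ V₂) (w₂ : V₂) : {u : V₁ // u ≠ g.symm w₂} ≃ {w : V₂ // w ≠ w₂} where
  toFun u := ⟨g u.1, fun h => u.2 ((Equiv.eq_symm_apply g).mpr h)⟩
  invFun w := ⟨g.symm w.1, fun h => w.2 (g.symm.injective h)⟩
  left_inv u := Subtype.ext (g.symm_apply_apply u.1)
  right_inv w := Subtype.ext (g.apply_symm_apply w.1)

lemma insertAt_comp (g : V₁ ≃ V₂) (w₂ : V₂) (k : Fin d)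
    (s : {w : V₂ // w ≠ w₂} → Fin d) :
    (ceq g) (insertAt w₂ k s) = insertAt (g.symm w₂) k ((ceq (siteEquiv g w₂)) s) := by
  funext u
  rw [ceq_apply, ceq_apply]
  show insertAt w₂ k s (g u) = insertAt (g.symm w₂) k (s ∘ (siteEquiv g w₂)) u
  by_cases h : u = g.symm w₂
  · subst h
    rw [Equiv.apply_symm_apply, insertAt_self, insertAt_self]
  · have h2 : g u ≠ w₂ := fun hh => h ((Equiv.eq_symm_apply g).mpr hh)
    rw [insertAt_ne _ _ _ h2, insertAt_ne _ _ _ h]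
    rfl

lemma ptraceSite_submatrix (g : V₁ ≃ V₂) (w₂ : V₂)
    (M : Matrix (V₁ → Fin d) (V₁ → Fin d) ℂ) :
    ptraceSite w₂ (M.submatrix (ceq g) (ceq g))
      = (ptraceSite (g.symm w₂) M).submatrix
          (ceq (siteEquiv g w₂)) (ceq (siteEquiv g w₂)) := by
  ext s t
  rw [Matrix.submatrix_apply, ptraceSite_apply, ptraceSite_apply]
  apply Finset.sum_congr rfl; intro k _
  rw [Matrix.submatrix_apply, insertAt_comp, insertAt_comp]

def W1set {V : Type*} [Fintype V] [DecidableEq V]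
    (X : Matrix (V → Fin d) (V → Fin d) ℂ) : Set ℝ :=
  { r : ℝ | ∃ Y : V → Matrix (V → Fin d) (V → Fin d) ℂ,
    X = ∑ v, Y v ∧ (∀ v, ptraceSite v (Y v) = 0) ∧
      r = (1 / 2) * ∑ v, traceNorm (Y v) }

lemma W1norm_eq {V : Type*} [Fintype V] [DecidableEq V]
    (X : Matrix (V → Fin d) (V → Fin d) ℂ) : W1norm X = sInf (W1set X) := rfl

lemma W1mem_map (g : V₁ ≃ V₂) (X : Matrix (V₁ → Fin d) (V₁ → Fin d) ℂ) {r : ℝ}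
    (hr : r ∈ W1set X) : r ∈ W1set (X.submatrix (ceq g) (ceq g)) := by
  obtain ⟨Y, hsum, hpt, rfl⟩ := hr
  refine ⟨fun w₂ => (Y (g.symm w₂)).submatrix (ceq g) (ceq g), ?_, ?_, ?_⟩
  · ext s t
    rw [Matrix.submatrix_apply, hsum, Matrix.sum_apply, Matrix.sum_apply]
    rw [← Equiv.sum_comp g.symm (fun w₁ => Y w₁ ((ceq g) s) ((ceq g) t))]
    apply Finset.sum_congr rfl; intro w₂ _
    rw [Matrix.submatrix_apply]
  · intro w₂
    rw [ptraceSite_submatrix, hpt (g.symm w₂)]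
    ext s t
    simp [Matrix.submatrix_apply]
  · congr 1
    rw [← Equiv.sum_comp g.symm (fun w₁ => traceNorm (Y w₁))]
    apply Finset.sum_congr rfl; intro w₂ _
    rw [traceNorm_submatrix]

lemma W1norm_submatrix_le (g : V₁ ≃ V₂) (X : Matrix (V₁ → Fin d) (V₁ → Fin d) ℂ) :
    W1norm (X.submatrix (ceq g) (ceq g)) ≤ W1norm X := by
  by_cases hS : (W1set X).Nonempty
  · rw [W1norm_eq, W1norm_eq]
    exact csInf_le_csInf ⟨0, fun r hr => W1mem_nonneg hr⟩ hS
      (fun r hr => W1mem_map g X hr)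
  · have hS2 : ¬ (W1set (X.submatrix (ceq g) (ceq g))).Nonempty := by
      rintro ⟨r, hr⟩
      have := W1mem_map g.symm _ hr
      rw [show ((X.submatrix (ceq g) (ceq g)).submatrix (ceq g.symm) (ceq g.symm)) = X by
        ext i j
        rw [Matrix.submatrix_apply, Matrix.submatrix_apply, ceq_apply, ceq_apply,
          ceq_apply, ceq_apply]
        congr 1 <;> (funext u; simp)] at this
      exact hS ⟨r, this⟩
    rw [Set.not_nonempty_iff_eq_empty] at hS hS2
    rw [W1norm_eq, W1norm_eq, hS, hS2]

lemma W1norm_submatrix (g : V₁ ≃ V₂) (X : Matrix (V₁ → Fin d) (V₁ → Fin d) ℂ) :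
    W1norm (X.submatrix (ceq g) (ceq g)) = W1norm X := by
  refine le_antisymm (W1norm_submatrix_le g X) ?_
  have h := W1norm_submatrix_le g.symm (X.submatrix (ceq g) (ceq g))
  rwa [show ((X.submatrix (ceq g) (ceq g)).submatrix (ceq g.symm) (ceq g.symm)) = X by
    ext i j
    rw [Matrix.submatrix_apply, Matrix.submatrix_apply, ceq_apply, ceq_apply,
      ceq_apply, ceq_apply]
    congr 1 <;> (funext u; simp)] at h

end Reindex

section Main
variable {V : Type*} [Fintype V] [DecidableEq V]

def emptyEquiv : V ≃ {w : V // w ∉ (∅ : Finset V)} where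
  toFun w := ⟨w, by simp⟩
  invFun u := u.1
  left_inv _ := rfl
  right_inv u := Subtype.ext rfl

lemma ptraceSet_empty (X : Matrix (V → Fin d) (V → Fin d) ℂ) :
    ptraceSet ∅ X = X.submatrix (ceq (emptyEquiv (V := V))) (ceq (emptyEquiv (V := V))) := by
  ext s t
  haveI : IsEmpty {w : V // w ∈ (∅ : Finset V)} :=
    ⟨fun u => absurd u.2 (Finset.notMem_empty u.1)⟩
  show ∑ f : {w : V // w ∈ (∅ : Finset V)} → Fin d,
      X (insertSet ∅ f s) (insertSet ∅ f t) = _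
  rw [Fintype.sum_subsingleton _ (fun u => isEmptyElim u)]
  rw [Matrix.submatrix_apply]
  congr 1 <;> (funext w; simp [insertSet, ceq_apply, emptyEquiv])

def notInsertEquiv (v : V) (A : Finset V) (hv : v ∉ A) :
    {w : V // w ∉ insert v A} ≃ {u : {w : V // w ∉ A} // u ≠ (⟨v, hv⟩ : {w : V // w ∉ A})}
    where
  toFun w := ⟨⟨w.1, fun h => w.2 (Finset.mem_insert_of_mem h)⟩,
    fun h => w.2 (by
      have h1 : w.1 = v := congrArg Subtype.val h
      rw [h1]; exact Finset.mem_insert_self v A)⟩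
  invFun u := ⟨u.1.1, by
    intro h
    rcases Finset.mem_insert.mp h with h1 | h2
    · exact u.2 (Subtype.ext h1)
    · exact u.1.2 h2⟩
  left_inv w := Subtype.ext rfl
  right_inv u := Subtype.ext (Subtype.ext rfl)

def insCfgFun (v : V) (A : Finset V) :
    Fin d × ({w : V // w ∈ A} → Fin d) → ({w : V // w ∈ insert v A} → Fin d) :=
  fun p w' => if h : w'.1 = v then p.1
    else p.2 ⟨w'.1, (Finset.mem_insert.mp w'.2).resolve_left h⟩

lemma insCfgFun_bijective (v : V) (A : Finset V) (hv : v ∉ A) :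
    Function.Bijective (insCfgFun (d := d) v A) := by
  constructor
  · intro p q hpq
    have h1 : p.1 = q.1 := by
      have := congrFun hpq ⟨v, Finset.mem_insert_self v A⟩
      simpa [insCfgFun] using this
    have h2 : p.2 = q.2 := by
      funext u
      have hne : u.1 ≠ v := ne_of_mem_of_not_mem u.2 hv
      have := congrFun hpq ⟨u.1, Finset.mem_insert_of_mem u.2⟩
      simpa [insCfgFun, hne] using this
    exact Prod.ext h1 h2
  · intro g'
    refine ⟨⟨g' ⟨v, Finset.mem_insert_self v A⟩,
      fun u => g' ⟨u.1, Finset.mem_insert_of_mem u.2⟩⟩, ?_⟩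
    funext w'
    by_cases h1 : w'.1 = v
    · simp only [insCfgFun, dif_pos h1]
      congr 1
      exact Subtype.ext h1.symm
    · simp only [insCfgFun, dif_neg h1]

lemma insertSet_insertAt (v : V) (A : Finset V) (hv : v ∉ A) (k : Fin d)
    (f : {w : V // w ∈ A} → Fin d)
    (s : {u : {w : V // w ∉ A} // u ≠ (⟨v, hv⟩ : {w : V // w ∉ A})} → Fin d) :
    insertSet A f (insertAt (⟨v, hv⟩ : {w : V // w ∉ A}) k s)
      = insertSet (insert v A) (insCfgFun v A (k, f))
          ((ceq (notInsertEquiv v A hv)) s) := by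
  funext w
  by_cases h1 : w ∈ A
  · have h2 : w ∈ insert v A := Finset.mem_insert_of_mem h1
    have h3 : w ≠ v := ne_of_mem_of_not_mem h1 hv
    simp [insertSet, h1, h2, insCfgFun, h3]
  · by_cases h4 : w = v
    · subst h4
      have h5 : w ∈ insert w A := Finset.mem_insert_self w A
      simp [insertSet, h1, h5, insCfgFun, insertAt_self]
    · have h6 : w ∉ insert v A := by simp [Finset.mem_insert, h4, h1]
      have h7 : (⟨w, h1⟩ : {w : V // w ∉ A}) ≠ ⟨v, hv⟩ :=
        fun hh => h4 (congrArg Subtype.val hh)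
      simp only [insertSet, dif_neg h1, dif_neg h6]
      rw [insertAt_ne _ _ _ h7]
      rfl

lemma ptraceSite_ptraceSet (A : Finset V) (v : V) (hv : v ∉ A)
    (X : Matrix (V → Fin d) (V → Fin d) ℂ) :
    ptraceSite (⟨v, hv⟩ : {w : V // w ∉ A}) (ptraceSet A X)
      = (ptraceSet (insert v A) X).submatrix
          (ceq (notInsertEquiv v A hv)) (ceq (notInsertEquiv v A hv)) := by
  ext s t
  rw [ptraceSite_apply, Matrix.submatrix_apply]
  set G : ({w : V // w ∈ insert v A} → Fin d) → ℂ := fun g' =>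
    X (insertSet (insert v A) g' ((ceq (notInsertEquiv v A hv)) s))
      (insertSet (insert v A) g' ((ceq (notInsertEquiv v A hv)) t)) with hG
  have hL : ∀ k : Fin d,
      ptraceSet A X (insertAt (⟨v, hv⟩ : {w : V // w ∉ A}) k s)
        (insertAt (⟨v, hv⟩ : {w : V // w ∉ A}) k t)
      = ∑ f : {w : V // w ∈ A} → Fin d, G (insCfgFun v A (k, f)) := by
    intro k
    show ∑ f, X (insertSet A f (insertAt _ k s)) (insertSet A f (insertAt _ k t)) = _
    apply Finset.sum_congr rfl; intro f _
    rw [insertSet_insertAt v A hv k f s, insertSet_insertAt v A hv k f t, hG]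
  calc ∑ k : Fin d, ptraceSet A X (insertAt (⟨v, hv⟩ : {w : V // w ∉ A}) k s)
        (insertAt (⟨v, hv⟩ : {w : V // w ∉ A}) k t)
      = ∑ k : Fin d, ∑ f : {w : V // w ∈ A} → Fin d, G (insCfgFun v A (k, f)) :=
        Finset.sum_congr rfl (fun k _ => hL k)
    _ = ∑ p : Fin d × ({w : V // w ∈ A} → Fin d), G (insCfgFun v A p) :=
        (Fintype.sum_prod_type (f := fun p => G (insCfgFun v A p))).symm
    _ = ∑ g' : {w : V // w ∈ insert v A} → Fin d, G g' :=
        Function.Bijective.sum_comp (insCfgFun_bijective v A hv) G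
    _ = ptraceSet (insert v A) X ((ceq (notInsertEquiv v A hv)) s)
        ((ceq (notInsertEquiv v A hv)) t) := rfl

end Main
end QW1

/-- For any traceless self-adjoint `X` on an `n`-qudit system and any subset `A` of the
sites, `‖X‖_{W₁} ≤ |A|·‖X‖₁ + ‖Tr_A X‖_{W₁}`. -/
theorem W1norm_le_card_traceNorm_add {V : Type*} [Fintype V] [DecidableEq V] {d : ℕ}
    (X : Matrix (V → Fin d) (V → Fin d) ℂ)
    (hX : X.IsHermitian) (htr : Matrix.trace X = 0) (A : Finset V) :
    W1norm X ≤ (A.card : ℝ) * traceNorm X + W1norm (ptraceSet A X) := by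
  classical
  induction A using Finset.induction_on with
  | empty =>
      have h1 : W1norm (ptraceSet ∅ X) = W1norm X := by
        rw [QW1.ptraceSet_empty X]
        exact QW1.W1norm_submatrix (QW1.emptyEquiv (V := V)) X
      rw [h1, Finset.card_empty]
      norm_num
  | @insert v A hv IH =>
      have h2 : Matrix.trace (ptraceSet A X) = 0 := by
        rw [QW1.trace_ptraceSet, htr]
      have hstep := QW1.W1norm_le_traceNorm_add_site
        (⟨v, hv⟩ : {w : V // w ∉ A}) (ptraceSet A X) h2
      have h3 : traceNorm (ptraceSet A X) ≤ traceNorm X := QW1.traceNorm_ptraceSet_le A X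
      have h4 : W1norm (ptraceSite (⟨v, hv⟩ : {w : V // w ∉ A}) (ptraceSet A X))
          = W1norm (ptraceSet (insert v A) X) := by
        rw [QW1.ptraceSite_ptraceSet A v hv X]
        exact QW1.W1norm_submatrix (QW1.notInsertEquiv v A hv) _
      have hcard : ((insert v A).card : ℝ) = (A.card : ℝ) + 1 := by
        rw [Finset.card_insert_of_notMem hv]
        push_cast
        ring
      rw [hcard]
      rw [h4] at hstep
      calc W1norm X ≤ (A.card : ℝ) * traceNorm X + W1norm (ptraceSet A X) := IH
        _ ≤ (A.card : ℝ) * traceNorm X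
            + (traceNorm (ptraceSet A X) + W1norm (ptraceSet (insert v A) X)) := by
              linarith
        _ ≤ ((A.card : ℝ) + 1) * traceNorm X + W1norm (ptraceSet (insert v A) X) := by
              nlinarith
end
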